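/- arXiv:1512.07136 — 5 statements merged into one kernel-verified Lean document; each statement's English description precedes it below -/
import Mathlib

section
/- Let G = (V, E) be a disconnected graph on the ordered variable set V, with V = U ⊔ W, E = EU ⊔ EW, where EU, EW are the edges joining vertices within U and within W respectively, GU = (U, EU), GW = (W, EW). Let f = Σ_i u_i w_i be a polynomial with deg f ≤ |E|, where each u_i depends only on the variables in U, each w_i only on the variables in W, and deg u_i + deg w_i ≤ deg f. Then DS_G(f) = binom(|V|, |U|) · Σ_i DS_{GU}(u_i) · DS_{GW}(w_i), where any summand with deg u_i < |EU| or deg w_i < |EW| is zero. -/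
open MvPolynomial

/-- Partial divided symmetrization of a polynomial `f` over the graph on the variables
`x_0 < x_1 < ... < x_{m-1}` whose (ordered) edges form the finset `E`:
`DS_G(f) = Σ_π (f ∘ π) / Π_{(x,y) ∈ E} (x_π − y_π)`,
the sum being over all `m!` permutations of the variables. -/
noncomputable def DS {K : Type*} [Field K] {m : ℕ} (E : Finset (Fin m × Fin m))
    (f : MvPolynomial (Fin m) K) : FractionRing (MvPolynomial (Fin m) K) :=
  ∑ π : Equiv.Perm (Fin m),
    algebraMap (MvPolynomial (Fin m) K) (FractionRing (MvPolynomial (Fin m) K))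
        (rename (⇑π) f) /
      algebraMap (MvPolynomial (Fin m) K) (FractionRing (MvPolynomial (Fin m) K))
        (rename (⇑π) (∏ e ∈ E, (X e.1 - X e.2)))
/-- Divided symmetrization of `f` over the subgraph with edge finset `E` on the subset
`U` of the variables: the symmetrization sum is taken only over the permutations of the
variables in `U` (i.e. permutations fixing every variable outside `U`). -/
noncomputable def DSOn {K : Type*} [Field K] {m : ℕ} (U : Finset (Fin m))
    (E : Finset (Fin m × Fin m)) (f : MvPolynomial (Fin m) K) :
    FractionRing (MvPolynomial (Fin m) K) :=
  ∑ π ∈ Finset.univ.filter fun π : Equiv.Perm (Fin m) => ∀ x ∉ U, π x = x,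
    algebraMap (MvPolynomial (Fin m) K) (FractionRing (MvPolynomial (Fin m) K))
        (rename (⇑π) f) /
      algebraMap (MvPolynomial (Fin m) K) (FractionRing (MvPolynomial (Fin m) K))
        (rename (⇑π) (∏ e ∈ E, (X e.1 - X e.2)))



section Aux
variable {K : Type*} [Field K] {m : ℕ}

private lemma aux_X_sub_X_ne_zero {a b : Fin m} (h : a ≠ b) :
    (X a - X b : MvPolynomial (Fin m) K) ≠ 0 :=
  sub_ne_zero.mpr fun he => h (MvPolynomial.X_injective he)

private lemma aux_dvd_sub_aeval (d : MvPolynomial (Fin m) K) (v : Fin m → MvPolynomial (Fin m) K)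
    (hv : ∀ i, d ∣ (X i - v i)) (p : MvPolynomial (Fin m) K) :
    d ∣ p - aeval v p := by
  induction p using MvPolynomial.induction_on with
  | C c => simp
  | add p q hp hq =>
      have : p + q - aeval v (p + q) = (p - aeval v p) + (q - aeval v q) := by
        rw [map_add]; ring
      rw [this]; exact dvd_add hp hq
  | mul_X p i hp =>
      have : p * X i - aeval v (p * X i)
          = (p - aeval v p) * X i + aeval v p * (X i - v i) := by
        rw [map_mul, aeval_X]; ring
      rw [this]; exact dvd_add (hp.mul_right _) ((hv i).mul_left _)

private lemma aux_prime_X_sub_X {a b : Fin m} (hab : a ≠ b) :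
    Prime (X a - X b : MvPolynomial (Fin m) K) := by
  set d : MvPolynomial (Fin m) K := X a - X b with hd
  set φ : MvPolynomial (Fin m) K →ₐ[K] MvPolynomial (Fin m) K :=
    aeval (fun i => if i = a then X b else X i) with hφ
  have hva : ∀ i : Fin m, d ∣ (X i - (if i = a then X b else X i)) := by
    intro i
    by_cases hia : i = a
    · subst hia; simp [hd]
    · simp [hia]
  have hker : ∀ p : MvPolynomial (Fin m) K, φ p = 0 ↔ d ∣ p := by
    intro p
    constructor
    · intro h0
      have h1 := aux_dvd_sub_aeval d _ hva p
      rw [show aeval (fun i => if i = a then X b else X i) p = φ p from rfl, h0, sub_zero] at h1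
      exact h1
    · rintro ⟨t, rfl⟩
      rw [map_mul]
      have : φ d = 0 := by simp [hφ, hd, hab]
      rw [this, zero_mul]
  constructor
  · exact aux_X_sub_X_ne_zero hab
  constructor
  · intro hu
    have h0 : φ d = 0 := (hker d).mpr dvd_rfl
    have := hu.map φ
    rw [h0] at this
    exact not_isUnit_zero this
  · intro x y hxy
    have h0 : φ (x * y) = 0 := (hker _).mpr hxy
    rw [map_mul] at h0
    rcases mul_eq_zero.mp h0 with h | h
    · exact Or.inl ((hker x).mp h)
    · exact Or.inr ((hker y).mp h)

private lemma aux_not_dvd {a b c d t : Fin m} (hab : a ≠ b) (ht : t = a ∨ t = b)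
    (htc : t ≠ c) (htd : t ≠ d) :
    ¬ ((X c - X d : MvPolynomial (Fin m) K) ∣ (X a - X b)) := by
  rintro ⟨e, he⟩
  have := congrArg (eval (fun x : Fin m => if x = t then (1 : K) else 0)) he
  rw [map_mul] at this
  simp only [map_sub, eval_X] at this
  rcases ht with rfl | rfl
  · rw [if_pos rfl, if_neg (by rintro rfl; exact hab rfl), if_neg (Ne.symm htc),
      if_neg (Ne.symm htd)] at this
    simpa using this
  · rw [if_neg (by rintro rfl; exact hab rfl), if_pos rfl, if_neg (Ne.symm htc),
      if_neg (Ne.symm htd)] at this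
    simpa using this

private lemma aux_prod_primes_dvd {R : Type*} [CommRing R] [IsDomain R] {ι : Type*} [DecidableEq ι]
    (t : Finset ι) (g : ι → R)
    (hp : ∀ i ∈ t, Prime (g i))
    (hnd : ∀ i ∈ t, ∀ j ∈ t, i ≠ j → ¬ g i ∣ g j) :
    ∀ n : R, (∀ i ∈ t, g i ∣ n) → ∏ i ∈ t, g i ∣ n := by
  induction t using Finset.induction_on with
  | empty => intro n _; simp
  | insert a t' ha ih =>
      intro n hd
      obtain ⟨n', rfl⟩ := hd a (Finset.mem_insert_self a t')
      rw [Finset.prod_insert ha]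
      refine mul_dvd_mul_left _ ?_
      refine ih (fun i hi => hp i (Finset.mem_insert_of_mem hi))
        (fun i hi j hj hij => hnd i (Finset.mem_insert_of_mem hi) j
          (Finset.mem_insert_of_mem hj) hij) n' ?_
      intro i hi
      have hprime := hp i (Finset.mem_insert_of_mem hi)
      have hdvd : g i ∣ g a * n' := hd i (Finset.mem_insert_of_mem hi)
      rcases hprime.dvd_or_dvd hdvd with h | h
      · exact absurd h (hnd i (Finset.mem_insert_of_mem hi) a (Finset.mem_insert_self a t')
          (by rintro rfl; exact ha hi))
      · exact h

end Aux


section Aux2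
variable {K : Type*} [Field K] {m : ℕ}

private lemma aux_prod_pairs {M : Type*} [CommMonoid M] (g : Fin m × Fin m → M) :
    ∏ p ∈ Finset.univ.filter (fun p : Fin m × Fin m => p.1 < p.2), g p
      = ∏ i : Fin m, ∏ j ∈ Finset.Ioi i, g (i, j) := by
  rw [Finset.prod_filter]
  rw [← Finset.univ_product_univ, Finset.prod_product]
  refine Finset.prod_congr rfl fun i _ => ?_
  rw [← Finset.prod_filter]
  refine Finset.prod_congr ?_ fun j _ => rfl
  ext j
  simp [Finset.mem_Ioi]

private lemma aux_rename_vandermonde (π : Equiv.Perm (Fin m)) :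
    rename ⇑π (∏ p ∈ Finset.univ.filter (fun p : Fin m × Fin m => p.1 < p.2),
        (X p.2 - X p.1 : MvPolynomial (Fin m) K))
      = ((Equiv.Perm.sign π : ℤ) : MvPolynomial (Fin m) K) *
        ∏ p ∈ Finset.univ.filter (fun p : Fin m × Fin m => p.1 < p.2), (X p.2 - X p.1) := by
  rw [map_prod]
  simp only [map_sub, rename_X]
  have h1 : ∏ p ∈ Finset.univ.filter (fun p : Fin m × Fin m => p.1 < p.2),
      ((X (π p.2) - X (π p.1)) : MvPolynomial (Fin m) K)
      = (Matrix.vandermonde (fun i => (X (π i) : MvPolynomial (Fin m) K))).det := by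
    rw [Matrix.det_vandermonde, aux_prod_pairs (fun p => (X (π p.2) - X (π p.1)))]
  have h2 : Matrix.vandermonde (fun i => (X (π i) : MvPolynomial (Fin m) K))
      = (Matrix.vandermonde (fun i => (X i : MvPolynomial (Fin m) K))).submatrix ⇑π id := by
    ext i j
    simp [Matrix.vandermonde_apply, Matrix.submatrix_apply]
  rw [h1, h2, Matrix.det_permute, Matrix.det_vandermonde,
    ← aux_prod_pairs (M := MvPolynomial (Fin m) K) (fun p => X p.2 - X p.1)]

private lemma aux_rename_fix {g : MvPolynomial (Fin m) K} {π : Fin m → Fin m}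
    (h : ∀ x ∈ g.vars, π x = x) : rename π g = g := by
  have hg : g ∈ supported K (↑g.vars : Set (Fin m)) := mem_supported.mpr subset_rfl
  rw [supported_eq_range_rename, AlgHom.mem_range] at hg
  obtain ⟨g', hg'⟩ := hg
  have hco : π ∘ ((↑) : (↑g.vars : Set (Fin m)) → Fin m)
      = ((↑) : (↑g.vars : Set (Fin m)) → Fin m) := by
    funext x
    exact h x.1 (by exact_mod_cast x.2)
  conv_lhs => rw [← hg']
  rw [rename_rename, hco, hg']

private lemma aux_top_component_ne_zero {q : MvPolynomial (Fin m) K} (hq : q ≠ 0) :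
    homogeneousComponent q.totalDegree q ≠ 0 := by
  have hsupp : q.support.Nonempty := support_nonempty.mpr hq
  obtain ⟨d0, hd0, hsup⟩ := Finset.exists_mem_eq_sup q.support hsupp
    (fun s : Fin m →₀ ℕ => s.sum fun _ e => e)
  intro h0
  have := congrArg (coeff d0) h0
  rw [coeff_homogeneousComponent] at this
  have hdeg : d0.degree = q.totalDegree := by
    rw [MvPolynomial.totalDegree, hsup]
    rfl
  rw [if_pos hdeg] at this
  simp only [coeff_zero] at this
  exact (mem_support_iff.mp hd0) this

private lemma aux_deg_homog_mul {W q : MvPolynomial (Fin m) K} {d : ℕ}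
    (hW : W.IsHomogeneous d) (hW0 : W ≠ 0) (hq : q ≠ 0) :
    d + q.totalDegree ≤ (W * q).totalDegree := by
  set k := q.totalDegree with hk
  have hqk : homogeneousComponent k q ≠ 0 := aux_top_component_ne_zero hq
  have hcomp : homogeneousComponent (d + k) (W * q) = W * homogeneousComponent k q := by
    conv_lhs => rw [← sum_homogeneousComponent q, Finset.mul_sum, map_sum]
    rw [Finset.sum_eq_single_of_mem k (Finset.self_mem_range_succ k)]
    · have hhom : (W * homogeneousComponent k q).IsHomogeneous (d + k) :=
        hW.mul (homogeneousComponent_isHomogeneous k q)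
      rw [homogeneousComponent_of_mem ((mem_homogeneousSubmodule _ _).mpr hhom)]
      rw [if_pos rfl]
    · intro i _ hik
      have hhom : (W * homogeneousComponent i q).IsHomogeneous (d + i) :=
        hW.mul (homogeneousComponent_isHomogeneous i q)
      rw [homogeneousComponent_of_mem ((mem_homogeneousSubmodule _ _).mpr hhom)]
      rw [if_neg (by omega)]
  have hle : ¬ (W * q).totalDegree < d + k := by
    intro hlt
    have := homogeneousComponent_eq_zero _ (W * q) hlt
    rw [hcomp] at this
    rcases mul_eq_zero.mp this with h | h
    · exact hW0 h
    · exact hqk h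
  omega

end Aux2

section Key
variable {K : Type*} [Field K] {m : ℕ}

private lemma aux_key (U : Finset (Fin m)) (E : Finset (Fin m × Fin m))
    (hE : ∀ e ∈ E, e.1 < e.2 ∧ e.1 ∈ U ∧ e.2 ∈ U)
    (g : MvPolynomial (Fin m) K) (hdeg : g.totalDegree ≤ E.card) :
    ∃ c : K, DSOn U E g
        = algebraMap (MvPolynomial (Fin m) K) (FractionRing (MvPolynomial (Fin m) K)) (C c) ∧
      (g.totalDegree < E.card → c = 0) := by
  classical
  set ψ := algebraMap (MvPolynomial (Fin m) K) (FractionRing (MvPolynomial (Fin m) K)) with hψdef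
  have hψinj : Function.Injective ψ := IsFractionRing.injective _ _
  set P : Finset (Fin m × Fin m) := Finset.univ.filter (fun p : Fin m × Fin m => p.1 < p.2)
    with hPdef
  set Fc : Fin m × Fin m → MvPolynomial (Fin m) K := fun p => X p.2 - X p.1 with hFcdef
  set W : MvPolynomial (Fin m) K := ∏ p ∈ P, Fc p with hWdef
  set Q : MvPolynomial (Fin m) K := ∏ p ∈ P \ E, Fc p with hQdef
  set D : MvPolynomial (Fin m) K := ∏ e ∈ E, (X e.1 - X e.2) with hDdef
  set S : Finset (Equiv.Perm (Fin m)) :=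
    Finset.univ.filter (fun π : Equiv.Perm (Fin m) => ∀ x ∉ U, π x = x) with hSdef
  set sg : Equiv.Perm (Fin m) → MvPolynomial (Fin m) K :=
    fun π => ((Equiv.Perm.sign π : ℤ) : MvPolynomial (Fin m) K) with hsgdef
  set N : MvPolynomial (Fin m) K := ∑ π ∈ S, sg π * rename ⇑π (g * Q) with hNdef
  have hmemP : ∀ p : Fin m × Fin m, p ∈ P ↔ p.1 < p.2 := by
    intro p; simp [hPdef]
  have hEP : E ⊆ P := fun e he => (hmemP e).mpr (hE e he).1
  have hFne : ∀ p : Fin m × Fin m, p.1 < p.2 → Fc p ≠ 0 :=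
    fun p hp => aux_X_sub_X_ne_zero hp.ne'
  have hW0 : W ≠ 0 := Finset.prod_ne_zero_iff.mpr (fun p hp => hFne p ((hmemP p).mp hp))
  have hD0 : D ≠ 0 := Finset.prod_ne_zero_iff.mpr (fun e he => by
    have h1 := (hE e he).1
    have h2 : (X e.1 - X e.2 : MvPolynomial (Fin m) K) = -(Fc e) := by rw [hFcdef]; ring
    rw [h2, neg_ne_zero]; exact hFne e h1)
  have hψW0 : ψ W ≠ 0 := fun h => hW0 (hψinj (by rw [h, map_zero]))
  have hsg1 : ∀ π : Equiv.Perm (Fin m), sg π * sg π = 1 := by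
    intro π
    rw [hsgdef]
    rw [← Int.cast_mul, ← Units.val_mul, Int.units_mul_self]
    norm_num
  have hrW : ∀ π : Equiv.Perm (Fin m), rename ⇑π W = sg π * W := fun π =>
    aux_rename_vandermonde π
  have hDQ : D * Q = (-1) ^ E.card * W := by
    have h1 : D = (-1) ^ E.card * ∏ e ∈ E, Fc e := by
      rw [hDdef]
      rw [Finset.prod_congr rfl (fun e (_ : e ∈ E) =>
        show (X e.1 - X e.2 : MvPolynomial (Fin m) K) = (-1) * Fc e by rw [hFcdef]; ring)]
      rw [Finset.prod_mul_distrib, Finset.prod_const]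
    rw [h1, mul_assoc, mul_comm (∏ e ∈ E, Fc e) Q, Finset.prod_sdiff hEP]
  -- Step A : sum rewriting
  have hstepA : DSOn U E g * ψ W
      = (-1 : FractionRing (MvPolynomial (Fin m) K)) ^ E.card * ψ N := by
    have hterm : ∀ π ∈ S,
        ψ (rename ⇑π g) / ψ (rename ⇑π D) * ψ W
          = (-1 : FractionRing (MvPolynomial (Fin m) K)) ^ E.card
              * ψ (sg π * rename ⇑π (g * Q)) := by
      intro π _
      have hrD0 : rename ⇑π D ≠ 0 := fun h => hD0 ((rename_injective _ π.injective)
        (by rw [h, map_zero]))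
      have hψrD0 : ψ (rename ⇑π D) ≠ 0 := fun h => hrD0 (hψinj (by rw [h, map_zero]))
      rw [div_mul_eq_mul_div, div_eq_iff hψrD0]
      have h2 : rename ⇑π (D * Q) = (-1) ^ E.card * (sg π * W) := by
        rw [hDQ, map_mul, map_pow, map_neg, map_one, hrW]
      have h3 : ((-1 : MvPolynomial (Fin m) K)) ^ E.card * (-1) ^ E.card = 1 := by
        rw [← mul_pow]; norm_num
      have h4 : W = (-1) ^ E.card * (sg π * (rename ⇑π D * rename ⇑π Q)) := by
        calc W = ((-1) ^ E.card * (-1) ^ E.card) * ((sg π * sg π) * W) := by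
              rw [h3, hsg1]; ring
          _ = (-1) ^ E.card * (sg π * ((-1) ^ E.card * (sg π * W))) := by ring
          _ = (-1) ^ E.card * (sg π * (rename ⇑π D * rename ⇑π Q)) := by
              rw [← h2, map_mul]
      have hpoly : rename ⇑π g * W
          = (-1) ^ E.card * (sg π * rename ⇑π (g * Q)) * rename ⇑π D := by
        calc rename ⇑π g * W
            = rename ⇑π g * ((-1) ^ E.card * (sg π * (rename ⇑π D * rename ⇑π Q))) := by
              rw [← h4]
          _ = (-1) ^ E.card * (sg π * rename ⇑π (g * Q)) * rename ⇑π D := by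
              rw [map_mul]; ring
      calc ψ (rename ⇑π g) * ψ W = ψ (rename ⇑π g * W) := by rw [map_mul]
        _ = ψ ((-1) ^ E.card * (sg π * rename ⇑π (g * Q)) * rename ⇑π D) := by rw [hpoly]
        _ = (-1 : FractionRing (MvPolynomial (Fin m) K)) ^ E.card
              * ψ (sg π * rename ⇑π (g * Q)) * ψ (rename ⇑π D) := by
            rw [map_mul, map_mul, map_pow, map_neg, map_one]
    have hDSOn : DSOn U E g = ∑ π ∈ S, ψ (rename ⇑π g) / ψ (rename ⇑π D) := rfl
    rw [hDSOn, Finset.sum_mul, Finset.sum_congr rfl hterm, ← Finset.mul_sum, hNdef, map_sum]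
  -- Step B : divisibility of N by each factor of W
  have hdvdN : ∀ p ∈ P, Fc p ∣ N := by
    intro p hp
    have hplt : p.1 < p.2 := (hmemP p).mp hp
    have hpne : p.1 ≠ p.2 := hplt.ne
    by_cases hUU : p.1 ∈ U ∧ p.2 ∈ U
    · -- pairing argument
      set τ := Equiv.swap p.1 p.2 with hτdef
      have hkey1 : ∀ k : MvPolynomial (Fin m) K, Fc p ∣ k - rename ⇑τ k := by
        intro k
        have hv : ∀ i : Fin m, Fc p ∣ (X i - X (τ i)) := by
          intro i
          rcases eq_or_ne i p.1 with h1 | h1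
          · rw [h1, hτdef, Equiv.swap_apply_left]
            have h5 : (X p.1 - X p.2 : MvPolynomial (Fin m) K) = -(Fc p) := by rw [hFcdef]; ring
            rw [h5]; exact dvd_neg.mpr dvd_rfl
          rcases eq_or_ne i p.2 with h2 | h2
          · rw [h2, hτdef, Equiv.swap_apply_right]
          · rw [hτdef, Equiv.swap_apply_of_ne_of_ne h1 h2, sub_self]; exact dvd_zero _
        rw [rename_eq_aeval]; exact aux_dvd_sub_aeval (Fc p) (fun i => X (τ i)) hv k
      have hτS : ∀ π, π ∈ S → τ * π ∈ S := by
        intro π hπ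
        rw [hSdef, Finset.mem_filter] at hπ ⊢
        refine ⟨Finset.mem_univ _, fun x hx => ?_⟩
        have h1 : π x = x := hπ.2 x hx
        have h2 : x ≠ p.1 := fun h => hx (h ▸ hUU.1)
        have h3 : x ≠ p.2 := fun h => hx (h ▸ hUU.2)
        simp only [Equiv.Perm.coe_mul, Function.comp_apply, h1]
        rw [hτdef, Equiv.swap_apply_of_ne_of_ne h2 h3]
      have hinv1 : ∀ π : Equiv.Perm (Fin m), (τ * π)⁻¹ p.1 = π⁻¹ p.2 := by
        intro π
        rw [mul_inv_rev, Equiv.Perm.mul_apply, hτdef, Equiv.swap_inv, Equiv.swap_apply_left]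
      have hinv2 : ∀ π : Equiv.Perm (Fin m), (τ * π)⁻¹ p.2 = π⁻¹ p.1 := by
        intro π
        rw [mul_inv_rev, Equiv.Perm.mul_apply, hτdef, Equiv.swap_inv, Equiv.swap_apply_right]
      have hinjinv : ∀ π : Equiv.Perm (Fin m), π⁻¹ p.1 ≠ π⁻¹ p.2 :=
        fun π h => hpne (by simpa using congrArg π h)
      have hττ : ∀ π : Equiv.Perm (Fin m), τ * (τ * π) = π := by
        intro π
        rw [← mul_assoc, hτdef, Equiv.swap_mul_self, one_mul]
      have hbij : ∑ π ∈ S.filter (fun π : Equiv.Perm (Fin m) => ¬ π⁻¹ p.1 < π⁻¹ p.2),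
            sg π * rename ⇑π (g * Q)
          = ∑ π ∈ S.filter (fun π : Equiv.Perm (Fin m) => π⁻¹ p.1 < π⁻¹ p.2),
            sg (τ * π) * rename ⇑(τ * π) (g * Q) := by
        refine Finset.sum_nbij' (fun π => τ * π) (fun π => τ * π) ?_ ?_ ?_ ?_ ?_
        · intro π hπ
          rw [Finset.mem_filter] at hπ ⊢
          refine ⟨hτS π hπ.1, ?_⟩
          rw [hinv1, hinv2]
          exact lt_of_le_of_ne (not_lt.mp hπ.2) (hinjinv π).symm
        · intro π hπ
          rw [Finset.mem_filter] at hπ ⊢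
          refine ⟨hτS π hπ.1, ?_⟩
          rw [hinv1, hinv2]
          exact not_lt.mpr hπ.2.le
        · intro π _; exact hττ π
        · intro π _; exact hττ π
        · intro π _; rw [hττ π]
      have hNsplit : N = ∑ π ∈ S.filter (fun π : Equiv.Perm (Fin m) => π⁻¹ p.1 < π⁻¹ p.2),
          (sg π * rename ⇑π (g * Q) + sg (τ * π) * rename ⇑(τ * π) (g * Q)) := by
        rw [hNdef, ← Finset.sum_filter_add_sum_filter_not S
          (fun π : Equiv.Perm (Fin m) => π⁻¹ p.1 < π⁻¹ p.2)
          (fun π => sg π * rename ⇑π (g * Q)), hbij, ← Finset.sum_add_distrib]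
      rw [hNsplit]
      refine Finset.dvd_sum (fun π hπ => ?_)
      have hsgτ : sg (τ * π) = - sg π := by
        rw [hsgdef]
        simp only [Equiv.Perm.sign_mul, hτdef, Equiv.Perm.sign_swap hpne]
        push_cast
        ring
      have hrr : rename ⇑(τ * π) (g * Q) = rename ⇑τ (rename ⇑π (g * Q)) := by
        rw [rename_rename]
        congr 1
      have hform : sg π * rename ⇑π (g * Q) + sg (τ * π) * rename ⇑(τ * π) (g * Q)
          = sg π * (rename ⇑π (g * Q) - rename ⇑τ (rename ⇑π (g * Q))) := by
        rw [hsgτ, hrr]; ring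
      rw [hform]
      exact (hkey1 (rename ⇑π (g * Q))).mul_left (sg π)
    · -- a pair not inside U : explicit factor in Q
      rw [not_and_or] at hUU
      rw [hNdef]
      refine Finset.dvd_sum (fun π hπ => ?_)
      rw [hSdef, Finset.mem_filter] at hπ
      have hπfix : ∀ x ∉ U, π x = x := hπ.2
      have hUin : ∀ z, z ∈ U → π z ∈ U := by
        intro z hz
        by_contra hzU
        have h1 : π (π z) = π z := hπfix _ hzU
        have h2 : π z = z := π.injective h1
        exact hzU (h2.symm ▸ hz)
      have hfix' : ∀ y, y ∉ U → π⁻¹ y = y := by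
        intro y hy
        by_cases hz : π⁻¹ y ∈ U
        · have h1 := hUin _ hz
          rw [Equiv.Perm.coe_inv, Equiv.apply_symm_apply] at h1
          exact absurd h1 hy
        · have h1 := hπfix _ hz
          rw [Equiv.Perm.coe_inv, Equiv.apply_symm_apply] at h1
          exact h1.symm
      have hane : π⁻¹ p.1 ≠ π⁻¹ p.2 := fun h => hpne (by simpa using congrArg π h)
      have houter : (π⁻¹ p.1 ∉ U) ∨ (π⁻¹ p.2 ∉ U) := by
        rcases hUU with h | h
        · left; rw [hfix' p.1 h]; exact h
        · right; rw [hfix' p.2 h]; exact h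
      have hrQ : rename ⇑π Q = ∏ q0 ∈ P \ E, (X (π q0.2) - X (π q0.1)) := by
        rw [hQdef, map_prod]
        exact Finset.prod_congr rfl (fun q0 _ => by rw [hFcdef, map_sub, rename_X, rename_X])
      have hdvdQ : Fc p ∣ rename ⇑π Q := by
        rcases lt_or_gt_of_ne hane with hab | hab
        · have hq0P : (π⁻¹ p.1, π⁻¹ p.2) ∈ P := (hmemP _).mpr hab
          have hq0E : (π⁻¹ p.1, π⁻¹ p.2) ∉ E := fun hmem => by
            rcases houter with h | h
            · exact h (hE _ hmem).2.1
            · exact h (hE _ hmem).2.2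
          have hfac := Finset.dvd_prod_of_mem
            (fun q0 : Fin m × Fin m => (X (π q0.2) - X (π q0.1) : MvPolynomial (Fin m) K))
            (Finset.mem_sdiff.mpr ⟨hq0P, hq0E⟩)
          rw [hrQ]
          simpa [Equiv.Perm.coe_inv, Equiv.apply_symm_apply, hFcdef] using hfac
        · have hq0P : (π⁻¹ p.2, π⁻¹ p.1) ∈ P := (hmemP _).mpr hab
          have hq0E : (π⁻¹ p.2, π⁻¹ p.1) ∉ E := fun hmem => by
            rcases houter with h | h
            · exact h (hE _ hmem).2.2
            · exact h (hE _ hmem).2.1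
          have hfac := Finset.dvd_prod_of_mem
            (fun q0 : Fin m × Fin m => (X (π q0.2) - X (π q0.1) : MvPolynomial (Fin m) K))
            (Finset.mem_sdiff.mpr ⟨hq0P, hq0E⟩)
          rw [hrQ]
          refine dvd_trans ?_ hfac
          simp only [Equiv.Perm.coe_inv, Equiv.apply_symm_apply]
          have h6 : (X p.1 - X p.2 : MvPolynomial (Fin m) K) = - Fc p := by
            rw [hFcdef]; ring
          rw [h6]
          exact dvd_neg.mpr dvd_rfl
      rw [map_mul]
      exact ((hdvdQ.mul_left (rename ⇑π g)).mul_left (sg π))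
  -- Step C : W divides N
  have hprime : ∀ p ∈ P, Prime (Fc p) := fun p hp => aux_prime_X_sub_X ((hmemP p).mp hp).ne'
  have hnd : ∀ p ∈ P, ∀ q ∈ P, p ≠ q → ¬ Fc p ∣ Fc q := by
    intro p hp q hq hne
    have hp' : p.1 < p.2 := (hmemP p).mp hp
    have hq' : q.1 < q.2 := (hmemP q).mp hq
    by_cases h22 : q.2 = p.2
    · have h11 : q.1 ≠ p.1 := by
        intro h
        exact hne (Prod.ext h h22).symm
      exact aux_not_dvd hq'.ne' (Or.inr rfl) (h22 ▸ hq').ne h11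
    · by_cases h21 : q.2 = p.1
      · have hlt : q.1 < p.2 := lt_trans (h21 ▸ hq') hp'
        exact aux_not_dvd hq'.ne' (Or.inr rfl) hlt.ne (h21 ▸ hq').ne
      · exact aux_not_dvd hq'.ne' (Or.inl rfl) h22 h21
  have hWN : W ∣ N := by
    rw [hWdef]
    exact aux_prod_primes_dvd P Fc hprime hnd N hdvdN
  -- Step D : degree bookkeeping
  have hQdeg : Q.totalDegree ≤ P.card - E.card := by
    calc Q.totalDegree ≤ ∑ p ∈ P \ E, (Fc p).totalDegree := totalDegree_finset_prod _ _
      _ ≤ ∑ _p ∈ P \ E, 1 := Finset.sum_le_sum (fun p _ => by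
          rw [hFcdef]
          exact (totalDegree_sub _ _).trans (by simp [totalDegree_X]))
      _ = (P \ E).card := by rw [Finset.sum_const, smul_eq_mul, mul_one]
      _ = P.card - E.card := Finset.card_sdiff_of_subset hEP
  have hsgC : ∀ π : Equiv.Perm (Fin m), (sg π).totalDegree = 0 := by
    intro π
    show ((Equiv.Perm.sign π : ℤ) : MvPolynomial (Fin m) K).totalDegree = 0
    rw [← map_intCast (C : K →+* MvPolynomial (Fin m) K), totalDegree_C]
  have hNdeg : N.totalDegree ≤ g.totalDegree + (P.card - E.card) := by
    rw [hNdef]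
    refine totalDegree_finsetSum_le (fun π _ => ?_)
    calc (sg π * rename ⇑π (g * Q)).totalDegree
        ≤ (sg π).totalDegree + (rename ⇑π (g * Q)).totalDegree := totalDegree_mul _ _
      _ ≤ 0 + (g * Q).totalDegree := by
          rw [hsgC]
          exact add_le_add_right (totalDegree_rename_le _ _) 0
      _ ≤ g.totalDegree + Q.totalDegree := by
          rw [zero_add]; exact totalDegree_mul _ _
      _ ≤ g.totalDegree + (P.card - E.card) := add_le_add_right hQdeg _
  have hWhom : W.IsHomogeneous P.card := by
    have h7 := MvPolynomial.IsHomogeneous.prod P Fc (fun _ => 1) (fun p _ => by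
      rw [hFcdef]
      exact (isHomogeneous_X _ _).sub (isHomogeneous_X _ _))
    rw [hWdef]
    simpa using h7
  obtain ⟨q, hNq⟩ := hWN
  by_cases hq0 : q = 0
  · have hN0 : N = 0 := by rw [hNq, hq0, mul_zero]
    refine ⟨0, ?_, fun _ => rfl⟩
    have h8 := hstepA
    rw [hN0, map_zero, mul_zero] at h8
    rcases mul_eq_zero.mp h8 with h | h
    · rw [h]
      simp
    · exact absurd h hψW0
  · have hdegN := aux_deg_homog_mul hWhom hW0 hq0
    rw [← hNq] at hdegN
    have hcardPE : E.card ≤ P.card := Finset.card_le_card hEP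
    have hqdeg0 : q.totalDegree = 0 := by omega
    have hgdeg : ¬ g.totalDegree < E.card := by omega
    set c0 : K := coeff 0 q with hc0def
    have hqC : C c0 = q := by
      have hsum := sum_homogeneousComponent q
      rw [hqdeg0] at hsum
      rw [← hsum]
      simp [homogeneousComponent_zero, hc0def]
    refine ⟨(-1) ^ E.card * c0, ?_, fun h => absurd h hgdeg⟩
    apply mul_right_cancel₀ hψW0
    rw [hstepA, hNq, ← hqC, ← map_mul ψ]
    have h9 : (C ((-1) ^ E.card * c0) : MvPolynomial (Fin m) K) * W
        = (-1) ^ E.card * (W * C c0) := by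
      rw [map_mul (C : K →+* MvPolynomial (Fin m) K), map_pow, map_neg, map_one]
      ring
    rw [h9]
    simp only [map_mul, map_pow, map_neg, map_one]

end Key

section MainAux
variable {K : Type*} [Field K] {m : ℕ}

private lemma aux_perm_mem (π : Equiv.Perm (Fin m)) (p : Fin m → Prop)
    (h : ∀ x, ¬ p x → π x = x) : ∀ z, p z → p (π z) := by
  intro z hz
  by_contra hc
  have h1 : π (π z) = π z := h _ hc
  have h2 : π z = z := π.injective h1
  exact hc (h2.symm ▸ hz)

private lemma aux_DS_eq_DSOn (E : Finset (Fin m × Fin m)) (f : MvPolynomial (Fin m) K) :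
    DS E f = DSOn Finset.univ E f := by
  rw [DS, DSOn]
  rw [Finset.filter_true_of_mem (fun π _ => fun x hx => absurd (Finset.mem_univ x) hx)]

private lemma aux_exists_perm_image {α : Type*} [Fintype α] [DecidableEq α]
    {s t : Finset α} (h : s.card = t.card) : ∃ σ : Equiv.Perm α, s.image ⇑σ = t := by
  classical
  have h1 : Fintype.card { x // x ∈ s } = Fintype.card { x // x ∈ t } := by
    rw [Fintype.card_coe, Fintype.card_coe, h]
  have h2 : Fintype.card { x // ¬ x ∈ s } = Fintype.card { x // ¬ x ∈ t } := by
    rw [Fintype.card_subtype_compl, Fintype.card_subtype_compl,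
      Fintype.card_coe, Fintype.card_coe, h]
  let e := Fintype.equivOfCardEq h1
  let e' := Fintype.equivOfCardEq h2
  let σ : Equiv.Perm α :=
    ((Equiv.sumCompl (· ∈ s)).symm.trans ((e.sumCongr e').trans (Equiv.sumCompl (· ∈ t))))
  refine ⟨σ, ?_⟩
  have hsub : s.image ⇑σ ⊆ t := by
    intro y hy
    rw [Finset.mem_image] at hy
    obtain ⟨x, hx, rfl⟩ := hy
    show (Equiv.sumCompl (· ∈ t)) ((e.sumCongr e') ((Equiv.sumCompl (· ∈ s)).symm x)) ∈ t
    rw [Equiv.sumCompl_symm_apply_of_pos hx]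
    simp only [Equiv.sumCongr_apply, Sum.map_inl, Equiv.sumCompl_apply_inl]
    exact (e ⟨x, hx⟩).2
  refine Finset.eq_of_subset_of_card_le hsub ?_
  rw [Finset.card_image_of_injective _ σ.injective, h]

end MainAux
section Fiber
variable {K : Type*} [Field K] {m : ℕ}

set_option maxHeartbeats 1600000 in
private lemma aux_fiberU {ι : Type*} (U : Finset (Fin m)) (EU EW : Finset (Fin m × Fin m))
    (hEUsub : ∀ e ∈ EU, e.1 ∈ U ∧ e.2 ∈ U) (hEWsub : ∀ e ∈ EW, e.1 ∉ U ∧ e.2 ∉ U)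
    (s : Finset ι) (u w : ι → MvPolynomial (Fin m) K)
    (hu : ∀ i ∈ s, ∀ x ∈ (u i).vars, x ∈ U) (hw : ∀ i ∈ s, ∀ x ∈ (w i).vars, x ∉ U) :
    ∑ π ∈ Finset.univ.filter (fun π : Equiv.Perm (Fin m) => U.image ⇑π = U),
        algebraMap (MvPolynomial (Fin m) K) (FractionRing (MvPolynomial (Fin m) K))
            (rename ⇑π (∑ i ∈ s, u i * w i)) /
          algebraMap (MvPolynomial (Fin m) K) (FractionRing (MvPolynomial (Fin m) K))
            (rename ⇑π ((∏ e ∈ EU, (X e.1 - X e.2)) * ∏ e ∈ EW, (X e.1 - X e.2)))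
      = ∑ i ∈ s, DSOn U EU (u i) * DSOn Uᶜ EW (w i) := by
  classical
  set ψ := algebraMap (MvPolynomial (Fin m) K) (FractionRing (MvPolynomial (Fin m) K)) with hψdef
  set DU : MvPolynomial (Fin m) K := ∏ e ∈ EU, (X e.1 - X e.2) with hDUdef
  set DW : MvPolynomial (Fin m) K := ∏ e ∈ EW, (X e.1 - X e.2) with hDWdef
  set HU : Finset (Equiv.Perm (Fin m)) :=
    Finset.univ.filter (fun π : Equiv.Perm (Fin m) => ∀ x ∉ U, π x = x) with hHUdef
  set HW : Finset (Equiv.Perm (Fin m)) :=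
    Finset.univ.filter (fun π : Equiv.Perm (Fin m) => ∀ x ∉ Uᶜ, π x = x) with hHWdef
  set B : Finset (Equiv.Perm (Fin m)) :=
    Finset.univ.filter (fun π : Equiv.Perm (Fin m) => U.image ⇑π = U) with hBdef
  have hHUmem : ∀ ρ : Equiv.Perm (Fin m), ρ ∈ HU ↔ ∀ x ∉ U, ρ x = x := by
    intro ρ; rw [hHUdef, Finset.mem_filter]; simp
  have hHWmem : ∀ ρ : Equiv.Perm (Fin m), ρ ∈ HW ↔ ∀ x ∈ U, ρ x = x := by
    intro ρ; rw [hHWdef, Finset.mem_filter]; simp [Finset.mem_compl]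
  have hBmem : ∀ π : Equiv.Perm (Fin m), π ∈ B ↔ U.image ⇑π = U := by
    intro π; rw [hBdef, Finset.mem_filter]; simp
  have hBiff : ∀ π : Equiv.Perm (Fin m), U.image ⇑π = U → ∀ x, x ∈ U ↔ π x ∈ U := by
    intro π hπ x
    constructor
    · intro hx
      rw [← hπ]
      exact Finset.mem_image_of_mem _ hx
    · intro hx
      rw [← hπ, Finset.mem_image] at hx
      obtain ⟨y, hy, hyx⟩ := hx
      rwa [← π.injective hyx]
  set jmap : Equiv.Perm (Fin m) → Equiv.Perm (Fin m) × Equiv.Perm (Fin m) := fun π =>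
    if h : ∀ x, x ∈ U ↔ π x ∈ U then
      (Equiv.Perm.ofSubtype (π.subtypePerm (fun x => (h x).symm)),
       Equiv.Perm.ofSubtype (π.subtypePerm (p := fun y => y ∉ U) (fun x => (not_iff_not.mpr (h x)).symm)))
    else 1 with hjdef
  have hi : ∀ ρ ∈ HU ×ˢ HW, ρ.1 * ρ.2 ∈ B := by
    intro ρ hρ
    rw [Finset.mem_product] at hρ
    have h1 := (hHUmem ρ.1).mp hρ.1
    have h2 := (hHWmem ρ.2).mp hρ.2
    rw [hBmem]
    have hsub : U.image ⇑(ρ.1 * ρ.2) ⊆ U := by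
      intro y hy
      rw [Finset.mem_image] at hy
      obtain ⟨x, hx, rfl⟩ := hy
      show ρ.1 (ρ.2 x) ∈ U
      rw [h2 x hx]
      exact aux_perm_mem ρ.1 (· ∈ U) h1 x hx
    exact Finset.eq_of_subset_of_card_le hsub
      (le_of_eq (Finset.card_image_of_injective _ (ρ.1 * ρ.2).injective).symm)
  have hj : ∀ π ∈ B, jmap π ∈ HU ×ˢ HW := by
    intro π hπ
    have hiff := hBiff π ((hBmem π).mp hπ)
    rw [hjdef]
    simp only [dif_pos hiff]
    rw [Finset.mem_product]
    constructor
    · rw [hHUmem]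
      intro x hx
      exact Equiv.Perm.ofSubtype_apply_of_not_mem _ hx
    · rw [hHWmem]
      intro x hx
      exact Equiv.Perm.ofSubtype_apply_of_not_mem _ (not_not.mpr hx)
  have hright : ∀ π ∈ B, (jmap π).1 * (jmap π).2 = π := by
    intro π hπ
    have hiff := hBiff π ((hBmem π).mp hπ)
    rw [hjdef]
    simp only [dif_pos hiff]
    ext x
    rw [Equiv.Perm.mul_apply]
    by_cases hx : x ∈ U
    · rw [Equiv.Perm.ofSubtype_apply_of_not_mem (p := fun y => y ∉ U) _ (not_not.mpr hx),
        Equiv.Perm.ofSubtype_apply_of_mem (p := fun y => y ∈ U) _ hx]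
      simp [Equiv.Perm.subtypePerm_apply]
    · rw [Equiv.Perm.ofSubtype_apply_of_mem (p := fun y => y ∉ U) _ hx]
      simp only [Equiv.Perm.subtypePerm_apply]
      rw [Equiv.Perm.ofSubtype_apply_of_not_mem (p := fun y => y ∈ U) _
        ((not_iff_not.mpr (hiff x)).mp hx)]
  have hleft : ∀ ρ ∈ HU ×ˢ HW, jmap (ρ.1 * ρ.2) = ρ := by
    intro ρ hρ
    have hmemB := hi ρ hρ
    have hiff := hBiff _ ((hBmem _).mp hmemB)
    rw [Finset.mem_product] at hρ
    have h1 := (hHUmem ρ.1).mp hρ.1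
    have h2 := (hHWmem ρ.2).mp hρ.2
    have pres2 : ∀ z, z ∉ U → ρ.2 z ∉ U :=
      aux_perm_mem ρ.2 (· ∉ U) (fun x hx => h2 x (not_not.mp hx))
    rw [hjdef]
    simp only [dif_pos hiff]
    have e1 : Equiv.Perm.ofSubtype ((ρ.1 * ρ.2).subtypePerm (fun x => (hiff x).symm)) = ρ.1 := by
      ext x
      by_cases hx : x ∈ U
      · rw [Equiv.Perm.ofSubtype_apply_of_mem (p := fun y => y ∈ U) _ hx]
        simp only [Equiv.Perm.subtypePerm_apply, Equiv.Perm.coe_mul, Function.comp_apply,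
          h2 x hx]
      · rw [Equiv.Perm.ofSubtype_apply_of_not_mem (p := fun y => y ∈ U) _ hx, h1 x hx]
    have e2 : Equiv.Perm.ofSubtype ((ρ.1 * ρ.2).subtypePerm
        (p := fun y => y ∉ U) (fun x => (not_iff_not.mpr (hiff x)).symm)) = ρ.2 := by
      ext x
      by_cases hx : x ∈ U
      · rw [Equiv.Perm.ofSubtype_apply_of_not_mem (p := fun y => y ∉ U) _ (not_not.mpr hx),
          h2 x hx]
      · rw [Equiv.Perm.ofSubtype_apply_of_mem (p := fun y => y ∉ U) _ hx]
        simp only [Equiv.Perm.subtypePerm_apply, Equiv.Perm.coe_mul, Function.comp_apply,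
          h1 _ (pres2 x hx)]
    rw [e1, e2]
  have hssum : ∑ π ∈ B, ψ (rename ⇑π (∑ i ∈ s, u i * w i)) / ψ (rename ⇑π (DU * DW))
      = ∑ ρ ∈ HU ×ˢ HW,
          ψ (rename ⇑(ρ.1 * ρ.2) (∑ i ∈ s, u i * w i)) / ψ (rename ⇑(ρ.1 * ρ.2) (DU * DW)) := by
    refine (Finset.sum_nbij'
      (i := fun ρ : Equiv.Perm (Fin m) × Equiv.Perm (Fin m) => ρ.1 * ρ.2)
      (j := jmap)
      (t := B)
      (f := fun ρ : Equiv.Perm (Fin m) × Equiv.Perm (Fin m) =>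
        ψ (rename ⇑(ρ.1 * ρ.2) (∑ i ∈ s, u i * w i)) / ψ (rename ⇑(ρ.1 * ρ.2) (DU * DW)))
      (g := fun π : Equiv.Perm (Fin m) =>
        ψ (rename ⇑π (∑ i ∈ s, u i * w i)) / ψ (rename ⇑π (DU * DW)))
      hi hj hleft hright (fun _ _ => rfl)).symm
  have hT : ∀ ρ1 ∈ HU, ∀ ρ2 ∈ HW,
      ψ (rename ⇑(ρ1 * ρ2) (∑ i ∈ s, u i * w i)) / ψ (rename ⇑(ρ1 * ρ2) (DU * DW))
        = ∑ i ∈ s, (ψ (rename ⇑ρ1 (u i)) / ψ (rename ⇑ρ1 DU))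
            * (ψ (rename ⇑ρ2 (w i)) / ψ (rename ⇑ρ2 DW)) := by
    intro ρ1 hρ1 ρ2 hρ2
    have h1 := (hHUmem ρ1).mp hρ1
    have h2 := (hHWmem ρ2).mp hρ2
    have pres2 : ∀ z, z ∉ U → ρ2 z ∉ U :=
      aux_perm_mem ρ2 (· ∉ U) (fun x hx => h2 x (not_not.mp hx))
    have hco : ⇑(ρ1 * ρ2) = ⇑ρ1 ∘ ⇑ρ2 := rfl
    have hnum : rename ⇑(ρ1 * ρ2) (∑ i ∈ s, u i * w i)
        = ∑ i ∈ s, rename ⇑ρ1 (u i) * rename ⇑ρ2 (w i) := by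
      rw [map_sum]
      refine Finset.sum_congr rfl (fun i hi' => ?_)
      rw [map_mul, hco, ← rename_rename, ← rename_rename (f := ⇑ρ2) (g := ⇑ρ1)]
      congr 1
      · rw [aux_rename_fix (fun x hx => h2 x (hu i hi' x hx))]
      · rw [aux_rename_fix (g := rename ⇑ρ2 (w i)) (π := ⇑ρ1) ?_]
        intro x hx
        have hx' := MvPolynomial.vars_rename ⇑ρ2 (w i) hx
        rw [Finset.mem_image] at hx'
        obtain ⟨y, hy, rfl⟩ := hx'
        exact h1 _ (pres2 y (hw i hi' y hy))
    have hDU2 : rename ⇑(ρ1 * ρ2) DU = rename ⇑ρ1 DU := by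
      rw [hDUdef, map_prod, map_prod]
      refine Finset.prod_congr rfl (fun e he => ?_)
      rw [map_sub, map_sub, rename_X, rename_X, rename_X, rename_X]
      have he1 : ρ2 e.1 = e.1 := h2 _ (hEUsub e he).1
      have he2 : ρ2 e.2 = e.2 := h2 _ (hEUsub e he).2
      show (X (ρ1 (ρ2 e.1)) - X (ρ1 (ρ2 e.2)) : MvPolynomial (Fin m) K) = _
      rw [he1, he2]
    have hDW2 : rename ⇑(ρ1 * ρ2) DW = rename ⇑ρ2 DW := by
      rw [hDWdef, map_prod, map_prod]
      refine Finset.prod_congr rfl (fun e he => ?_)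
      rw [map_sub, map_sub, rename_X, rename_X, rename_X, rename_X]
      have he1 : ρ1 (ρ2 e.1) = ρ2 e.1 := h1 _ (pres2 _ (hEWsub e he).1)
      have he2 : ρ1 (ρ2 e.2) = ρ2 e.2 := h1 _ (pres2 _ (hEWsub e he).2)
      show (X (ρ1 (ρ2 e.1)) - X (ρ1 (ρ2 e.2)) : MvPolynomial (Fin m) K) = _
      rw [he1, he2]
    rw [hnum, map_mul, hDU2, hDW2, map_sum, map_mul, Finset.sum_div]
    refine Finset.sum_congr rfl (fun i _ => ?_)
    rw [map_mul, div_mul_div_comm]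
  have hDSOnU : ∀ i, DSOn U EU (u i)
      = ∑ ρ1 ∈ HU, ψ (rename ⇑ρ1 (u i)) / ψ (rename ⇑ρ1 DU) := fun i => rfl
  have hDSOnW : ∀ i, DSOn Uᶜ EW (w i)
      = ∑ ρ2 ∈ HW, ψ (rename ⇑ρ2 (w i)) / ψ (rename ⇑ρ2 DW) := fun i => rfl
  rw [hssum, Finset.sum_product]
  rw [Finset.sum_congr rfl (fun ρ1 h1 => Finset.sum_congr rfl (fun ρ2 h2 => hT ρ1 h1 ρ2 h2))]
  rw [Finset.sum_congr rfl
    (fun ρ1 (_ : ρ1 ∈ HU) => Finset.sum_comm (s := HW) (t := s)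
      (f := fun ρ2 i => (ψ (rename ⇑ρ1 (u i)) / ψ (rename ⇑ρ1 DU))
        * (ψ (rename ⇑ρ2 (w i)) / ψ (rename ⇑ρ2 DW))))]
  rw [Finset.sum_comm (s := HU) (t := s)]
  refine Finset.sum_congr rfl (fun i _ => ?_)
  rw [hDSOnU, hDSOnW, Finset.sum_mul_sum]

end Fiber
set_option maxHeartbeats 1600000 in
set_option synthInstance.maxHeartbeats 200000 in
/-- let `G = (V, E)` be a disconnected graph, `V = U ⊔ W` with no edges
between `U` and `W = Uᶜ`, `EU`, `EW` the edges within `U`, `W` respectively.  If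
`f = Σ_i u_i·w_i` with `deg f ≤ |E|`, each `u_i` depending only on the variables in `U`,
each `w_i` only on those in `W`, and `deg u_i + deg w_i ≤ deg f`, then
`DS_G(f) = C(|V|,|U|) · Σ_i DS_{GU}(u_i) · DS_{GW}(w_i)`, and any summand with
`deg u_i < |EU|` or `deg w_i < |EW|` is zero. -/
theorem divided_symmetrization_disconnected {K : Type*} [Field K] (m : ℕ)
    (U : Finset (Fin m)) (E : Finset (Fin m × Fin m))
    (hEo : ∀ e ∈ E, e.1 < e.2)
    (hsplit : ∀ e ∈ E, (e.1 ∈ U ∧ e.2 ∈ U) ∨ (e.1 ∉ U ∧ e.2 ∉ U))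
    {ι : Type*} (s : Finset ι) (u w : ι → MvPolynomial (Fin m) K)
    (f : MvPolynomial (Fin m) K) (hf : f = ∑ i ∈ s, u i * w i)
    (hu : ∀ i ∈ s, ∀ x ∈ (u i).vars, x ∈ U)
    (hw : ∀ i ∈ s, ∀ x ∈ (w i).vars, x ∉ U)
    (hdegs : ∀ i ∈ s, (u i).totalDegree + (w i).totalDegree ≤ f.totalDegree)
    (hdeg : f.totalDegree ≤ E.card) :
    DS E f = (m.choose U.card : FractionRing (MvPolynomial (Fin m) K)) *
        ∑ i ∈ s, DSOn U (E.filter fun e => e.1 ∈ U) (u i) *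
          DSOn Uᶜ (E.filter fun e => e.1 ∉ U) (w i) ∧
      ∀ i ∈ s, ((u i).totalDegree < (E.filter fun e => e.1 ∈ U).card ∨
          (w i).totalDegree < (E.filter fun e => e.1 ∉ U).card) →
        DSOn U (E.filter fun e => e.1 ∈ U) (u i) *
          DSOn Uᶜ (E.filter fun e => e.1 ∉ U) (w i) = 0 := by
  classical
  set ψ := algebraMap (MvPolynomial (Fin m) K) (FractionRing (MvPolynomial (Fin m) K)) with hψdef
  set EU := E.filter (fun e => e.1 ∈ U) with hEUdef
  set EW := E.filter (fun e => e.1 ∉ U) with hEWdef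
  have hEU : ∀ e ∈ EU, e.1 < e.2 ∧ e.1 ∈ U ∧ e.2 ∈ U := by
    intro e he
    rw [hEUdef, Finset.mem_filter] at he
    rcases hsplit e he.1 with h | h
    · exact ⟨hEo e he.1, h⟩
    · exact absurd he.2 h.1
  have hEW : ∀ e ∈ EW, e.1 < e.2 ∧ e.1 ∈ Uᶜ ∧ e.2 ∈ Uᶜ := by
    intro e he
    rw [hEWdef, Finset.mem_filter] at he
    rcases hsplit e he.1 with h | h
    · exact absurd h.1 he.2
    · exact ⟨hEo e he.1, Finset.mem_compl.mpr h.1, Finset.mem_compl.mpr h.2⟩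
  have hcardE : EU.card + EW.card = E.card := by
    rw [hEUdef, hEWdef]
    exact Finset.card_filter_add_card_filter_not (s := E) (p := fun e : Fin m × Fin m => e.1 ∈ U)
  have part2 : ∀ i ∈ s, ((u i).totalDegree < EU.card ∨ (w i).totalDegree < EW.card) →
      DSOn U EU (u i) * DSOn Uᶜ EW (w i) = 0 := by
    intro i _ hlt
    rcases hlt with hlt | hlt
    · obtain ⟨c, hc, hc0⟩ := aux_key U EU hEU (u i) hlt.le
      rw [hc, hc0 hlt]
      simp
    · obtain ⟨c, hc, hc0⟩ := aux_key Uᶜ EW hEW (w i) hlt.le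
      rw [hc, hc0 hlt]
      simp
  refine ⟨?_, part2⟩
  have hconst : ∀ i ∈ s, ∃ kc : K, DSOn U EU (u i) * DSOn Uᶜ EW (w i) = ψ (C kc) := by
    intro i hi
    by_cases h1 : (u i).totalDegree ≤ EU.card
    · by_cases h2 : (w i).totalDegree ≤ EW.card
      · obtain ⟨c1, hc1, _⟩ := aux_key U EU hEU (u i) h1
        obtain ⟨c2, hc2, _⟩ := aux_key Uᶜ EW hEW (w i) h2
        exact ⟨c1 * c2, by rw [hc1, hc2, map_mul (C : K →+* MvPolynomial (Fin m) K), map_mul ψ]⟩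
      · have hlt : (u i).totalDegree < EU.card := by
          have h3 := hdegs i hi
          omega
        refine ⟨0, ?_⟩
        rw [part2 i hi (Or.inl hlt)]
        simp
    · have hlt : (w i).totalDegree < EW.card := by
        have h3 := hdegs i hi
        omega
      refine ⟨0, ?_⟩
      rw [part2 i hi (Or.inr hlt)]
      simp
  choose! kf hkf using hconst
  have hval : ∑ i ∈ s, DSOn U EU (u i) * DSOn Uᶜ EW (w i) = ψ (C (∑ i ∈ s, kf i)) := by
    rw [Finset.sum_congr rfl (fun i hi => hkf i hi),
      map_sum (C : K →+* MvPolynomial (Fin m) K), map_sum ψ]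
  set D := ∏ e ∈ E, (X e.1 - X e.2 : MvPolynomial (Fin m) K) with hDdef
  have hDsplit : D = (∏ e ∈ EU, (X e.1 - X e.2)) * ∏ e ∈ EW, (X e.1 - X e.2) := by
    rw [hDdef, hEUdef, hEWdef]
    exact (Finset.prod_filter_mul_prod_filter_not E (fun e => e.1 ∈ U) _).symm
  have hfiberU : ∑ π ∈ Finset.univ.filter (fun π : Equiv.Perm (Fin m) => U.image ⇑π = U),
      ψ (rename ⇑π f) / ψ (rename ⇑π D) = ψ (C (∑ i ∈ s, kf i)) := by
    have h4 := aux_fiberU U EU EW (fun e he => (hEU e he).2)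
      (fun e he => ⟨Finset.mem_compl.mp (hEW e he).2.1, Finset.mem_compl.mp (hEW e he).2.2⟩)
      s u w hu hw
    rw [← hf, ← hDsplit] at h4
    exact h4.trans hval
  have hfiber : ∀ V' ∈ Finset.powersetCard U.card (Finset.univ : Finset (Fin m)),
      ∑ π ∈ Finset.univ.filter (fun π : Equiv.Perm (Fin m) => U.image ⇑π = V'),
        ψ (rename ⇑π f) / ψ (rename ⇑π D) = ψ (C (∑ i ∈ s, kf i)) := by
    intro V' hV'
    have hcard : U.card = V'.card := ((Finset.mem_powersetCard.mp hV').2).symm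
    obtain ⟨σ, hσ⟩ := aux_exists_perm_image hcard
    set Φ := IsFractionRing.ringEquivOfRingEquiv
      (K := FractionRing (MvPolynomial (Fin m) K)) (L := FractionRing (MvPolynomial (Fin m) K))
      (renameEquiv K (σ : Fin m ≃ Fin m)).toRingEquiv with hΦdef
    have hΦψ : ∀ x, Φ (ψ x) = ψ (rename ⇑σ x) := by
      intro x
      rw [hΦdef, hψdef, IsFractionRing.ringEquivOfRingEquiv_algebraMap]
      rfl
    have himg : ∀ π : Equiv.Perm (Fin m), U.image ⇑π = V' ↔ U.image ⇑(σ⁻¹ * π) = U := by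
      intro π
      constructor
      · intro h
        rw [show ⇑(σ⁻¹ * π) = ⇑σ⁻¹ ∘ ⇑π from rfl, ← Finset.image_image, h, ← hσ,
          Finset.image_image]
        rw [show ⇑σ⁻¹ ∘ ⇑σ = id from funext (fun x => σ.symm_apply_apply x), Finset.image_id]
      · intro h
        have h5 : U.image (⇑σ ∘ ⇑(σ⁻¹ * π)) = V' := by
          rw [← Finset.image_image, h, hσ]
        rw [show ⇑σ ∘ ⇑(σ⁻¹ * π) = ⇑π from funext (fun x => by
          simp [Equiv.Perm.mul_apply])] at h5
        exact h5
    have hstep1 : ∑ π ∈ Finset.univ.filter (fun π : Equiv.Perm (Fin m) => U.image ⇑π = V'),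
        ψ (rename ⇑π f) / ψ (rename ⇑π D)
        = ∑ ρ ∈ Finset.univ.filter (fun π : Equiv.Perm (Fin m) => U.image ⇑π = U),
            ψ (rename ⇑(σ * ρ) f) / ψ (rename ⇑(σ * ρ) D) := by
      refine Finset.sum_nbij' (fun π => σ⁻¹ * π) (fun ρ => σ * ρ) ?_ ?_ ?_ ?_ ?_
      · intro π hπ
        rw [Finset.mem_filter] at hπ ⊢
        exact ⟨Finset.mem_univ _, (himg π).mp hπ.2⟩
      · intro ρ hρ
        rw [Finset.mem_filter] at hρ ⊢
        refine ⟨Finset.mem_univ _, (himg (σ * ρ)).mpr ?_⟩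
        rw [inv_mul_cancel_left]
        exact hρ.2
      · intro π _
        show σ * (σ⁻¹ * π) = π
        rw [mul_inv_cancel_left]
      · intro ρ _
        show σ⁻¹ * (σ * ρ) = ρ
        rw [inv_mul_cancel_left]
      · intro π _
        show _ = ψ (rename ⇑(σ * (σ⁻¹ * π)) f) / ψ (rename ⇑(σ * (σ⁻¹ * π)) D)
        rw [mul_inv_cancel_left]
    have hstep2 : ∀ ρ : Equiv.Perm (Fin m),
        ψ (rename ⇑(σ * ρ) f) / ψ (rename ⇑(σ * ρ) D)
          = Φ (ψ (rename ⇑ρ f) / ψ (rename ⇑ρ D)) := by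
      intro ρ
      rw [map_div₀ Φ, hΦψ, hΦψ, show ⇑(σ * ρ) = ⇑σ ∘ ⇑ρ from rfl, ← rename_rename,
        ← rename_rename]
    rw [hstep1, Finset.sum_congr rfl (fun ρ _ => hstep2 ρ), ← map_sum Φ, hfiberU, hΦψ, rename_C]
  have hmaps : ∀ π : Equiv.Perm (Fin m), π ∈ (Finset.univ : Finset (Equiv.Perm (Fin m))) →
      U.image ⇑π ∈ Finset.powersetCard U.card (Finset.univ : Finset (Fin m)) := by
    intro π _
    exact Finset.mem_powersetCard.mpr
      ⟨Finset.subset_univ _, Finset.card_image_of_injective _ π.injective⟩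
  have hDSdef : DS E f = ∑ π ∈ (Finset.univ : Finset (Equiv.Perm (Fin m))),
      ψ (rename ⇑π f) / ψ (rename ⇑π D) := rfl
  rw [hDSdef, ← Finset.sum_fiberwise_of_maps_to hmaps
    (fun π : Equiv.Perm (Fin m) => ψ (rename ⇑π f) / ψ (rename ⇑π D))]
  rw [Finset.sum_congr rfl hfiber, Finset.sum_const, Finset.card_powersetCard,
    Finset.card_univ, Fintype.card_fin, nsmul_eq_mul, hval]
end

section
/- Let T = (V, E) be a tree on the well-ordered variable set V with |V| = n ≥ 2, and let v_1 > v_2 be the two maximal elements of V. For x ∈ V, let τ(x^{n−1}) denote sign(x^{n−1}) times the number of x^{n−1}-acceptable permutations of V. Then Σ_{x∈V} τ(x^{n−1}) = 0. -/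
open scoped Classical

section TauAux

variable {n : ℕ} {E : Finset (Fin n × Fin n)} {T : SimpleGraph (Fin n)}

lemma tau_bridge_not_reach (hT : T.IsTree) {a b : Fin n} (hab : T.Adj a b) :
    ¬ (T.deleteEdges {s(a,b)}).Reachable a b := by
  have h := (SimpleGraph.isAcyclic_iff_forall_adj_isBridge.mp hT.2) hab
  rw [SimpleGraph.isBridge_iff] at h
  exact h

lemma tau_sum_neg_iff (hT : T.IsTree) {a b : Fin n} (hab : T.Adj a b) (x : Fin n) :
    ((∑ z ∈ Finset.univ.filter (fun z => (T.deleteEdges {s(a,b)}).Reachable b z),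
        (if z = x then (n:ℤ) - 2 else -1)) < 0) ↔
      ¬ (T.deleteEdges {s(a,b)}).Reachable b x := by
  set C := Finset.univ.filter (fun z => (T.deleteEdges {s(a,b)}).Reachable b z) with hC
  have hmem : ∀ z, z ∈ C ↔ (T.deleteEdges {s(a,b)}).Reachable b z := by
    intro z; simp [hC]
  have hbC : b ∈ C := (hmem b).mpr (SimpleGraph.Reachable.refl b)
  have haC : a ∉ C := by
    intro h
    exact tau_bridge_not_reach hT hab (((hmem a).mp h).symm)
  have hcard1 : 1 ≤ C.card := Finset.card_pos.mpr ⟨b, hbC⟩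
  have hcardn : C.card < n := by
    have : C ⊂ Finset.univ := Finset.ssubset_univ_iff.mpr (fun h => haC (h ▸ Finset.mem_univ a))
    simpa using Finset.card_lt_card this
  have hsum : (∑ z ∈ C, (if z = x then (n:ℤ) - 2 else -1))
      = (if x ∈ C then (n:ℤ) - 1 else 0) - C.card := by
    have : ∀ z, (if z = x then (n:ℤ) - 2 else -1)
        = (if z = x then (n:ℤ) - 1 else 0) + (-1) := by
      intro z; split <;> ring
    rw [Finset.sum_congr rfl fun z _ => this z, Finset.sum_add_distrib,
      Finset.sum_ite_eq' C x (fun _ => (n:ℤ) - 1), Finset.sum_const]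
    simp; ring
  rw [hsum, ← hmem]
  by_cases hx : x ∈ C
  · simp only [if_pos hx, hx, not_true, iff_false, not_lt]
    push_cast
    omega
  · simp only [if_neg hx, hx, not_false_iff, iff_true]
    push_cast
    omega

lemma tau_exists_smaller_neighbor (hT : T.IsTree)
    (hadj : ∀ i j : Fin n, T.Adj i j ↔ (i, j) ∈ E ∨ (j, i) ∈ E)
    {x y : Fin n} {π : Equiv.Perm (Fin n)}
    (hacc : ∀ e ∈ E, (π e.1 < π e.2 ↔
      ¬ (T.deleteEdges {s(e.1, e.2)}).Reachable e.2 x))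
    (hyx : y ≠ x) : ∃ w, T.Adj y w ∧ π w < π y := by
  obtain ⟨p0⟩ := hT.1.preconnected y x
  have hp : p0.bypass.IsPath := SimpleGraph.Walk.bypass_isPath p0
  cases hpath : p0.bypass with
  | nil => exact absurd rfl hyx
  | @cons _ w _ h q =>
    rw [hpath] at hp
    rw [SimpleGraph.Walk.cons_isPath_iff] at hp
    have hedge : ∀ e ∈ q.edges, e ∉ ({s(y,w)} : Set (Sym2 (Fin n))) := by
      intro e he hmem
      rw [Set.mem_singleton_iff] at hmem
      subst hmem
      exact hp.2 (q.fst_mem_support_of_mem_edges he)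
    have hwx : (T.deleteEdges {s(y,w)}).Reachable w x :=
      ⟨q.toDeleteEdges _ hedge⟩
    have hbr : ¬ (T.deleteEdges {s(y,w)}).Reachable y w := tau_bridge_not_reach hT h
    have hne : π w ≠ π y := fun hh => h.ne (π.injective hh).symm
    rcases (hadj y w).mp h with h1 | h2
    · have hiff := hacc (y, w) h1
      simp only at hiff
      have : ¬ (π y < π w) := by
        rw [hiff]
        exact fun hcon => hcon hwx
      exact ⟨w, h, lt_of_le_of_ne (not_lt.mp this) hne⟩
    · have hiff := hacc (w, y) h2
      simp only at hiff
      refine ⟨w, h, hiff.mpr ?_⟩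
      intro hyr
      rw [Sym2.eq_swap] at hbr
      have : (T.deleteEdges {s(w,y)}).Reachable y w := by
        rw [Sym2.eq_swap] at hwx
        exact hyr.trans hwx.symm
      exact hbr this

lemma tau_pi_min (hn : 2 ≤ n) (hT : T.IsTree)
    (hadj : ∀ i j : Fin n, T.Adj i j ↔ (i, j) ∈ E ∨ (j, i) ∈ E)
    {x : Fin n} {π : Equiv.Perm (Fin n)}
    (hacc : ∀ e ∈ E, (π e.1 < π e.2 ↔
      ¬ (T.deleteEdges {s(e.1, e.2)}).Reachable e.2 x)) :
    π x = ⟨0, by omega⟩ := by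
  set u0 : Fin n := ⟨0, by omega⟩ with hu0
  have hm : π.symm u0 = x := by
    by_contra hne
    obtain ⟨w, _, hlt⟩ := tau_exists_smaller_neighbor hT hadj hacc hne
    rw [Equiv.apply_symm_apply] at hlt
    exact absurd (Fin.lt_def.mp hlt) (by simp [hu0])
  rw [← hm, Equiv.apply_symm_apply]

lemma tau_acc_unique (hn : 2 ≤ n) (hT : T.IsTree)
    (hadj : ∀ i j : Fin n, T.Adj i j ↔ (i, j) ∈ E ∨ (j, i) ∈ E)
    {x x' : Fin n} {π : Equiv.Perm (Fin n)}
    (hacc : ∀ e ∈ E, (π e.1 < π e.2 ↔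
      ¬ (T.deleteEdges {s(e.1, e.2)}).Reachable e.2 x))
    (hacc' : ∀ e ∈ E, (π e.1 < π e.2 ↔
      ¬ (T.deleteEdges {s(e.1, e.2)}).Reachable e.2 x')) :
    x = x' :=
  π.injective ((tau_pi_min hn hT hadj hacc).trans (tau_pi_min hn hT hadj hacc').symm)

lemma tau_pair_lemma (hn : 2 ≤ n) (hT : T.IsTree)
    (hEo : ∀ e ∈ E, e.1 < e.2)
    (hadj : ∀ i j : Fin n, T.Adj i j ↔ (i, j) ∈ E ∨ (j, i) ∈ E)
    {x : Fin n} {π : Equiv.Perm (Fin n)}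
    (hacc : ∀ e ∈ E, (π e.1 < π e.2 ↔
      ¬ (T.deleteEdges {s(e.1, e.2)}).Reachable e.2 x)) :
    (∀ e ∈ E, ((Equiv.swap (⟨0, by omega⟩ : Fin n) ⟨1, by omega⟩ * π) e.1 <
        (Equiv.swap (⟨0, by omega⟩ : Fin n) ⟨1, by omega⟩ * π) e.2 ↔
      ¬ (T.deleteEdges {s(e.1, e.2)}).Reachable e.2 (π.symm ⟨1, by omega⟩)))
    ∧ ((-1 : ℤ) ^ (E.filter fun e =>
          (Equiv.swap (⟨0, by omega⟩ : Fin n) ⟨1, by omega⟩ * π) e.2 <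
          (Equiv.swap (⟨0, by omega⟩ : Fin n) ⟨1, by omega⟩ * π) e.1).card
        = -(-1 : ℤ) ^ (E.filter fun e => π e.2 < π e.1).card) := by
  set u0 : Fin n := ⟨0, by omega⟩ with hu0
  set u1 : Fin n := ⟨1, by omega⟩ with hu1
  set π' : Equiv.Perm (Fin n) := Equiv.swap u0 u1 * π with hπ'
  set v : Fin n := π.symm u1 with hvdef
  have hπx : π x = u0 := tau_pi_min hn hT hadj hacc
  have hπv : π v = u1 := Equiv.apply_symm_apply _ _
  have hu01 : u0 ≠ u1 := by simp [hu0, hu1, Fin.ext_iff]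
  have hvx : v ≠ x := fun h => hu01 (by rw [← hπx, ← hπv, h])
  have hadj_vx : T.Adj v x := by
    obtain ⟨w, hw, hlt⟩ := tau_exists_smaller_neighbor hT hadj hacc hvx
    have : π w = u0 := by
      rw [hπv] at hlt
      have := Fin.lt_def.mp hlt
      exact Fin.ext (by simp [hu1] at this; simpa [hu0])
    have hwx : w = x := π.injective (this.trans hπx.symm)
    rwa [hwx] at hw
  have hπ'x : π' x = u1 := by
    rw [hπ', Equiv.Perm.mul_apply, hπx, Equiv.swap_apply_left]
  have hπ'v : π' v = u0 := by
    rw [hπ', Equiv.Perm.mul_apply, hπv, Equiv.swap_apply_right]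
  have hgen : ∀ z : Fin n, z ≠ x → z ≠ v → π' z = π z ∧ 2 ≤ (π z).val := by
    intro z hzx hzv
    have h0 : π z ≠ u0 := fun h => hzx (π.injective (h.trans hπx.symm))
    have h1 : π z ≠ u1 := fun h => hzv (π.injective (h.trans hπv.symm))
    constructor
    · rw [hπ', Equiv.Perm.mul_apply, Equiv.swap_apply_of_ne_of_ne h0 h1]
    · have e0 : (π z).val ≠ 0 := fun h => h0 (Fin.ext (by simp [hu0, h]))
      have e1 : (π z).val ≠ 1 := fun h => h1 (Fin.ext (by simp [hu1, h]))
      omega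
  have hcmp : ∀ a b : Fin n, ¬((a = x ∨ a = v) ∧ (b = x ∨ b = v)) →
      (π' a < π' b ↔ π a < π b) := by
    intro a b hC
    by_cases hax : a = x
    · have hb : b ≠ x ∧ b ≠ v := by
        rcases not_and_or.mp hC with h | h
        · exact absurd (Or.inl hax) h
        · exact ⟨fun hh => h (Or.inl hh), fun hh => h (Or.inr hh)⟩
      obtain ⟨hb1, hb2⟩ := hgen b hb.1 hb.2
      subst hax
      rw [hπ'x, hπx, hb1, Fin.lt_def, Fin.lt_def]
      simp only [hu0, hu1]
      omega
    · by_cases hav : a = v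
      · have hb : b ≠ x ∧ b ≠ v := by
          rcases not_and_or.mp hC with h | h
          · exact absurd (Or.inr hav) h
          · exact ⟨fun hh => h (Or.inl hh), fun hh => h (Or.inr hh)⟩
        obtain ⟨hb1, hb2⟩ := hgen b hb.1 hb.2
        subst hav
        rw [hπ'v, hπv, hb1, Fin.lt_def, Fin.lt_def]
        simp only [hu0, hu1]
        omega
      · obtain ⟨ha1, ha2⟩ := hgen a hax hav
        by_cases hbx : b = x
        · subst hbx
          rw [hπ'x, hπx, ha1, Fin.lt_def, Fin.lt_def]
          simp only [hu0, hu1]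
          omega
        · by_cases hbv : b = v
          · subst hbv
            rw [hπ'v, hπv, ha1, Fin.lt_def, Fin.lt_def]
            simp only [hu0, hu1]
            omega
          · obtain ⟨hb1, _⟩ := hgen b hbx hbv
            rw [ha1, hb1]
  constructor
  · intro e he
    by_cases hc : (e.1 = x ∨ e.1 = v) ∧ (e.2 = x ∨ e.2 = v)
    · have hne : e.1 ≠ e.2 := (hEo e he).ne
      rcases hc.1 with h1 | h1 <;> rcases hc.2 with h2 | h2
      · exact absurd (h1.trans h2.symm) hne
      · rw [h1, h2, hπ'x, hπ'v]
        constructor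
        · intro hlt
          exact absurd (Fin.lt_def.mp hlt) (by simp [hu0, hu1])
        · intro hr
          exact absurd (SimpleGraph.Reachable.refl v) hr
      · rw [h1, h2, hπ'v, hπ'x]
        constructor
        · intro _ hr
          have hbr := tau_bridge_not_reach hT hadj_vx
          exact hbr hr.symm
        · intro _
          rw [Fin.lt_def]
          simp [hu0, hu1]
      · exact absurd (h1.trans h2.symm) hne
    · rw [hcmp e.1 e.2 hc, hacc e he]
      have hsne : s(v, x) ∉ ({s(e.1, e.2)} : Set (Sym2 (Fin n))) := by
        intro hmem
        rw [Set.mem_singleton_iff] at hmem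
        rcases Sym2.eq_iff.mp hmem with ⟨ha, hb⟩ | ⟨ha, hb⟩
        · exact hc ⟨Or.inr ha.symm, Or.inl hb.symm⟩
        · exact hc ⟨Or.inl hb.symm, Or.inr ha.symm⟩
      have hadj' : (T.deleteEdges {s(e.1, e.2)}).Adj v x := by
        rw [SimpleGraph.deleteEdges_adj]
        exact ⟨hadj_vx, hsne⟩
      constructor
      · intro hnr hr
        exact hnr (hr.trans hadj'.reachable)
      · intro hnr hr
        exact hnr (hr.trans hadj'.symm.reachable)
  · rcases (hadj v x).mp hadj_vx with h1 | h2
    · have hA' : E.filter (fun e => π' e.2 < π' e.1) =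
          (E.filter (fun e => π e.2 < π e.1)).erase (v, x) := by
        ext e
        simp only [Finset.mem_filter, Finset.mem_erase]
        constructor
        · intro ⟨he, hlt⟩
          have hne : e ≠ (v, x) := by
            rintro rfl
            simp only at hlt
            rw [hπ'v, hπ'x] at hlt
            exact absurd (Fin.lt_def.mp hlt) (by simp [hu0, hu1])
          have hcb : ¬((e.2 = x ∨ e.2 = v) ∧ (e.1 = x ∨ e.1 = v)) := by
            rintro ⟨hc2, hc1⟩
            have hlt12 := hEo e he
            rcases hc1 with h | h <;> rcases hc2 with h' | h'
            · exact (hEo e he).ne (h.trans h'.symm)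
            · have := hEo _ h1
              rw [h, h'] at hlt12
              exact absurd (hlt12.trans this) (lt_irrefl _)
            · exact hne (Prod.ext h h')
            · exact (hEo e he).ne (h.trans h'.symm)
          exact ⟨hne, he, (hcmp e.2 e.1 hcb).mp hlt⟩
        · intro ⟨hne, he, hlt⟩
          refine ⟨he, ?_⟩
          have hcb : ¬((e.2 = x ∨ e.2 = v) ∧ (e.1 = x ∨ e.1 = v)) := by
            rintro ⟨hc2, hc1⟩
            have hlt12 := hEo e he
            rcases hc1 with h | h <;> rcases hc2 with h' | h'
            · exact (hEo e he).ne (h.trans h'.symm)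
            · have := hEo _ h1
              rw [h, h'] at hlt12
              exact absurd (hlt12.trans this) (lt_irrefl _)
            · exact hne (Prod.ext h h')
            · exact (hEo e he).ne (h.trans h'.symm)
          exact (hcmp e.2 e.1 hcb).mpr hlt
      have hmemA : (v, x) ∈ E.filter (fun e => π e.2 < π e.1) := by
        rw [Finset.mem_filter]
        refine ⟨h1, ?_⟩
        simp only
        rw [hπx, hπv, Fin.lt_def]
        simp [hu0, hu1]
      rw [hA', Finset.card_erase_of_mem hmemA]
      have hpos : 1 ≤ (E.filter (fun e => π e.2 < π e.1)).card :=
        Finset.card_pos.mpr ⟨_, hmemA⟩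
      obtain ⟨k, hk⟩ := Nat.exists_eq_add_of_le hpos
      rw [hk]
      simp [pow_succ]
      ring
    · have hA' : E.filter (fun e => π' e.2 < π' e.1) =
          insert (x, v) (E.filter (fun e => π e.2 < π e.1)) := by
        ext e
        simp only [Finset.mem_filter, Finset.mem_insert]
        constructor
        · intro ⟨he, hlt⟩
          by_cases hne : e = (x, v)
          · exact Or.inl hne
          · refine Or.inr ⟨he, ?_⟩
            have hcb : ¬((e.2 = x ∨ e.2 = v) ∧ (e.1 = x ∨ e.1 = v)) := by
              rintro ⟨hc2, hc1⟩
              have hlt12 := hEo e he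
              rcases hc1 with h | h <;> rcases hc2 with h' | h'
              · exact (hEo e he).ne (h.trans h'.symm)
              · exact hne (Prod.ext h h')
              · have := hEo _ h2
                rw [h, h'] at hlt12
                exact absurd (hlt12.trans this) (lt_irrefl _)
              · exact (hEo e he).ne (h.trans h'.symm)
            exact (hcmp e.2 e.1 hcb).mp hlt
        · intro h
          rcases h with h | ⟨he, hlt⟩
          · subst h
            refine ⟨h2, ?_⟩
            simp only
            rw [hπ'x, hπ'v, Fin.lt_def]
            simp [hu0, hu1]
          · refine ⟨he, ?_⟩
            by_cases hne : e = (x, v)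
            · subst hne
              simp only at hlt
              rw [hπx, hπv] at hlt
              exact absurd (Fin.lt_def.mp hlt) (by simp [hu0, hu1])
            · have hcb : ¬((e.2 = x ∨ e.2 = v) ∧ (e.1 = x ∨ e.1 = v)) := by
                rintro ⟨hc2, hc1⟩
                have hlt12 := hEo e he
                rcases hc1 with h | h <;> rcases hc2 with h' | h'
                · exact (hEo e he).ne (h.trans h'.symm)
                · exact hne (Prod.ext h h')
                · have := hEo _ h2
                  rw [h, h'] at hlt12
                  exact absurd (hlt12.trans this) (lt_irrefl _)
                · exact (hEo e he).ne (h.trans h'.symm)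
              exact (hcmp e.2 e.1 hcb).mpr hlt
      have hnotmem : (x, v) ∉ E.filter (fun e => π e.2 < π e.1) := by
        rw [Finset.mem_filter]
        rintro ⟨-, hlt⟩
        simp only at hlt
        rw [hπx, hπv] at hlt
        exact absurd (Fin.lt_def.mp hlt) (by simp [hu0, hu1])
      rw [hA', Finset.card_insert_of_notMem hnotmem, pow_succ]
      ring

end TauAux

/-- let `T = (V, E)` be a tree on the well-ordered set `V = Fin n`, `n ≥ 2`
(edges are the pairs in `E`, oriented with `e.1 < e.2`).  For `x ∈ V` consider the
monomial `x^{n−1}`, i.e. the weights `w x = n − 2` and `w y = −1` for `y ≠ x`; an edge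
`e = (a, b)` is regular iff the component of `T ∖ e` containing `b` has negative total
weight, and `τ(x^{n−1})` is `(−1)^{#inversive edges}` times the number of permutations
`π` of `V` such that for every edge `e = (a, b)`, `π a < π b ↔ e` is regular.  Then
`Σ_{x ∈ V} τ(x^{n−1}) = 0`. -/
theorem sum_tau_vanishes (n : ℕ) (hn : 2 ≤ n)
    (E : Finset (Fin n × Fin n)) (hEo : ∀ e ∈ E, e.1 < e.2)
    (T : SimpleGraph (Fin n))
    (hadj : ∀ i j : Fin n, T.Adj i j ↔ (i, j) ∈ E ∨ (j, i) ∈ E)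
    (hT : T.IsTree) :
    ∑ x : Fin n,
      ((-1 : ℤ) ^ (E.filter fun e =>
          ¬ ∑ z ∈ Finset.univ.filter
              (fun z => (T.deleteEdges {s(e.1, e.2)}).Reachable e.2 z),
            (if z = x then (n : ℤ) - 2 else -1) < 0).card *
        ((Finset.univ.filter fun π : Equiv.Perm (Fin n) =>
          ∀ e ∈ E, (π e.1 < π e.2 ↔
            ∑ z ∈ Finset.univ.filter
                (fun z => (T.deleteEdges {s(e.1, e.2)}).Reachable e.2 z),
              (if z = x then (n : ℤ) - 2 else -1) < 0)).card : ℤ)) = 0 := by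
  have hAdjE : ∀ e ∈ E, T.Adj e.1 e.2 := fun e he => (hadj _ _).mpr (Or.inl he)
  have hG3 : ∀ x : Fin n, ∀ e ∈ E,
      ((∑ z ∈ Finset.univ.filter
          (fun z => (T.deleteEdges {s(e.1, e.2)}).Reachable e.2 z),
        (if z = x then (n:ℤ) - 2 else -1)) < 0) ↔
      ¬ (T.deleteEdges {s(e.1, e.2)}).Reachable e.2 x :=
    fun x e he => tau_sum_neg_iff hT (hAdjE e he) x
  -- Step 1 : rewrite each summand
  have key : ∀ x : Fin n,
      ((-1 : ℤ) ^ (E.filter fun e =>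
          ¬ ∑ z ∈ Finset.univ.filter
              (fun z => (T.deleteEdges {s(e.1, e.2)}).Reachable e.2 z),
            (if z = x then (n : ℤ) - 2 else -1) < 0).card *
        ((Finset.univ.filter fun π : Equiv.Perm (Fin n) =>
          ∀ e ∈ E, (π e.1 < π e.2 ↔
            ∑ z ∈ Finset.univ.filter
                (fun z => (T.deleteEdges {s(e.1, e.2)}).Reachable e.2 z),
              (if z = x then (n : ℤ) - 2 else -1) < 0)).card : ℤ))
      = ∑ π ∈ Finset.univ.filter (fun π : Equiv.Perm (Fin n) =>
          ∀ e ∈ E, (π e.1 < π e.2 ↔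
            ¬ (T.deleteEdges {s(e.1, e.2)}).Reachable e.2 x)),
          (-1 : ℤ) ^ (E.filter fun e => π e.2 < π e.1).card := by
    intro x
    have hf1 : (Finset.univ.filter fun π : Equiv.Perm (Fin n) =>
          ∀ e ∈ E, (π e.1 < π e.2 ↔
            ∑ z ∈ Finset.univ.filter
                (fun z => (T.deleteEdges {s(e.1, e.2)}).Reachable e.2 z),
              (if z = x then (n : ℤ) - 2 else -1) < 0))
        = Finset.univ.filter (fun π : Equiv.Perm (Fin n) =>
          ∀ e ∈ E, (π e.1 < π e.2 ↔
            ¬ (T.deleteEdges {s(e.1, e.2)}).Reachable e.2 x)) := by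
      apply Finset.filter_congr
      intro π _
      exact forall_congr' fun e => forall_congr' fun he =>
        iff_congr Iff.rfl (hG3 x e he)
    rw [hf1]
    have hterm : ∀ π ∈ Finset.univ.filter (fun π : Equiv.Perm (Fin n) =>
          ∀ e ∈ E, (π e.1 < π e.2 ↔
            ¬ (T.deleteEdges {s(e.1, e.2)}).Reachable e.2 x)),
        (-1 : ℤ) ^ (E.filter fun e => π e.2 < π e.1).card
        = (-1 : ℤ) ^ (E.filter fun e =>
          ¬ ∑ z ∈ Finset.univ.filter
              (fun z => (T.deleteEdges {s(e.1, e.2)}).Reachable e.2 z),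
            (if z = x then (n : ℤ) - 2 else -1) < 0).card := by
      intro π hπ
      rw [Finset.mem_filter] at hπ
      have hacc := hπ.2
      have hfe : (E.filter fun e => π e.2 < π e.1)
          = (E.filter fun e =>
            ¬ ∑ z ∈ Finset.univ.filter
                (fun z => (T.deleteEdges {s(e.1, e.2)}).Reachable e.2 z),
              (if z = x then (n : ℤ) - 2 else -1) < 0) := by
        apply Finset.filter_congr
        intro e he
        have h1 := hG3 x e he
        have h2 := hacc e he
        have hne : π e.1 ≠ π e.2 := fun hh => (hEo e he).ne (π.injective hh)
        constructor
        · intro hlt hs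
          have := h2.mpr (h1.mp hs)
          exact absurd (this.trans hlt) (lt_irrefl _)
        · intro hns
          have hr : ¬ (T.deleteEdges {s(e.1, e.2)}).Reachable e.2 x → False :=
            fun hc => hns (h1.mpr hc)
          have : ¬ (π e.1 < π e.2) := fun hc => hr (h2.mp hc)
          exact lt_of_le_of_ne (not_lt.mp this) (Ne.symm hne)
      rw [hfe]
    rw [Finset.sum_congr rfl hterm, Finset.sum_const, nsmul_eq_mul, mul_comm]
  rw [Finset.sum_congr rfl (fun x _ => key x)]
  -- Step 2 : exchange the two sums
  have hswap : ∑ x : Fin n, ∑ π ∈ Finset.univ.filter (fun π : Equiv.Perm (Fin n) =>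
          ∀ e ∈ E, (π e.1 < π e.2 ↔
            ¬ (T.deleteEdges {s(e.1, e.2)}).Reachable e.2 x)),
          (-1 : ℤ) ^ (E.filter fun e => π e.2 < π e.1).card
      = ∑ π : Equiv.Perm (Fin n),
          ((Finset.univ.filter (fun x : Fin n =>
            ∀ e ∈ E, (π e.1 < π e.2 ↔
              ¬ (T.deleteEdges {s(e.1, e.2)}).Reachable e.2 x))).card : ℤ) *
          (-1 : ℤ) ^ (E.filter fun e => π e.2 < π e.1).card := by
    simp only [Finset.sum_filter]
    rw [Finset.sum_comm]
    refine Finset.sum_congr rfl (fun π _ => ?_)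
    rw [← Finset.sum_filter, Finset.sum_const, nsmul_eq_mul]
  rw [hswap]
  -- Step 3 : sign-reversing involution
  refine Finset.sum_involution
    (fun π _ => Equiv.swap (⟨0, by omega⟩ : Fin n) ⟨1, by omega⟩ * π) ?_ ?_
    (fun π _ => Finset.mem_univ _) ?_
  · -- the paired terms cancel
    intro π _
    by_cases hX : (Finset.univ.filter (fun x : Fin n =>
        ∀ e ∈ E, (π e.1 < π e.2 ↔
          ¬ (T.deleteEdges {s(e.1, e.2)}).Reachable e.2 x))).Nonempty
    · obtain ⟨x, hx⟩ := hX
      rw [Finset.mem_filter] at hx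
      have hacc := hx.2
      obtain ⟨hacc', hsign⟩ := tau_pair_lemma hn hT hEo hadj hacc
      have hcard1 : (Finset.univ.filter (fun x : Fin n =>
          ∀ e ∈ E, (π e.1 < π e.2 ↔
            ¬ (T.deleteEdges {s(e.1, e.2)}).Reachable e.2 x))).card = 1 := by
        rw [Finset.card_eq_one]
        refine ⟨x, Finset.eq_singleton_iff_unique_mem.mpr ⟨Finset.mem_filter.mpr
          ⟨Finset.mem_univ _, hacc⟩, fun y hy => ?_⟩⟩
        rw [Finset.mem_filter] at hy
        exact tau_acc_unique hn hT hadj hy.2 hacc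
      have hcard2 : (Finset.univ.filter (fun x : Fin n =>
          ∀ e ∈ E, ((Equiv.swap (⟨0, by omega⟩ : Fin n) ⟨1, by omega⟩ * π) e.1 <
            (Equiv.swap (⟨0, by omega⟩ : Fin n) ⟨1, by omega⟩ * π) e.2 ↔
            ¬ (T.deleteEdges {s(e.1, e.2)}).Reachable e.2 x))).card = 1 := by
        rw [Finset.card_eq_one]
        refine ⟨π.symm ⟨1, by omega⟩, Finset.eq_singleton_iff_unique_mem.mpr
          ⟨Finset.mem_filter.mpr ⟨Finset.mem_univ _, hacc'⟩, fun y hy => ?_⟩⟩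
        rw [Finset.mem_filter] at hy
        exact tau_acc_unique hn hT hadj hy.2 hacc'
      rw [hcard1, hcard2, hsign]
      push_cast
      ring
    · have hc0 : (Finset.univ.filter (fun x : Fin n =>
          ∀ e ∈ E, (π e.1 < π e.2 ↔
            ¬ (T.deleteEdges {s(e.1, e.2)}).Reachable e.2 x))).card = 0 := by
        rw [Finset.card_eq_zero]
        exact Finset.not_nonempty_iff_eq_empty.mp hX
      have hc0' : (Finset.univ.filter (fun x : Fin n =>
          ∀ e ∈ E, ((Equiv.swap (⟨0, by omega⟩ : Fin n) ⟨1, by omega⟩ * π) e.1 <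
            (Equiv.swap (⟨0, by omega⟩ : Fin n) ⟨1, by omega⟩ * π) e.2 ↔
            ¬ (T.deleteEdges {s(e.1, e.2)}).Reachable e.2 x))).card = 0 := by
        rw [Finset.card_eq_zero]
        rw [Finset.eq_empty_iff_forall_notMem]
        intro y hy
        rw [Finset.mem_filter] at hy
        obtain ⟨hacc2, _⟩ := tau_pair_lemma hn hT hEo hadj hy.2
        have hsq : Equiv.swap (⟨0, by omega⟩ : Fin n) ⟨1, by omega⟩ *
            (Equiv.swap (⟨0, by omega⟩ : Fin n) ⟨1, by omega⟩ * π) = π := by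
          rw [← mul_assoc, Equiv.swap_mul_self, one_mul]
        rw [hsq] at hacc2
        exact hX ⟨_, Finset.mem_filter.mpr ⟨Finset.mem_univ _, hacc2⟩⟩
      rw [hc0, hc0']
      simp
  · -- nontriviality
    intro π _ hne heq
    have heq' : Equiv.swap (⟨0, by omega⟩ : Fin n) ⟨1, by omega⟩ * π = π := heq
    have h2 := congrArg (fun f : Equiv.Perm (Fin n) => f (π.symm (⟨0, by omega⟩ : Fin n))) heq'
    simp only [Equiv.Perm.mul_apply, Equiv.apply_symm_apply, Equiv.swap_apply_left] at h2
    exact absurd (Fin.ext_iff.mp h2) (by simp)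
  · -- involutive
    intro π _
    show Equiv.swap (⟨0, by omega⟩ : Fin n) ⟨1, by omega⟩ *
        (Equiv.swap (⟨0, by omega⟩ : Fin n) ⟨1, by omega⟩ * π) = π
    rw [← mul_assoc, Equiv.swap_mul_self, one_mul]
end

section
/- (Lemma 2) Let G be the path on the ordered variable set V = {x_0, x_1, ..., x_n} with edge set E = {(x_i, x_{i+1}) : 0 ≤ i ≤ n−1}, and let Φ = DS_G. Then for each i with 0 ≤ i ≤ n, Φ(x_i^n) = (−1)^i · binom(n, i). -/
open MvPolynomial

/-- The edge set of the path `x_0 — x_1 — ⋯ — x_n`: the pairs `(x_i, x_{i+1})`,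
`0 ≤ i ≤ n−1`. -/
def pathEdges (n : ℕ) : Finset (Fin (n + 1) × Fin (n + 1)) :=
  Finset.univ.image fun i : Fin n => (i.castSucc, i.succ)

/-- `pathY n K k = y_k = x_0 + x_1 + ⋯ + x_k`. -/
noncomputable def pathY (n : ℕ) (K : Type*) [Field K] (k : Fin (n + 1)) :
    MvPolynomial (Fin (n + 1)) K :=
  ∑ j ∈ Finset.Iic k, X j
section AuxDividedSym

open Finset Equiv

variable {L : Type*} [Field L]
noncomputable def cden {m : ℕ} (s : Fin (m+1) → L) : L := ∏ j : Fin m, (s j.castSucc - s j.succ)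

lemma cden_cons {m : ℕ} (t : L) (w : Fin (m+1) → L) :
    cden (Fin.cons t w) = (t - w 0) * cden w := by
  rw [cden, cden, Fin.prod_univ_succ]
  refine congrArg₂ (· * ·) (by simp) (Finset.prod_congr rfl fun j _ => ?_)
  rw [← Fin.succ_castSucc]
  simp [Fin.cons_succ]

lemma cden_zero (s : Fin 1 → L) : cden s = 1 := by simp [cden]

lemma lagrange_inv_sum {ι : Type*} [DecidableEq ι] (s : Finset ι) (hs : s.Nonempty) (v : ι → L)
    (hvs : Set.InjOn v s) (t : L) (ht : ∀ a ∈ s, t ≠ v a) :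
    ∑ p ∈ s, ((t - v p) * ∏ b ∈ s.erase p, (v p - v b))⁻¹ = (∏ b ∈ s, (t - v b))⁻¹ := by
  have key := congrArg (Polynomial.eval t) (Lagrange.sum_basis hvs hs)
  rw [Polynomial.eval_finset_sum, Polynomial.eval_one] at key
  calc ∑ p ∈ s, ((t - v p) * ∏ b ∈ s.erase p, (v p - v b))⁻¹
      = ∑ p ∈ s, Polynomial.eval t (Lagrange.basis s v p) * (∏ b ∈ s, (t - v b))⁻¹ := by
        refine Finset.sum_congr rfl fun p hp => ?_
        have hev : Polynomial.eval t (Lagrange.basis s v p)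
            = (∏ b ∈ s.erase p, (v p - v b))⁻¹ * ∏ b ∈ s.erase p, (t - v b) := by
          rw [Lagrange.basis, Polynomial.eval_prod, ← Finset.prod_inv_distrib,
            ← Finset.prod_mul_distrib]
          exact Finset.prod_congr rfl fun b _ => by simp [Lagrange.basisDivisor]
        rw [hev, ← Finset.mul_prod_erase s (fun b => t - v b) hp]
        have h1 : t - v p ≠ 0 := sub_ne_zero.2 (ht p hp)
        have h2 : ∏ b ∈ s.erase p, (t - v b) ≠ 0 :=
          Finset.prod_ne_zero_iff.2 fun b hb => sub_ne_zero.2 (ht b (Finset.mem_of_mem_erase hb))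
        have h3 : ∏ b ∈ s.erase p, (v p - v b) ≠ 0 :=
          Finset.prod_ne_zero_iff.2 fun b hb => sub_ne_zero.2
            (fun h => (Finset.mem_erase.1 hb).1 (hvs (Finset.mem_of_mem_erase hb) hp h.symm))
        field_simp
      _ = (∏ b ∈ s, (t - v b))⁻¹ := by rw [← Finset.sum_mul, key, one_mul]

lemma lagrange_pow_sum {m : ℕ} (z : Fin (m+1) → L) (hz : Function.Injective z) :
    ∑ p : Fin (m+1), (z p)^m * (∏ b ∈ Finset.univ.erase p, (z p - z b))⁻¹ = 1 := by
  have hvs : Set.InjOn z (Finset.univ : Finset (Fin (m+1))) := hz.injOn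
  have hdeg : (Polynomial.X ^ m : Polynomial L).degree < (Finset.univ : Finset (Fin (m+1))).card := by
    simp [Polynomial.degree_X_pow]
    exact_mod_cast Nat.lt_succ_self m
  have key := congrArg (fun q => Polynomial.coeff q m) (Lagrange.eq_interpolate hvs hdeg)
  simp only [Lagrange.interpolate_apply, Polynomial.finset_sum_coeff, Polynomial.coeff_X_pow,
    if_pos rfl, Polynomial.coeff_C_mul, if_true, Polynomial.eval_pow, Polynomial.eval_X] at key
  have lc : ∀ p : Fin (m+1), (Lagrange.basis Finset.univ z p).coeff m
      = (∏ b ∈ Finset.univ.erase p, (z p - z b))⁻¹ := by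
    intro p
    have hnd : (Lagrange.basis Finset.univ z p).natDegree = m := by
      rw [Lagrange.natDegree_basis hvs (Finset.mem_univ p)]
      simp
    have hl : (Lagrange.basis Finset.univ z p).coeff m
        = (Lagrange.basis Finset.univ z p).leadingCoeff := by
      rw [Polynomial.leadingCoeff, hnd]
    rw [hl, Lagrange.basis, Polynomial.leadingCoeff_prod, ← Finset.prod_inv_distrib]
    refine Finset.prod_congr rfl fun b hb => ?_
    rw [Lagrange.basisDivisor, Polynomial.leadingCoeff_mul, Polynomial.leadingCoeff_C,
      (Polynomial.monic_X_sub_C (z b)).leadingCoeff, mul_one]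
  simp only [lc] at key
  exact key.symm

/-- decomposition of a permutation of `Fin (m+1)` by its value at `q`. -/
def decompAt {m : ℕ} (q : Fin (m+1)) (pt : Fin (m+1) × Equiv.Perm (Fin m)) :
    Equiv.Perm (Fin (m+1)) :=
  (finSuccEquiv' q).trans ((pt.2.optionCongr).trans (finSuccEquiv' pt.1).symm)

lemma decompAt_self {m : ℕ} (q p : Fin (m+1)) (τ : Equiv.Perm (Fin m)) :
    decompAt q (p, τ) q = p := by
  simp [decompAt, finSuccEquiv'_at, finSuccEquiv'_symm_none]

lemma decompAt_succAbove {m : ℕ} (q p : Fin (m+1)) (τ : Equiv.Perm (Fin m)) (a : Fin m) :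
    decompAt q (p, τ) (q.succAbove a) = p.succAbove (τ a) := by
  simp [decompAt, finSuccEquiv'_succAbove, finSuccEquiv'_symm_some]

lemma decompAt_bijective {m : ℕ} (q : Fin (m+1)) : Function.Bijective (decompAt q) := by
  rw [Fintype.bijective_iff_injective_and_card]
  constructor
  · rintro ⟨p, τ⟩ ⟨p', τ'⟩ h
    have hp : p = p' := by
      rw [← decompAt_self q p τ, ← decompAt_self q p' τ', h]
    subst hp
    refine Prod.ext rfl (Equiv.ext fun a => ?_)
    have h2 : decompAt q (p, τ) (q.succAbove a) = decompAt q (p, τ') (q.succAbove a) := by rw [h]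
    rw [decompAt_succAbove, decompAt_succAbove] at h2
    exact Fin.succAbove_right_injective h2
  · simp [Fintype.card_perm, Nat.factorial_succ]

lemma comp_decompAt_zero {m : ℕ} (z : Fin (m+1) → L) (p : Fin (m+1)) (τ : Equiv.Perm (Fin m)) :
    z ∘ (decompAt 0 (p, τ)) = Fin.cons (z p) ((z ∘ Fin.succAbove p) ∘ τ) := by
  funext k
  induction k using Fin.cases with
  | zero => simp [decompAt_self]
  | succ a =>
    simp only [Function.comp_apply, Fin.cons_succ]
    conv_lhs => rw [← Fin.zero_succAbove a]
    rw [decompAt_succAbove]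

lemma erase_eq_image_succAbove {m : ℕ} (p : Fin (m+1)) :
    (Finset.univ : Finset (Fin (m+1))).erase p = Finset.univ.image p.succAbove := by
  ext b
  simp only [Finset.mem_erase, Finset.mem_univ, and_true, Finset.mem_image, true_and]
  constructor
  · intro hb
    exact Fin.exists_succAbove_eq hb
  · rintro ⟨a, rfl⟩
    exact p.succAbove_ne a

lemma chain_sum : ∀ (m : ℕ) (z : Fin m → L), Function.Injective z → ∀ (t : L), (∀ j, t ≠ z j) →
    ∑ σ : Equiv.Perm (Fin m), (cden (Fin.cons t (z ∘ σ)))⁻¹ = (∏ j, (t - z j))⁻¹ := by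
  intro m
  induction m with
  | zero =>
    intro z hz t ht
    simp [cden]
  | succ m ih =>
    intro z hz t ht
    rw [← (decompAt_bijective (0 : Fin (m+1))).sum_comp
      (fun σ => (cden (Fin.cons t (z ∘ σ)))⁻¹)]
    rw [Fintype.sum_prod_type]
    have hstep : ∀ (p : Fin (m+1)) (τ : Equiv.Perm (Fin m)),
        (cden (Fin.cons t (z ∘ decompAt 0 (p, τ))))⁻¹
          = (t - z p)⁻¹ * (cden (Fin.cons (z p) ((z ∘ Fin.succAbove p) ∘ τ)))⁻¹ := by
      intro p τ
      rw [comp_decompAt_zero, cden_cons, mul_inv]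
      simp
    simp only [hstep]
    have inner : ∀ p : Fin (m+1),
        ∑ τ : Equiv.Perm (Fin m), (cden (Fin.cons (z p) ((z ∘ Fin.succAbove p) ∘ τ)))⁻¹
          = (∏ j : Fin m, (z p - z (p.succAbove j)))⁻¹ := by
      intro p
      exact ih (z ∘ Fin.succAbove p) (hz.comp Fin.succAbove_right_injective) (z p)
        (fun j h => p.succAbove_ne j (hz h).symm)
    calc ∑ p : Fin (m+1), ∑ τ : Equiv.Perm (Fin m),
            (t - z p)⁻¹ * (cden (Fin.cons (z p) ((z ∘ Fin.succAbove p) ∘ τ)))⁻¹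
        = ∑ p : Fin (m+1), (t - z p)⁻¹ * (∏ j : Fin m, (z p - z (p.succAbove j)))⁻¹ := by
          refine Finset.sum_congr rfl fun p _ => ?_
          rw [← Finset.mul_sum, inner p]
      _ = ∑ p : Fin (m+1), ((t - z p) * ∏ b ∈ Finset.univ.erase p, (z p - z b))⁻¹ := by
          refine Finset.sum_congr rfl fun p _ => ?_
          rw [mul_inv, erase_eq_image_succAbove,
            Finset.prod_image (fun a _ b _ h => Fin.succAbove_right_injective h)]
      _ = (∏ b, (t - z b))⁻¹ :=
          lagrange_inv_sum Finset.univ Finset.univ_nonempty z hz.injOn t (fun a _ => ht a)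

set_option maxHeartbeats 1000000 in
lemma two_chain : ∀ (k : ℕ) (l m : ℕ) (e : Fin k ⊕ Fin l ≃ Fin m) (z : Fin m → L),
    Function.Injective z → ∀ (t₁ t₂ : L), (∀ j, t₁ ≠ z j) → (∀ j, t₂ ≠ z j) →
    ∑ τ : Equiv.Perm (Fin m),
      (cden (Fin.cons t₁ (fun a => z (τ (e (Sum.inl a))))))⁻¹ *
        (cden (Fin.cons t₂ (fun b => z (τ (e (Sum.inr b))))))⁻¹
      = ∑ A ∈ Finset.univ.powersetCard k,
          (∏ a ∈ A, (t₁ - z a))⁻¹ * (∏ b ∈ Aᶜ, (t₂ - z b))⁻¹ := by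
  intro k
  induction k with
  | zero =>
    intro l m e z hz t₁ t₂ h1 h2
    have hc0 : ∀ τ : Equiv.Perm (Fin m),
        (cden (Fin.cons t₁ (fun a : Fin 0 => z (τ (e (Sum.inl a))))))⁻¹ = 1 := by
      intro τ; simp [cden]
    simp only [hc0, one_mul]
    set c : Fin l ≃ Fin m := (Equiv.emptySum (Fin 0) (Fin l)).symm.trans e with hc
    rw [← Equiv.sum_comp (Equiv.permCongr c) (fun τ : Equiv.Perm (Fin m) =>
      (cden (Fin.cons t₂ (fun b => z (τ (e (Sum.inr b))))))⁻¹)]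
    have hterm : ∀ σ : Equiv.Perm (Fin l),
        (cden (Fin.cons t₂ (fun b => z ((Equiv.permCongr c σ) (e (Sum.inr b))))))⁻¹
          = (cden (Fin.cons t₂ ((z ∘ c) ∘ σ)))⁻¹ := by
      intro σ
      have hf : (fun b : Fin l => z ((Equiv.permCongr c σ) (e (Sum.inr b)))) = (z ∘ c) ∘ σ := by
        funext b
        have hb : e (Sum.inr b) = c b := by simp [hc, Equiv.emptySum]
        rw [hb]
        simp [Equiv.permCongr_apply]
      rw [hf]
    simp only [hterm]
    rw [chain_sum l (z ∘ c) (hz.comp c.injective) t₂ (fun j => h2 (c j))]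
    rw [Finset.powersetCard_zero, Finset.sum_singleton]
    simp only [Finset.prod_empty, inv_one, one_mul, Finset.compl_empty]
    rw [← Equiv.prod_comp c (fun j => (t₂ - z j))]
    rfl
  | succ k ih =>
    intro l m e z hz t₁ t₂ h1 h2
    cases m with
    | zero => exact (e (Sum.inl 0)).elim0
    | succ m =>
      set q := e (Sum.inl 0) with hq
      have hsh : ∀ s : Fin k ⊕ Fin l, e (Sum.map Fin.succ id s) ≠ q := by
        intro s h
        have h3 := e.injective h
        cases s with
        | inl j => exact Fin.succ_ne_zero j (by simpa using h3)
        | inr b => simp at h3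
      choose g hg using fun s => Fin.exists_succAbove_eq (hsh s)
      have hginj : Function.Injective g := by
        intro s s' hss
        have h4 : e (Sum.map Fin.succ id s) = e (Sum.map Fin.succ id s') := by
          rw [← hg, ← hg, hss]
        exact (Fin.succ_injective _).sumMap Function.injective_id (e.injective h4)
      have hcard : Fintype.card (Fin k ⊕ Fin l) = Fintype.card (Fin m) := by
        have h5 := Fintype.card_congr e
        simp only [Fintype.card_sum, Fintype.card_fin] at h5 ⊢
        omega
      set e' : Fin k ⊕ Fin l ≃ Fin m :=
        Equiv.ofBijective g ((Fintype.bijective_iff_injective_and_card g).2 ⟨hginj, hcard⟩)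
        with he'def
      have he' : ∀ s, q.succAbove (e' s) = e (Sum.map Fin.succ id s) := hg
      rw [← (decompAt_bijective q).sum_comp (fun τ : Equiv.Perm (Fin (m+1)) =>
        (cden (Fin.cons t₁ (fun a => z (τ (e (Sum.inl a))))))⁻¹ *
          (cden (Fin.cons t₂ (fun b => z (τ (e (Sum.inr b))))))⁻¹)]
      rw [Fintype.sum_prod_type]
      have hterm : ∀ (p : Fin (m+1)) (ρ : Equiv.Perm (Fin m)),
          (cden (Fin.cons t₁ (fun a => z (decompAt q (p, ρ) (e (Sum.inl a))))))⁻¹ *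
            (cden (Fin.cons t₂ (fun b => z (decompAt q (p, ρ) (e (Sum.inr b))))))⁻¹
          = (t₁ - z p)⁻¹ *
            ((cden (Fin.cons (z p)
                (fun j => (z ∘ p.succAbove) (ρ (e' (Sum.inl j))))))⁻¹ *
              (cden (Fin.cons t₂
                (fun b => (z ∘ p.succAbove) (ρ (e' (Sum.inr b))))))⁻¹) := by
        intro p ρ
        have hleft : (fun a => z (decompAt q (p, ρ) (e (Sum.inl a))))
            = Fin.cons (z p) (fun j => (z ∘ p.succAbove) (ρ (e' (Sum.inl j)))) := by
          funext a
          induction a using Fin.cases with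
          | zero =>
            rw [Fin.cons_zero, ← hq, decompAt_self]
          | succ j =>
            rw [Fin.cons_succ]
            have h6 : e (Sum.inl j.succ) = q.succAbove (e' (Sum.inl j)) := by
              rw [he' (Sum.inl j)]; rfl
            rw [h6, decompAt_succAbove]
            rfl
        have hright : (fun b => z (decompAt q (p, ρ) (e (Sum.inr b))))
            = (fun b => (z ∘ p.succAbove) (ρ (e' (Sum.inr b)))) := by
          funext b
          have h7 : e (Sum.inr b) = q.succAbove (e' (Sum.inr b)) := by
            rw [he' (Sum.inr b)]; rfl
          rw [h7, decompAt_succAbove]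
          rfl
        rw [hleft, hright, cden_cons, Fin.cons_zero, mul_inv, mul_assoc]
      simp only [hterm]
      have hw : ∀ p : Fin (m+1), Function.Injective (z ∘ p.succAbove) :=
        fun p => hz.comp Fin.succAbove_right_injective
      have hinner : ∀ p : Fin (m+1),
          ∑ ρ : Equiv.Perm (Fin m),
            (cden (Fin.cons (z p) (fun j => (z ∘ p.succAbove) (ρ (e' (Sum.inl j))))))⁻¹ *
              (cden (Fin.cons t₂ (fun b => (z ∘ p.succAbove) (ρ (e' (Sum.inr b))))))⁻¹
          = ∑ B ∈ Finset.univ.powersetCard k,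
              (∏ a ∈ B, (z p - (z ∘ p.succAbove) a))⁻¹ *
                (∏ b ∈ Bᶜ, (t₂ - (z ∘ p.succAbove) b))⁻¹ := by
        intro p
        exact ih l m e' (z ∘ p.succAbove) (hw p) (z p) t₂
          (fun j h => p.succAbove_ne j (hz h).symm)
          (fun j => h2 (p.succAbove j))
      have hfold : ∀ p : Fin (m+1),
          ∑ ρ : Equiv.Perm (Fin m), (t₁ - z p)⁻¹ *
            ((cden (Fin.cons (z p) (fun j => (z ∘ p.succAbove) (ρ (e' (Sum.inl j))))))⁻¹ *
              (cden (Fin.cons t₂ (fun b => (z ∘ p.succAbove) (ρ (e' (Sum.inr b))))))⁻¹)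
          = (t₁ - z p)⁻¹ * ∑ B ∈ Finset.univ.powersetCard k,
              (∏ a ∈ B, (z p - (z ∘ p.succAbove) a))⁻¹ *
                (∏ b ∈ Bᶜ, (t₂ - (z ∘ p.succAbove) b))⁻¹ := by
        intro p
        rw [← Finset.mul_sum, hinner p]
      simp only [hfold]
      clear hterm hfold hinner he' hg hsh
      simp only [Function.comp_apply]
      have hsAinj : ∀ p : Fin (m+1), Function.Injective p.succAbove :=
        fun p => Fin.succAbove_right_injective
      have hcompl : ∀ (p : Fin (m+1)) (B : Finset (Fin m)),
          (insert p (B.image p.succAbove))ᶜ = Bᶜ.image p.succAbove := by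
        intro p B
        ext x
        simp only [Finset.mem_compl, Finset.mem_insert, Finset.mem_image, not_or]
        constructor
        · rintro ⟨hxp, hxB⟩
          obtain ⟨y, hy⟩ := Fin.exists_succAbove_eq hxp
          exact ⟨y, fun hyB => hxB ⟨y, hyB, hy⟩, hy⟩
        · rintro ⟨y, hyB, rfl⟩
          refine ⟨p.succAbove_ne y, ?_⟩
          rintro ⟨y', hy', hyy⟩
          exact hyB (hsAinj p hyy ▸ hy')
      calc ∑ p : Fin (m+1), (t₁ - z p)⁻¹ *
              ∑ B ∈ Finset.univ.powersetCard k,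
                (∏ a ∈ B, (z p - z (p.succAbove a)))⁻¹ * (∏ b ∈ Bᶜ, (t₂ - z (p.succAbove b)))⁻¹
          = ∑ x ∈ (Finset.univ : Finset (Fin (m+1))).sigma
                (fun _ => (Finset.univ : Finset (Fin m)).powersetCard k),
              (t₁ - z x.1)⁻¹ *
                ((∏ a ∈ x.2.image x.1.succAbove, (z x.1 - z a))⁻¹ *
                  (∏ b ∈ (insert x.1 (x.2.image x.1.succAbove))ᶜ, (t₂ - z b))⁻¹) := by
            rw [Finset.sum_sigma]
            refine Finset.sum_congr rfl fun p _ => ?_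
            rw [Finset.mul_sum]
            refine Finset.sum_congr rfl fun B _ => ?_
            rw [Finset.prod_image (fun a _ b _ h => hsAinj p h), hcompl p B,
              Finset.prod_image (fun a _ b _ h => hsAinj p h)]
        _ = ∑ y ∈ ((Finset.univ : Finset (Fin (m+1))).powersetCard (k+1)).sigma (fun A => A),
              ((t₁ - z y.2) * ∏ a ∈ y.1.erase y.2, (z y.2 - z a))⁻¹ *
                (∏ b ∈ y.1ᶜ, (t₂ - z b))⁻¹ := by
            refine Finset.sum_nbij'
              (fun x => ⟨insert x.1 (x.2.image x.1.succAbove), x.1⟩)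
              (fun y => ⟨y.2, (y.1.erase y.2).preimage y.2.succAbove ((hsAinj y.2).injOn)⟩)
              ?_ ?_ ?_ ?_ ?_
            · rintro ⟨p, B⟩ hx
              simp only [Finset.mem_sigma, Finset.mem_univ, true_and,
                Finset.mem_powersetCard_univ] at hx ⊢
              refine ⟨?_, Finset.mem_insert_self p _⟩
              rw [Finset.card_insert_of_notMem, Finset.card_image_of_injective _ (hsAinj p), hx]
              intro hmem
              obtain ⟨y, _, hy⟩ := Finset.mem_image.1 hmem
              exact p.succAbove_ne y hy
            · rintro ⟨A, p⟩ hy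
              simp only [Finset.mem_sigma, Finset.mem_univ, true_and,
                Finset.mem_powersetCard_univ] at hy ⊢
              obtain ⟨hA, hp⟩ := hy
              have himg : ((A.erase p).preimage p.succAbove ((hsAinj p).injOn)).image p.succAbove
                  = A.erase p := by
                ext x
                simp only [Finset.mem_image, Finset.mem_preimage]
                constructor
                · rintro ⟨y, hy', rfl⟩; exact hy'
                · intro hx
                  obtain ⟨y, hy'⟩ := Fin.exists_succAbove_eq (Finset.mem_erase.1 hx).1
                  exact ⟨y, hy' ▸ hx, hy'⟩
              have : (((A.erase p).preimage p.succAbove ((hsAinj p).injOn)).image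
                  p.succAbove).card = k := by
                rw [himg, Finset.card_erase_of_mem hp, hA]
                omega
              rw [Finset.card_image_of_injective _ (hsAinj p)] at this
              exact this
            · rintro ⟨p, B⟩ hx
              simp only
              congr 1
              have hpB : p ∉ B.image p.succAbove := by
                intro hmem
                obtain ⟨y, _, hy⟩ := Finset.mem_image.1 hmem
                exact p.succAbove_ne y hy
              rw [Finset.erase_insert hpB]
              ext b
              simp [Finset.mem_preimage, Finset.mem_image, (hsAinj p).eq_iff]
            · rintro ⟨A, p⟩ hy
              simp only [Finset.mem_sigma, Finset.mem_powersetCard_univ] at hy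
              simp only
              congr 1
              have himg : ((A.erase p).preimage p.succAbove ((hsAinj p).injOn)).image p.succAbove
                  = A.erase p := by
                ext x
                simp only [Finset.mem_image, Finset.mem_preimage]
                constructor
                · rintro ⟨y, hy', rfl⟩; exact hy'
                · intro hx
                  obtain ⟨y, hy'⟩ := Fin.exists_succAbove_eq (Finset.mem_erase.1 hx).1
                  exact ⟨y, hy' ▸ hx, hy'⟩
              rw [himg, Finset.insert_erase hy.2]
            · rintro ⟨p, B⟩ hx
              simp only
              have hpB : p ∉ B.image p.succAbove := by
                intro hmem
                obtain ⟨y, _, hy⟩ := Finset.mem_image.1 hmem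
                exact p.succAbove_ne y hy
              rw [Finset.erase_insert hpB, mul_inv, mul_assoc]
        _ = ∑ A ∈ (Finset.univ : Finset (Fin (m+1))).powersetCard (k+1),
              ∑ p ∈ A, ((t₁ - z p) * ∏ a ∈ A.erase p, (z p - z a))⁻¹ *
                (∏ b ∈ Aᶜ, (t₂ - z b))⁻¹ := by
            rw [Finset.sum_sigma]
        _ = ∑ A ∈ Finset.univ.powersetCard (k+1),
              (∏ a ∈ A, (t₁ - z a))⁻¹ * (∏ b ∈ Aᶜ, (t₂ - z b))⁻¹ := by
            refine Finset.sum_congr rfl fun A hA => ?_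
            rw [← Finset.sum_mul]
            congr 1
            have hAcard : A.card = k + 1 := Finset.mem_powersetCard_univ.1 hA
            have hAne : A.Nonempty := Finset.card_pos.1 (by omega)
            exact lagrange_inv_sum A hAne z hz.injOn t₁ (fun a _ => h1 a)

set_option maxHeartbeats 1000000 in
lemma cden_split {n : ℕ} (s : Fin (n+1) → L) (i : Fin (n+1)) :
    cden s = (-1)^(i:ℕ) *
      ((cden (Fin.cons (s i) (fun a : Fin (i:ℕ) =>
          s ⟨(i:ℕ) - 1 - (a:ℕ), by have := a.isLt; have := i.isLt; omega⟩))) *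
        (cden (Fin.cons (s i) (fun b : Fin (n-(i:ℕ)) =>
          s ⟨(i:ℕ) + 1 + (b:ℕ), by have := b.isLt; have := i.isLt; omega⟩)))) := by
  have hin : (i:ℕ) ≤ n := Fin.is_le i
  set gpos : Fin (i:ℕ) ⊕ Fin (n-(i:ℕ)) → Fin n :=
    Sum.elim (fun a => ⟨(i:ℕ) - 1 - (a:ℕ), by have := a.isLt; omega⟩)
      (fun b => ⟨(i:ℕ) + (b:ℕ), by have := b.isLt; omega⟩) with hgpos
  have hbij : Function.Bijective gpos := by
    rw [Fintype.bijective_iff_injective_and_card]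
    constructor
    · rintro (a | a) (b | b) h <;>
        simp only [hgpos, Sum.elim_inl, Sum.elim_inr, Fin.mk.injEq] at h
      · have := a.isLt; have := b.isLt
        exact congrArg Sum.inl (Fin.ext (by omega))
      · have := a.isLt; have := b.isLt; omega
      · have := a.isLt; have := b.isLt; omega
      · exact congrArg Sum.inr (Fin.ext (by omega))
    · simp only [Fintype.card_sum, Fintype.card_fin]
      omega
  have hconsL : Fin.cons (s i) (fun a : Fin (i:ℕ) =>
      s ⟨(i:ℕ) - 1 - (a:ℕ), by have := a.isLt; have := i.isLt; omega⟩)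
      = (fun k : Fin ((i:ℕ)+1) => s ⟨(i:ℕ) - (k:ℕ), by have := i.isLt; omega⟩) := by
    funext k
    induction k using Fin.cases with
    | zero =>
      rw [Fin.cons_zero]
      apply congrArg
      apply Fin.ext
      simp
    | succ j =>
      rw [Fin.cons_succ]
      apply congrArg
      apply Fin.ext
      have := j.isLt
      simp
      omega
  have hconsR : Fin.cons (s i) (fun b : Fin (n-(i:ℕ)) =>
      s ⟨(i:ℕ) + 1 + (b:ℕ), by have := b.isLt; have := i.isLt; omega⟩)
      = (fun k : Fin (n-(i:ℕ)+1) => s ⟨(i:ℕ) + (k:ℕ), by have := k.isLt; omega⟩) := by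
    funext k
    induction k using Fin.cases with
    | zero =>
      rw [Fin.cons_zero]
      apply congrArg
      apply Fin.ext
      simp
    | succ j =>
      rw [Fin.cons_succ]
      apply congrArg
      apply Fin.ext
      simp
      omega
  rw [hconsL, hconsR, cden,
    ← hbij.prod_comp (fun j => s j.castSucc - s j.succ), Fintype.prod_sum_type]
  have hL : (∏ a : Fin (i:ℕ), (s (gpos (Sum.inl a)).castSucc - s (gpos (Sum.inl a)).succ))
      = (-1)^(i:ℕ) * cden (fun k : Fin ((i:ℕ)+1) =>
          s ⟨(i:ℕ) - (k:ℕ), by have := i.isLt; omega⟩) := by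
    rw [cden]
    calc ∏ a : Fin (i:ℕ), (s (gpos (Sum.inl a)).castSucc - s (gpos (Sum.inl a)).succ)
        = ∏ a : Fin (i:ℕ), (-1 : L) *
            (s ⟨(i:ℕ) - ((Fin.castSucc a : Fin ((i:ℕ)+1)):ℕ), by have := i.isLt; omega⟩ -
              s ⟨(i:ℕ) - ((Fin.succ a : Fin ((i:ℕ)+1)):ℕ), by have := i.isLt; omega⟩) := by
          refine Finset.prod_congr rfl fun a _ => ?_
          rw [neg_one_mul, neg_sub]
          have ha := a.isLt
          congr 1
          · apply congrArg
            apply Fin.ext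
            simp [hgpos]
            omega
          · apply congrArg
            apply Fin.ext
            simp [hgpos]
            omega
      _ = (-1)^(i:ℕ) * ∏ a : Fin (i:ℕ),
            (s ⟨(i:ℕ) - ((Fin.castSucc a : Fin ((i:ℕ)+1)):ℕ), by have := i.isLt; omega⟩ -
              s ⟨(i:ℕ) - ((Fin.succ a : Fin ((i:ℕ)+1)):ℕ), by have := i.isLt; omega⟩) := by
          rw [Finset.prod_mul_distrib, Finset.prod_const, Finset.card_univ, Fintype.card_fin]
  have hR : (∏ b : Fin (n-(i:ℕ)), (s (gpos (Sum.inr b)).castSucc - s (gpos (Sum.inr b)).succ))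
      = cden (fun k : Fin (n-(i:ℕ)+1) => s ⟨(i:ℕ) + (k:ℕ), by have := k.isLt; omega⟩) := by
    rw [cden]
    refine Finset.prod_congr rfl fun b _ => ?_
    have hb := b.isLt
    congr 1 <;> (try (apply congrArg; apply Fin.ext; simp [hgpos])) <;> (try omega)
  rw [hL, hR]
  ring

set_option maxHeartbeats 1600000 in
lemma main_abstract {n : ℕ} (z : Fin (n+1) → L) (hz : Function.Injective z) (i : Fin (n+1)) :
    ∑ σ : Equiv.Perm (Fin (n+1)), (z (σ i))^n * (cden (z ∘ σ))⁻¹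
      = (-1)^(i:ℕ) * (n.choose (i:ℕ) : L) := by
  have hin : (i:ℕ) ≤ n := Fin.is_le i
  set gpos : Fin (i:ℕ) ⊕ Fin (n-(i:ℕ)) → Fin n :=
    Sum.elim (fun a => ⟨(i:ℕ) - 1 - (a:ℕ), by have := a.isLt; omega⟩)
      (fun b => ⟨(i:ℕ) + (b:ℕ), by have := b.isLt; omega⟩) with hgpos
  have hbij : Function.Bijective gpos := by
    rw [Fintype.bijective_iff_injective_and_card]
    constructor
    · rintro (a | a) (b | b) h <;>
        simp only [hgpos, Sum.elim_inl, Sum.elim_inr, Fin.mk.injEq] at h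
      · have := a.isLt; have := b.isLt
        exact congrArg Sum.inl (Fin.ext (by omega))
      · have := a.isLt; have := b.isLt; omega
      · have := a.isLt; have := b.isLt; omega
      · exact congrArg Sum.inr (Fin.ext (by omega))
    · simp only [Fintype.card_sum, Fintype.card_fin]
      omega
  set esp : Fin (i:ℕ) ⊕ Fin (n-(i:ℕ)) ≃ Fin n := Equiv.ofBijective gpos hbij with hesp
  have hespL : ∀ a : Fin (i:ℕ), (esp (Sum.inl a) : Fin n)
      = ⟨(i:ℕ) - 1 - (a:ℕ), by have := a.isLt; omega⟩ := fun a => rfl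
  have hespR : ∀ b : Fin (n-(i:ℕ)), (esp (Sum.inr b) : Fin n)
      = ⟨(i:ℕ) + (b:ℕ), by have := b.isLt; omega⟩ := fun b => rfl
  have hsAL : ∀ a : Fin (i:ℕ), i.succAbove (esp (Sum.inl a))
      = ⟨(i:ℕ) - 1 - (a:ℕ), by have := a.isLt; have := i.isLt; omega⟩ := by
    intro a
    have ha := a.isLt
    rw [hespL a, Fin.succAbove_of_castSucc_lt]
    · apply Fin.ext; simp
    · rw [Fin.lt_def]; simp; omega
  have hsAR : ∀ b : Fin (n-(i:ℕ)), i.succAbove (esp (Sum.inr b))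
      = ⟨(i:ℕ) + 1 + (b:ℕ), by have := b.isLt; have := i.isLt; omega⟩ := by
    intro b
    have hb := b.isLt
    rw [hespR b, Fin.succAbove_of_le_castSucc]
    · apply Fin.ext; simp; omega
    · rw [Fin.le_def]; simp
  rw [← (decompAt_bijective i).sum_comp
    (fun σ : Equiv.Perm (Fin (n+1)) => (z (σ i))^n * (cden (z ∘ σ))⁻¹),
    Fintype.sum_prod_type]
  have hterm : ∀ (p : Fin (n+1)) (τ : Equiv.Perm (Fin n)),
      (z (decompAt i (p, τ) i))^n * (cden (z ∘ decompAt i (p, τ)))⁻¹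
      = (-1)^(i:ℕ) * ((z p)^n *
          ((cden (Fin.cons (z p) (fun a : Fin (i:ℕ) => (z ∘ p.succAbove) (τ (esp (Sum.inl a))))))⁻¹ *
            (cden (Fin.cons (z p) (fun b : Fin (n-(i:ℕ)) => (z ∘ p.succAbove) (τ (esp (Sum.inr b))))))⁻¹)) := by
    intro p τ
    rw [decompAt_self, cden_split (z ∘ decompAt i (p, τ)) i]
    have hhead : (z ∘ decompAt i (p, τ)) i = z p := by
      simp [decompAt_self]
    have hLfun : Fin.cons ((z ∘ decompAt i (p, τ)) i)
        (fun a : Fin (i:ℕ) => (z ∘ decompAt i (p, τ))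
          ⟨(i:ℕ) - 1 - (a:ℕ), by have := a.isLt; have := i.isLt; omega⟩)
        = (Fin.cons (z p) (fun a : Fin (i:ℕ) => (z ∘ p.succAbove) (τ (esp (Sum.inl a))))
            : Fin ((i:ℕ)+1) → L) := by
      funext k
      induction k using Fin.cases with
      | zero => rw [Fin.cons_zero, Fin.cons_zero, hhead]
      | succ a =>
        rw [Fin.cons_succ, Fin.cons_succ]
        have hd := decompAt_succAbove i p τ (esp (Sum.inl a))
        rw [hsAL a] at hd
        exact congrArg z hd
    have hRfun : Fin.cons ((z ∘ decompAt i (p, τ)) i)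
        (fun b : Fin (n-(i:ℕ)) => (z ∘ decompAt i (p, τ))
          ⟨(i:ℕ) + 1 + (b:ℕ), by have := b.isLt; have := i.isLt; omega⟩)
        = (Fin.cons (z p) (fun b : Fin (n-(i:ℕ)) => (z ∘ p.succAbove) (τ (esp (Sum.inr b))))
            : Fin (n-(i:ℕ)+1) → L) := by
      funext k
      induction k using Fin.cases with
      | zero => rw [Fin.cons_zero, Fin.cons_zero, hhead]
      | succ b =>
        rw [Fin.cons_succ, Fin.cons_succ]
        have hd := decompAt_succAbove i p τ (esp (Sum.inr b))
        rw [hsAR b] at hd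
        exact congrArg z hd
    rw [hLfun, hRfun, mul_inv, mul_inv, ← inv_pow, inv_neg, inv_one]
    ring
  simp only [hterm]
  have hw : ∀ p : Fin (n+1), Function.Injective (z ∘ p.succAbove) :=
    fun p => hz.comp Fin.succAbove_right_injective
  have hinner : ∀ p : Fin (n+1),
      ∑ τ : Equiv.Perm (Fin n),
        (cden (Fin.cons (z p) (fun a : Fin (i:ℕ) => (z ∘ p.succAbove) (τ (esp (Sum.inl a))))))⁻¹ *
          (cden (Fin.cons (z p) (fun b : Fin (n-(i:ℕ)) => (z ∘ p.succAbove) (τ (esp (Sum.inr b))))))⁻¹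
      = (n.choose (i:ℕ) : L) * (∏ b ∈ Finset.univ.erase p, (z p - z b))⁻¹ := by
    intro p
    have h1 : ∀ j, z p ≠ (z ∘ p.succAbove) j :=
      fun j h => p.succAbove_ne j (hz h).symm
    rw [two_chain (i:ℕ) (n-(i:ℕ)) n esp (z ∘ p.succAbove) (hw p) (z p) (z p) h1 h1]
    have hA : ∀ A ∈ (Finset.univ : Finset (Fin n)).powersetCard (i:ℕ),
        (∏ a ∈ A, (z p - (z ∘ p.succAbove) a))⁻¹ *
          (∏ b ∈ Aᶜ, (z p - (z ∘ p.succAbove) b))⁻¹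
        = (∏ b ∈ Finset.univ.erase p, (z p - z b))⁻¹ := by
      intro A _
      rw [← mul_inv, Finset.prod_mul_prod_compl A (fun j => z p - (z ∘ p.succAbove) j)]
      congr 1
      rw [erase_eq_image_succAbove,
        Finset.prod_image (fun a _ b _ h => Fin.succAbove_right_injective h)]
      rfl
    rw [Finset.sum_congr rfl hA, Finset.sum_const, Finset.card_powersetCard,
      Finset.card_univ, Fintype.card_fin, nsmul_eq_mul]
  have hfold : ∀ p : Fin (n+1),
      ∑ τ : Equiv.Perm (Fin n), (-1)^(i:ℕ) * ((z p)^n *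
        ((cden (Fin.cons (z p) (fun a : Fin (i:ℕ) => (z ∘ p.succAbove) (τ (esp (Sum.inl a))))))⁻¹ *
          (cden (Fin.cons (z p) (fun b : Fin (n-(i:ℕ)) => (z ∘ p.succAbove) (τ (esp (Sum.inr b))))))⁻¹))
      = (-1)^(i:ℕ) * ((z p)^n *
          ((n.choose (i:ℕ) : L) * (∏ b ∈ Finset.univ.erase p, (z p - z b))⁻¹)) := by
    intro p
    rw [← Finset.mul_sum, ← Finset.mul_sum, hinner p]
  simp only [hfold]
  rw [← Finset.mul_sum]
  have : ∑ p : Fin (n+1), (z p)^n *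
      ((n.choose (i:ℕ) : L) * (∏ b ∈ Finset.univ.erase p, (z p - z b))⁻¹)
      = (n.choose (i:ℕ) : L) := by
    calc ∑ p : Fin (n+1), (z p)^n *
        ((n.choose (i:ℕ) : L) * (∏ b ∈ Finset.univ.erase p, (z p - z b))⁻¹)
        = (n.choose (i:ℕ) : L) * ∑ p : Fin (n+1),
            (z p)^n * (∏ b ∈ Finset.univ.erase p, (z p - z b))⁻¹ := by
          rw [Finset.mul_sum]
          exact Finset.sum_congr rfl fun p _ => by ring
      _ = (n.choose (i:ℕ) : L) := by rw [lagrange_pow_sum z hz, mul_one]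
  rw [this]

end AuxDividedSym

/-- Lemma 2: for the path `G` on `x_0, …, x_n` and `Φ = DS_G`,
`Φ(x_i^n) = (−1)^i · C(n, i)` for every `0 ≤ i ≤ n`. -/
theorem divided_symmetrization_path_power {K : Type*} [Field K] [CharZero K] (n : ℕ)
    (i : Fin (n + 1)) :
    DS (pathEdges n) ((X i : MvPolynomial (Fin (n + 1)) K) ^ n) =
      ((((-1) ^ (i : ℕ) * n.choose (i : ℕ) : ℤ)) :
        FractionRing (MvPolynomial (Fin (n + 1)) K)) := by
  set R := MvPolynomial (Fin (n + 1)) K with hR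
  set F := FractionRing R with hF
  set φ := algebraMap R F with hφ
  set z : Fin (n+1) → F := fun j => φ (X j) with hzdef
  have hz : Function.Injective z := by
    intro a b h
    exact MvPolynomial.X_injective (IsFractionRing.injective R F h)
  have key : ∀ π : Equiv.Perm (Fin (n+1)),
      φ (rename (⇑π) ((X i : R) ^ n)) / φ (rename (⇑π) (∏ e ∈ pathEdges n, (X e.1 - X e.2)))
      = (z (π i))^n * (cden (z ∘ π))⁻¹ := by
    intro π
    have hnum : φ (rename (⇑π) ((X i : R) ^ n)) = (z (π i))^n := by
      rw [map_pow, rename_X, map_pow]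
    have hden : φ (rename (⇑π) (∏ e ∈ pathEdges n, (X e.1 - X e.2))) = cden (z ∘ π) := by
      rw [map_prod, map_prod]
      rw [pathEdges, Finset.prod_image (fun a _ b _ h => by
        have : Fin.castSucc a = Fin.castSucc b := congrArg Prod.fst h
        exact Fin.castSucc_injective _ this)]
      rw [cden]
      refine Finset.prod_congr rfl fun j _ => ?_
      rw [map_sub, map_sub, rename_X, rename_X]
      rfl
    rw [hnum, hden, div_eq_mul_inv]
  rw [DS, Finset.sum_congr rfl (fun π _ => key π), main_abstract z hz i]
  push_cast
  ring
end

section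
/- Let G be the path on the ordered variable set V = {x_0, x_1, ..., x_n} with edges (x_i, x_{i+1}), 0 ≤ i ≤ n−1, and let Φ = DS_G. Set y_i = x_0 + x_1 + ... + x_i. Then Φ(y_0 · y_1 · ... · y_{n−1}) = n!. -/
open MvPolynomial

open Finset Equiv

lemma sum_range_card_le (s : Finset ℕ) : ∑ i ∈ range s.card, i ≤ ∑ x ∈ s, x := by
  induction' hn : s.card with n ih generalizing s
  · simp
  · have hne : s.Nonempty := by
      rw [← Finset.card_pos, hn]; omega
    set M := s.max' hne with hM
    have hmem : M ∈ s := s.max'_mem hne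
    have hsub : s ⊆ range (M + 1) := by
      intro x hx
      simp only [mem_range]
      have := s.le_max' x hx
      omega
    have hcard : s.card ≤ M + 1 := by
      simpa using Finset.card_le_card hsub
    have hercard : (s.erase M).card = n := by
      rw [Finset.card_erase_of_mem hmem, hn]
      omega
    have ihe := ih (s.erase M) hercard
    have : ∑ x ∈ s, x = M + ∑ x ∈ s.erase M, x := (Finset.add_sum_erase s _ hmem).symm
    rw [this, Finset.sum_range_succ]
    have : n ≤ M := by omega
    omega

lemma sum_injective_nat {M : ℕ} (α : Fin M → ℕ) (hα : Function.Injective α) :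
    ∑ i ∈ range M, i ≤ ∑ i, α i := by
  have h1 : ∑ i, α i = ∑ x ∈ Finset.univ.image α, x := (Finset.sum_image (f := id) (fun a _ b _ h => hα h)).symm
  have h2 : (Finset.univ.image α).card = M := by
    rw [Finset.card_image_of_injective _ hα, card_univ, Fintype.card_fin]
  rw [h1]
  have := sum_range_card_le (Finset.univ.image α)
  rwa [h2] at this

-- L1
lemma vand_perm {L : Type*} [CommRing L] {M : ℕ} (w : Fin M → L) (σ : Equiv.Perm (Fin M)) :
    (∏ i : Fin M, ∏ j ∈ Ioi i, (w (σ j) - w (σ i)))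
      = ((Equiv.Perm.sign σ : ℤ) : L) * ∏ i : Fin M, ∏ j ∈ Ioi i, (w j - w i) := by
  have h1 : Matrix.vandermonde (w ∘ σ) = (Matrix.vandermonde w).submatrix σ id := by
    ext i j; simp [Matrix.vandermonde]
  have h2 := Matrix.det_vandermonde (w ∘ σ)
  rw [h1, Matrix.det_permute, Matrix.det_vandermonde] at h2
  simpa using h2.symm

-- L2
lemma alt_sum_eq_zero {L : Type*} [CommRing L] {M : ℕ} (w : Fin M → L)
    (g : MvPolynomial (Fin M) L) (hg : g.totalDegree < ∑ i ∈ range M, i) :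
    ∑ σ : Equiv.Perm (Fin M), ((Equiv.Perm.sign σ : ℤ) : L) * eval (w ∘ σ) g = 0 := by
  have heval : ∀ σ : Equiv.Perm (Fin M),
      eval (w ∘ σ) g = ∑ d ∈ g.support, coeff d g * ∏ i, (w (σ i)) ^ d i := by
    intro σ
    rw [eval_eq']
    rfl
  simp_rw [heval, Finset.mul_sum]
  rw [Finset.sum_comm]
  apply Finset.sum_eq_zero
  intro d hd
  have hdet : ∑ σ : Equiv.Perm (Fin M), ((Equiv.Perm.sign σ : ℤ) : L) * ∏ i, (w (σ i)) ^ d i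
      = (Matrix.of fun i j : Fin M => w i ^ d j).det := by
    rw [Matrix.det_apply']
    rfl
  have hz : ∑ σ : Equiv.Perm (Fin M), ((Equiv.Perm.sign σ : ℤ) : L) * ∏ i, (w (σ i)) ^ d i = 0 := by
    rw [hdet]
    by_cases hinj : Function.Injective (fun i => d i)
    · exfalso
      have hle : ∑ i, d i ≤ g.totalDegree := by
        have h := MvPolynomial.le_totalDegree (R := L) (s := d) hd
        have : (d.sum fun _ e => e) = ∑ i, d i := Finsupp.sum_fintype _ _ (fun _ => rfl)
        omega
      have h2 := sum_injective_nat (fun i => d i) hinj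
      omega
    · simp only [Function.Injective, not_forall] at hinj
      obtain ⟨i, j, hij, hne⟩ := hinj
      apply Matrix.det_zero_of_column_eq hne
      intro k
      simp [hij]
  calc ∑ σ : Equiv.Perm (Fin M), ((Equiv.Perm.sign σ : ℤ) : L) * (coeff d g * ∏ i, (w (σ i)) ^ d i)
      = coeff d g * ∑ σ : Equiv.Perm (Fin M), ((Equiv.Perm.sign σ : ℤ) : L) * ∏ i, (w (σ i)) ^ d i := by
        rw [Finset.mul_sum]; congr 1; ext σ; ring
    _ = 0 := by rw [hz, mul_zero]

-- L3 : VANISH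
lemma vanish {L : Type*} [Field L] {M' : ℕ} (z : Fin (M' + 1) → L)
    (hz : Function.Injective z) (g : MvPolynomial (Fin (M' + 1)) L)
    (hg : g.totalDegree < M') :
    ∑ σ : Equiv.Perm (Fin (M' + 1)),
      eval (z ∘ σ) g / ∏ i : Fin M', (z (σ i.castSucc) - z (σ i.succ)) = 0 := by
  set AllP : Finset ((_ : Fin (M' + 1)) × Fin (M' + 1)) :=
    Finset.univ.sigma (fun i => Ioi i) with hAllP
  set em : Fin M' → ((_ : Fin (M' + 1)) × Fin (M' + 1)) := fun i => ⟨i.castSucc, i.succ⟩ with hem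
  have hem_inj : Function.Injective em := by
    intro a b h
    have := congrArg Sigma.fst h
    simpa [em, Fin.castSucc_inj] using this
  set EP : Finset ((_ : Fin (M' + 1)) × Fin (M' + 1)) := Finset.univ.image em with hEP
  have hEPsub : EP ⊆ AllP := by
    intro p hp
    simp only [hEP, Finset.mem_image] at hp
    obtain ⟨i, _, rfl⟩ := hp
    simp [hAllP, Finset.mem_sigma, em, Fin.castSucc_lt_succ]
  set NEset := AllP \ EP with hNEset
  have hne_of_mem : ∀ p ∈ NEset, p.1 ≠ p.2 := by
    intro p hp
    have hpA : p ∈ AllP := (Finset.mem_sdiff.1 hp).1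
    simp only [hAllP, Finset.mem_sigma] at hpA
    exact (Finset.mem_Ioi.1 hpA.2).ne
  set NE : MvPolynomial (Fin (M' + 1)) L := ∏ p ∈ NEset, (X p.2 - X p.1) with hNE
  set U : L := ∏ i : Fin (M' + 1), ∏ j ∈ Ioi i, (z j - z i) with hU
  have hUne : U ≠ 0 := by
    rw [hU]
    apply Finset.prod_ne_zero_iff.2
    intro i _
    apply Finset.prod_ne_zero_iff.2
    intro j hj
    have hij : i < j := by simpa using hj
    exact sub_ne_zero_of_ne (fun h => absurd (hz h) hij.ne')
  -- cardinalities
  have hcardEP : EP.card = M' := by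
    rw [hEP, Finset.card_image_of_injective _ hem_inj, card_univ, Fintype.card_fin]
  have hcardAllP : AllP.card = ∑ i ∈ range (M' + 1), i := by
    rw [hAllP, Finset.card_sigma]
    calc ∑ i : Fin (M' + 1), (Ioi i).card
        = ∑ i : Fin (M' + 1), (M' + 1 - 1 - (i : ℕ)) :=
          Finset.sum_congr rfl (fun i _ => Fin.card_Ioi i)
      _ = ∑ i ∈ range (M' + 1), (M' + 1 - 1 - i) := by rw [Fin.sum_univ_eq_sum_range]
      _ = ∑ i ∈ range (M' + 1), i := Finset.sum_range_reflect (fun j => j) (M' + 1)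
  have hEPle : M' ≤ AllP.card := by
    have := Finset.card_le_card hEPsub
    omega
  have hcardNE : NEset.card = AllP.card - M' := by
    rw [hNEset, Finset.card_sdiff_of_subset hEPsub, hcardEP]
  -- degree of NE
  have hdegNE : NE.totalDegree ≤ NEset.card := by
    rw [hNE]
    calc (∏ p ∈ NEset, (X p.2 - X p.1 : MvPolynomial (Fin (M' + 1)) L)).totalDegree
        ≤ ∑ p ∈ NEset, (X p.2 - X p.1 : MvPolynomial (Fin (M' + 1)) L).totalDegree :=
          MvPolynomial.totalDegree_finset_prod _ _
      _ ≤ ∑ _p ∈ NEset, 1 := by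
          apply Finset.sum_le_sum
          intro p _
          calc (X p.2 - X p.1 : MvPolynomial (Fin (M' + 1)) L).totalDegree
              = (X p.2 + (- X p.1) : MvPolynomial (Fin (M' + 1)) L).totalDegree := by ring_nf
            _ ≤ max (X p.2 : MvPolynomial (Fin (M' + 1)) L).totalDegree
                  (- X p.1 : MvPolynomial (Fin (M' + 1)) L).totalDegree :=
                MvPolynomial.totalDegree_add _ _
            _ ≤ 1 := by
                rw [MvPolynomial.totalDegree_neg, MvPolynomial.totalDegree_X,
                  MvPolynomial.totalDegree_X]
                simp
      _ = NEset.card := by simp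
  -- eval of NE
  have hevalNE : ∀ σ : Equiv.Perm (Fin (M' + 1)),
      eval (z ∘ σ) NE = ∏ p ∈ NEset, (z (σ p.2) - z (σ p.1)) := by
    intro σ
    rw [hNE, map_prod]
    exact Finset.prod_congr rfl (fun p _ => by simp)
  have hNEne : ∀ σ : Equiv.Perm (Fin (M' + 1)), eval (z ∘ σ) NE ≠ 0 := by
    intro σ
    rw [hevalNE σ]
    apply Finset.prod_ne_zero_iff.2
    intro p hp
    exact sub_ne_zero_of_ne (fun h => absurd (σ.injective (hz h)).symm (hne_of_mem p hp))
  -- key identity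
  have key : ∀ σ : Equiv.Perm (Fin (M' + 1)),
      eval (z ∘ σ) NE * ((-1 : L) ^ M' * ∏ i : Fin M', (z (σ i.castSucc) - z (σ i.succ)))
        = ((Equiv.Perm.sign σ : ℤ) : L) * U := by
    intro σ
    have h1 : (-1 : L) ^ M' * ∏ i : Fin M', (z (σ i.castSucc) - z (σ i.succ))
        = ∏ p ∈ EP, (z (σ p.2) - z (σ p.1)) := by
      rw [hEP, Finset.prod_image (fun a _ b _ h => hem_inj h)]
      calc (-1 : L) ^ M' * ∏ i : Fin M', (z (σ i.castSucc) - z (σ i.succ))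
          = ∏ i : Fin M', (-1 : L) * (z (σ i.castSucc) - z (σ i.succ)) := by
            rw [Finset.prod_mul_distrib, Finset.prod_const]
            simp
        _ = ∏ i : Fin M', (z (σ (em i).2) - z (σ (em i).1)) := by
            apply Finset.prod_congr rfl
            intro i _
            simp only [em]
            ring
    rw [h1, hevalNE σ, Finset.prod_sdiff hEPsub]
    have h3 : ∏ p ∈ AllP, (z (σ p.2) - z (σ p.1))
        = ∏ i : Fin (M' + 1), ∏ j ∈ Ioi i, (z (σ j) - z (σ i)) := by
      rw [hAllP, Finset.prod_sigma]
    rw [h3, vand_perm z σ]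
  have hDne : ∀ σ : Equiv.Perm (Fin (M' + 1)),
      (∏ i : Fin M', (z (σ i.castSucc) - z (σ i.succ))) ≠ 0 := by
    intro σ
    apply Finset.prod_ne_zero_iff.2
    intro i _
    exact sub_ne_zero_of_ne
      (fun h => absurd (σ.injective (hz h)) (Fin.castSucc_lt_succ (i := i)).ne)
  -- rewrite each term
  have hterm : ∀ σ : Equiv.Perm (Fin (M' + 1)),
      eval (z ∘ σ) g / ∏ i : Fin M', (z (σ i.castSucc) - z (σ i.succ))
        = ((-1 : L) ^ M' / U) * (((Equiv.Perm.sign σ : ℤ) : L) * eval (z ∘ σ) (g * NE)) := by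
    intro σ
    have hkey := key σ
    set s : L := ((Equiv.Perm.sign σ : ℤ) : L) with hs
    have hss : s * s = 1 := by
      rw [hs]
      rcases Int.units_eq_one_or (Equiv.Perm.sign σ) with h | h <;> rw [h] <;> norm_num
    rw [map_mul, div_mul_eq_mul_div, div_eq_div_iff (hDne σ) hUne]
    linear_combination (-(s * eval (z ∘ σ) g)) * hkey
      + (-(eval (z ∘ σ) g * U)) * hss
  rw [Finset.sum_congr rfl (fun σ _ => hterm σ), ← Finset.mul_sum]
  have hdeg : (g * NE).totalDegree < ∑ i ∈ range (M' + 1), i := by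
    have h1 : (g * NE).totalDegree ≤ g.totalDegree + NE.totalDegree :=
      MvPolynomial.totalDegree_mul _ _
    omega
  rw [alt_sum_eq_zero z (g * NE) hdeg, mul_zero]

noncomputable def extPerm {t M : ℕ} (ι : Fin t → Fin M) (hι : Function.Injective ι)
    (τ : Equiv.Perm (Fin t)) : Equiv.Perm (Fin M) :=
  τ.extendDomain (Equiv.ofInjective ι hι)

lemma extPerm_apply_mem {t M : ℕ} (ι : Fin t → Fin M) (hι : Function.Injective ι)
    (τ : Equiv.Perm (Fin t)) (j : Fin t) : extPerm ι hι τ (ι j) = ι (τ j) := by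
  have := Equiv.Perm.extendDomain_apply_image τ (Equiv.ofInjective ι hι) j
  simpa [extPerm, Equiv.ofInjective] using this

lemma extPerm_apply_not_mem {t M : ℕ} (ι : Fin t → Fin M) (hι : Function.Injective ι)
    (τ : Equiv.Perm (Fin t)) (p : Fin M) (hp : p ∉ Set.range ι) : extPerm ι hι τ p = p := by
  exact Equiv.Perm.extendDomain_apply_not_subtype τ (Equiv.ofInjective ι hι) hp

-- CV : coset-vanishing
lemma coset_vanish {L : Type*} [Field L] [CharZero L] {M t : ℕ}
    (ι : Fin t → Fin M) (hι : Function.Injective ι) (F : Equiv.Perm (Fin M) → L)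
    (h : ∀ σ : Equiv.Perm (Fin M), ∑ τ : Equiv.Perm (Fin t), F (σ * extPerm ι hι τ) = 0) :
    ∑ σ : Equiv.Perm (Fin M), F σ = 0 := by
  have hmain : ((t.factorial : L)) * ∑ σ : Equiv.Perm (Fin M), F σ = 0 := by
    calc (t.factorial : L) * ∑ σ : Equiv.Perm (Fin M), F σ
        = ∑ τ : Equiv.Perm (Fin t), ∑ σ : Equiv.Perm (Fin M), F σ := by
          rw [Finset.sum_const, card_univ, Fintype.card_perm, Fintype.card_fin]
          simp [nsmul_eq_mul]
      _ = ∑ τ : Equiv.Perm (Fin t), ∑ σ : Equiv.Perm (Fin M), F (σ * extPerm ι hι τ) := by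
          apply Finset.sum_congr rfl
          intro τ _
          exact (Fintype.sum_equiv (Equiv.mulRight (extPerm ι hι τ)) _ _ (fun σ => rfl)).symm
      _ = ∑ σ : Equiv.Perm (Fin M), ∑ τ : Equiv.Perm (Fin t), F (σ * extPerm ι hι τ) :=
          Finset.sum_comm
      _ = 0 := by simp [h]
  have ht : (t.factorial : L) ≠ 0 := Nat.cast_ne_zero.2 t.factorial_ne_zero
  exact (mul_eq_zero.1 hmain).resolve_left ht

lemma totalDegree_sumX_le {L : Type*} [CommSemiring L] [Nontrivial L] {N : ℕ} (s : Finset (Fin N)) :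
    (∑ i ∈ s, X i : MvPolynomial (Fin N) L).totalDegree ≤ 1 := by
  refine (MvPolynomial.totalDegree_finset_sum _ _).trans ?_
  exact Finset.sup_le fun i _ => le_of_eq (MvPolynomial.totalDegree_X i)

lemma totalDegree_CaddsumX_le {L : Type*} [CommSemiring L] [Nontrivial L] {N : ℕ} (a : L) (s : Finset (Fin N)) :
    (C a + ∑ i ∈ s, X i : MvPolynomial (Fin N) L).totalDegree ≤ 1 := by
  refine (MvPolynomial.totalDegree_add _ _).trans ?_
  simp only [MvPolynomial.totalDegree_C]
  exact max_le (by omega) (totalDegree_sumX_le s)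

lemma sum_Iic_castSucc {β : Type*} [AddCommMonoid β] {M : ℕ} (P : Fin M) (f : Fin (M + 1) → β) :
    ∑ i ∈ Iic P.castSucc, f i = ∑ i ∈ Iic P, f i.castSucc := by
  have hset : (Iic P.castSucc : Finset (Fin (M + 1))) = (Iic P).image Fin.castSucc := by
    ext x
    simp only [Finset.mem_image, Finset.mem_Iic]
    constructor
    · intro hx
      have hxval : (x : ℕ) ≤ (P : ℕ) := hx
      have hxlt : (x : ℕ) < M := by omega
      refine ⟨⟨(x : ℕ), hxlt⟩, ?_, ?_⟩
      · rw [Fin.le_def]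
        exact hxval
      · apply Fin.ext
        simp [Fin.coe_castSucc]
    · rintro ⟨i, hi, rfl⟩
      rw [Fin.le_def] at hi ⊢
      simpa using hi
  rw [hset, Finset.sum_image (fun a _ b _ h2 => Fin.castSucc_injective _ h2)]

noncomputable def EEquiv (m : ℕ) :
    (Option (Fin (m + 1)) × Equiv.Perm (Fin (m + 1))) ≃ Equiv.Perm (Fin (m + 2)) :=
  Equiv.Perm.decomposeOption.symm.trans (Equiv.permCongr (finSuccEquiv' (Fin.last (m + 1)))).symm

def betaFun (m : ℕ) (a : Option (Fin (m + 1))) (u : Fin (m + 1)) : Fin (m + 2) :=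
  (finSuccEquiv' (Fin.last (m + 1))).symm (Equiv.swap none a (some u))

lemma EEquiv_apply_castSucc (m : ℕ) (a : Option (Fin (m + 1))) (τ : Equiv.Perm (Fin (m + 1)))
    (p : Fin (m + 1)) : (EEquiv m (a, τ)) p.castSucc = betaFun m a (τ p) := by
  rw [EEquiv, betaFun]
  simp only [Equiv.trans_apply, Equiv.permCongr_symm, Equiv.symm_symm, Equiv.permCongr_apply]
  have h1 : (finSuccEquiv' (Fin.last (m + 1))) p.castSucc = some p := by
    rw [← Fin.succAbove_last, finSuccEquiv'_succAbove]
  rw [h1]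
  simp [Equiv.Perm.decomposeOption]

lemma betaFun_injective (m : ℕ) (a : Option (Fin (m + 1))) :
    Function.Injective (betaFun m a) := by
  intro u v huv
  rw [betaFun, betaFun] at huv
  have h1 := (finSuccEquiv' (Fin.last (m + 1))).symm.injective huv
  have h2 := (Equiv.swap none a).injective h1
  exact Option.some_injective _ h2

lemma erase_last_eq_image (m : ℕ) :
    (Finset.univ : Finset (Fin (m + 1))).erase (Fin.last m)
      = Finset.univ.image Fin.castSucc := by
  ext x
  simp only [Finset.mem_erase, Finset.mem_univ, and_true, Finset.mem_image, true_and]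
  constructor
  · intro hx
    have hxv : (x : ℕ) < m := by
      have := x.isLt
      have hne : (x : ℕ) ≠ m := fun hcon => hx (Fin.ext hcon)
      omega
    exact ⟨⟨(x : ℕ), hxv⟩, Fin.ext (by simp)⟩
  · rintro ⟨i, rfl⟩
    exact (Fin.castSucc_lt_last i).ne

noncomputable def DSe {L : Type*} [Field L] (m : ℕ) (z : Fin (m + 1) → L) : L :=
  ∑ σ : Equiv.Perm (Fin (m + 1)),
    (∏ j : Fin m, ∑ i ∈ Finset.Iic j.castSucc, z (σ i)) /
      (∏ i : Fin m, (z (σ i.castSucc) - z (σ i.succ)))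

set_option maxHeartbeats 4000000 in
theorem DSe_eq {L : Type*} [Field L] [CharZero L] :
    ∀ (m : ℕ) (z : Fin (m + 1) → L), Function.Injective z → DSe m z = m.factorial := by
  intro m
  induction m with
  | zero =>
    intro z _
    rw [DSe]
    simp
  | succ m ih =>
    intro z hz
    set h : Equiv.Perm (Fin (m + 2)) → L := fun σ =>
      ∏ j : Fin m, ∑ i ∈ Finset.Iic (j.castSucc.castSucc), z (σ i) with hh
    set D : Equiv.Perm (Fin (m + 2)) → L := fun σ =>
      ∏ i : Fin (m + 1), (z (σ i.castSucc) - z (σ i.succ)) with hD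
    have hDne : ∀ σ, D σ ≠ 0 := by
      intro σ
      apply Finset.prod_ne_zero_iff.2
      intro i _
      exact sub_ne_zero_of_ne
        (fun hcon => absurd (σ.injective (hz hcon)) (Fin.castSucc_lt_succ (i := i)).ne)
    set c : Fin (m + 2) → L := fun k => ∑ σ, h σ * z (σ k) / D σ with hc
    have R1 : ∑ k : Fin (m + 2), c k = 0 := by
      set S : L := ∑ k, z k with hS
      set g : MvPolynomial (Fin (m + 2)) L :=
        C S * ∏ j : Fin m, (∑ i ∈ Finset.Iic (j.castSucc.castSucc), X i) with hg
      have hdeg : g.totalDegree < m + 1 := by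
        refine lt_of_le_of_lt (MvPolynomial.totalDegree_mul _ _) ?_
        have h1 : (C S : MvPolynomial (Fin (m + 2)) L).totalDegree = 0 :=
          MvPolynomial.totalDegree_C _
        have h2 : (∏ j : Fin m, (∑ i ∈ Finset.Iic (j.castSucc.castSucc), X i) :
            MvPolynomial (Fin (m + 2)) L).totalDegree ≤ m := by
          refine (MvPolynomial.totalDegree_finset_prod _ _).trans ?_
          calc ∑ j : Fin m, (∑ i ∈ Finset.Iic (j.castSucc.castSucc), X i :
                MvPolynomial (Fin (m + 2)) L).totalDegree
              ≤ ∑ _j : Fin m, 1 := Finset.sum_le_sum (fun j _ => totalDegree_sumX_le _)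
            _ = m := by simp
        omega
      have heval : ∀ σ : Equiv.Perm (Fin (m + 2)), eval (z ∘ σ) g = S * h σ := by
        intro σ
        rw [hg, map_mul, eval_C, map_prod, hh]
        congr 1
        apply Finset.prod_congr rfl
        intro j _
        rw [map_sum]
        apply Finset.sum_congr rfl
        intro i _
        simp
      calc ∑ k : Fin (m + 2), c k
          = ∑ σ : Equiv.Perm (Fin (m + 2)), ∑ k : Fin (m + 2), h σ * z (σ k) / D σ := by
            rw [hc, Finset.sum_comm]
        _ = ∑ σ : Equiv.Perm (Fin (m + 2)),
              eval (z ∘ σ) g / ∏ i : Fin (m + 1), (z (σ i.castSucc) - z (σ i.succ)) := by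
            apply Finset.sum_congr rfl
            intro σ _
            rw [← Finset.sum_div, ← Finset.mul_sum, heval σ, hD]
            rw [Equiv.sum_comp σ z, ← hS, mul_comm]
        _ = 0 := vanish z hz g hdeg
    have R2 : ∀ q : ℕ, (hq : q < m) → c ⟨q, by omega⟩ = c ⟨q + 1, by omega⟩ := by
      intro q hq
      obtain ⟨r, hm⟩ : ∃ r, m = q + 1 + r := ⟨m - (q + 1), by omega⟩
      -- the tail embeddings
      set ι : Fin (r + 2) → Fin (m + 2) := fun j => ⟨q + 1 + (j : ℕ), by omega⟩ with hιdef
      have hι : Function.Injective ι := by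
        intro a b hab
        rw [hιdef] at hab
        have := congrArg Fin.val hab
        simp only at this
        exact Fin.ext (by omega)
      have hrange : ∀ p : Fin (m + 2), p ∈ Set.range ι ↔ q + 1 ≤ (p : ℕ) := by
        intro p
        constructor
        · rintro ⟨j, rfl⟩
          simp [hιdef]
        · intro hp
          exact ⟨⟨(p : ℕ) - (q + 1), by omega⟩, Fin.ext (by simp [hιdef]; omega)⟩
      set ι₂ : Fin (r + 1) → Fin (m + 1) := fun j => ⟨q + 1 + (j : ℕ), by omega⟩ with hι₂def
      have hι₂ : Function.Injective ι₂ := by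
        intro a b hab
        rw [hι₂def] at hab
        have := congrArg Fin.val hab
        simp only at this
        exact Fin.ext (by omega)
      set e : Fin (m + 1) := ⟨q, by omega⟩ with hedef
      -- step 1 : cancel edge e
      have step1 : c ⟨q, by omega⟩ - c ⟨q + 1, by omega⟩
          = ∑ σ : Equiv.Perm (Fin (m + 2)), h σ /
              ∏ i ∈ Finset.univ.erase e, (z (σ i.castSucc) - z (σ i.succ)) := by
        rw [hc]
        rw [← Finset.sum_sub_distrib]
        apply Finset.sum_congr rfl
        intro σ _
        rw [div_sub_div_same, ← mul_sub]
        have hDsplit : D σ = (z (σ ⟨q, by omega⟩) - z (σ ⟨q + 1, by omega⟩)) *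
            ∏ i ∈ Finset.univ.erase e, (z (σ i.castSucc) - z (σ i.succ)) := by
          rw [hD]
          exact (Finset.mul_prod_erase _ _ (Finset.mem_univ e)).symm
        have hfe : z (σ (⟨q, by omega⟩ : Fin (m + 2))) - z (σ (⟨q + 1, by omega⟩ : Fin (m + 2))) ≠ 0 :=
          sub_ne_zero_of_ne
            (fun hcon => absurd (σ.injective (hz hcon)) (by simp [Fin.ext_iff]))
        rw [hDsplit, mul_comm (h σ)]
        rw [mul_div_mul_left _ _ hfe]
      have hvan : ∑ σ : Equiv.Perm (Fin (m + 2)), h σ /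
          ∏ i ∈ Finset.univ.erase e, (z (σ i.castSucc) - z (σ i.succ)) = 0 := by
        apply coset_vanish ι hι
        intro σ
        -- tail data
        set w : Fin (r + 2) → L := fun j => z (σ (ι j)) with hwdef
        have hw : Function.Injective w := by
          intro a b hab
          exact hι (σ.injective (hz hab))
        set s₀ : L := ∑ i ∈ Finset.Iic (⟨q, by omega⟩ : Fin (m + 2)), z (σ i) with hs₀
        set g : MvPolynomial (Fin (r + 2)) L :=
          ∏ j ∈ Finset.univ.filter (fun j : Fin m => ¬ ((j : ℕ) ≤ q)),
            (C s₀ + ∑ i' ∈ Finset.univ.filter (fun i' : Fin (r + 2) => q + 1 + (i' : ℕ) ≤ (j : ℕ)),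
              X i') with hgdef
        have hcardfilter : (Finset.univ.filter (fun j : Fin m => ¬ ((j : ℕ) ≤ q))).card = r := by
          have : Finset.univ.filter (fun j : Fin m => ¬ ((j : ℕ) ≤ q)) = Ioi (⟨q, by omega⟩ : Fin m) := by
            ext x
            simp only [Finset.mem_filter, Finset.mem_univ, true_and, Finset.mem_Ioi, Fin.lt_def]
            omega
          rw [this, Fin.card_Ioi]
          show m - 1 - q = r
          omega
        have hdeg : g.totalDegree < r + 1 := by
          rw [hgdef]
          refine lt_of_le_of_lt ((MvPolynomial.totalDegree_finset_prod _ _).trans ?_) (by omega : r < r + 1)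
          calc ∑ j ∈ Finset.univ.filter (fun j : Fin m => ¬ ((j : ℕ) ≤ q)),
                (C s₀ + ∑ i' ∈ Finset.univ.filter
                  (fun i' : Fin (r + 2) => q + 1 + (i' : ℕ) ≤ (j : ℕ)),
                  X i' : MvPolynomial (Fin (r + 2)) L).totalDegree
              ≤ ∑ _j ∈ Finset.univ.filter (fun j : Fin m => ¬ ((j : ℕ) ≤ q)), 1 :=
                Finset.sum_le_sum (fun j _ => totalDegree_CaddsumX_le _ _)
            _ = r := by rw [Finset.sum_const, hcardfilter, smul_eq_mul, mul_one]
        -- numerator decomposition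
        have hfix : ∀ (τ : Equiv.Perm (Fin (r + 2))) (i : Fin (m + 2)), (i : ℕ) ≤ q →
            (σ * extPerm ι hι τ) i = σ i := by
          intro τ i hi
          rw [Equiv.Perm.mul_apply, extPerm_apply_not_mem ι hι τ i]
          rw [hrange i]
          omega
        have hA : ∀ τ : Equiv.Perm (Fin (r + 2)),
            h (σ * extPerm ι hι τ)
              = (∏ j ∈ Finset.univ.filter (fun j : Fin m => (j : ℕ) ≤ q),
                  ∑ i ∈ Finset.Iic (j.castSucc.castSucc), z (σ i)) * eval (w ∘ τ) g := by
          intro τ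
          have hhapp : h (σ * extPerm ι hι τ) = ∏ j : Fin m,
              ∑ i ∈ Finset.Iic (j.castSucc.castSucc), z ((σ * extPerm ι hι τ) i) := by rw [hh]
          rw [hhapp]
          rw [← Finset.prod_filter_mul_prod_filter_not Finset.univ (fun j : Fin m => (j : ℕ) ≤ q)]
          congr 1
          · -- fixed part
            apply Finset.prod_congr rfl
            intro j hj
            simp only [Finset.mem_filter] at hj
            apply Finset.sum_congr rfl
            intro i hi
            have hival : (i : ℕ) ≤ q := by
              have := Finset.mem_Iic.1 hi
              rw [Fin.le_def] at this
              simp only [Fin.coe_castSucc] at this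
              omega
            rw [hfix τ i hival]
          · -- tail part
            rw [hgdef, map_prod]
            apply Finset.prod_congr rfl
            intro j hj
            simp only [Finset.mem_filter, Finset.mem_univ, true_and] at hj
            rw [map_add, eval_C, map_sum]
            rw [← Finset.sum_filter_add_sum_filter_not (Finset.Iic (j.castSucc.castSucc))
              (fun i : Fin (m + 2) => (i : ℕ) ≤ q)]
            congr 1
            · -- equals s₀
              have hseteq : (Finset.Iic (j.castSucc.castSucc)).filter (fun i : Fin (m + 2) => (i : ℕ) ≤ q)
                  = Finset.Iic (⟨q, by omega⟩ : Fin (m + 2)) := by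
                ext x
                simp only [Finset.mem_filter, Finset.mem_Iic, Fin.le_def, Fin.coe_castSucc]
                omega
              rw [hseteq, hs₀]
              apply Finset.sum_congr rfl
              intro i hi
              have hival'' := Finset.mem_Iic.1 hi
              have hival : (i : ℕ) ≤ q := hival''
              rw [hfix τ i hival]
            · -- equals tail sum
              have hseteq : (Finset.Iic (j.castSucc.castSucc)).filter (fun i : Fin (m + 2) => ¬ ((i : ℕ) ≤ q))
                  = (Finset.univ.filter
                      (fun i' : Fin (r + 2) => q + 1 + (i' : ℕ) ≤ (j : ℕ))).image ι := by
                ext x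
                simp only [Finset.mem_filter, Finset.mem_Iic, Fin.le_def, Fin.coe_castSucc,
                  Finset.mem_image, Finset.mem_univ, true_and]
                constructor
                · rintro ⟨hx1, hx2⟩
                  refine ⟨⟨(x : ℕ) - (q + 1), by omega⟩, by simp [hιdef]; omega,
                    Fin.ext (by simp [hιdef]; omega)⟩
                · rintro ⟨i', hi', rfl⟩
                  simp only [hιdef]
                  omega
              rw [hseteq, Finset.sum_image (fun a _ b _ hab => hι hab)]
              apply Finset.sum_congr rfl
              intro i' _
              rw [eval_X, Equiv.Perm.mul_apply, extPerm_apply_mem ι hι τ i']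
              rfl
        -- denominator decomposition
        have hB : ∀ τ : Equiv.Perm (Fin (r + 2)),
            (∏ i ∈ Finset.univ.erase e,
                (z ((σ * extPerm ι hι τ) i.castSucc) - z ((σ * extPerm ι hι τ) i.succ)))
              = (∏ i ∈ Finset.univ.filter (fun i : Fin (m + 1) => (i : ℕ) < q),
                  (z (σ i.castSucc) - z (σ i.succ))) *
                ∏ i'' : Fin (r + 1), (w (τ i''.castSucc) - w (τ i''.succ)) := by
          intro τ
          rw [← Finset.prod_filter_mul_prod_filter_not (Finset.univ.erase e)
            (fun i : Fin (m + 1) => (i : ℕ) < q)]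
          congr 1
          · have hseteq : (Finset.univ.erase e).filter (fun i : Fin (m + 1) => (i : ℕ) < q)
                = Finset.univ.filter (fun i : Fin (m + 1) => (i : ℕ) < q) := by
              ext x
              simp only [Finset.mem_filter, Finset.mem_erase, Finset.mem_univ, true_and, and_true]
              constructor
              · rintro ⟨_, h2⟩
                exact h2
              · intro h2
                refine ⟨fun hcon => ?_, h2⟩
                have hvq : (x : ℕ) = q := congrArg Fin.val hcon
                omega
            rw [hseteq]
            apply Finset.prod_congr rfl
            intro i hi
            simp only [Finset.mem_filter, Finset.mem_univ, true_and] at hi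
            rw [hfix τ i.castSucc (by rw [Fin.coe_castSucc]; omega),
              hfix τ i.succ (by rw [Fin.val_succ]; omega)]
          · have hseteq : (Finset.univ.erase e).filter (fun i : Fin (m + 1) => ¬ ((i : ℕ) < q))
                = Finset.univ.image ι₂ := by
              ext x
              simp only [Finset.mem_filter, Finset.mem_erase, Finset.mem_univ, true_and, and_true,
                Finset.mem_image]
              constructor
              · rintro ⟨hx1, hx2⟩
                have hx1' : (x : ℕ) ≠ q := fun hcon => hx1 (Fin.ext hcon)
                refine ⟨⟨(x : ℕ) - (q + 1), by omega⟩, Fin.ext ?_⟩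
                show q + 1 + ((x : ℕ) - (q + 1)) = (x : ℕ)
                omega
              · rintro ⟨i', hi'⟩
                have hval : q + 1 + (i' : ℕ) = (x : ℕ) := congrArg Fin.val hi'
                constructor
                · intro hcon
                  have hvq : (x : ℕ) = q := congrArg Fin.val hcon
                  omega
                · omega
            rw [hseteq, Finset.prod_image (fun a _ b _ hab => hι₂ hab)]
            apply Finset.prod_congr rfl
            intro i'' _
            have h1 : (ι₂ i'').castSucc = ι i''.castSucc := Fin.ext rfl
            have h2 : (ι₂ i'').succ = ι i''.succ :=
              Fin.ext (by show q + 1 + (i'' : ℕ) + 1 = q + 1 + ((i'' : ℕ) + 1); omega)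
            rw [h1, h2, Equiv.Perm.mul_apply, Equiv.Perm.mul_apply,
              extPerm_apply_mem ι hι τ i''.castSucc, extPerm_apply_mem ι hι τ i''.succ]
        -- combine
        calc ∑ τ : Equiv.Perm (Fin (r + 2)),
              h (σ * extPerm ι hι τ) / ∏ i ∈ Finset.univ.erase e,
                (z ((σ * extPerm ι hι τ) i.castSucc) - z ((σ * extPerm ι hι τ) i.succ))
            = ∑ τ : Equiv.Perm (Fin (r + 2)),
                ((∏ j ∈ Finset.univ.filter (fun j : Fin m => (j : ℕ) ≤ q),
                  ∑ i ∈ Finset.Iic (j.castSucc.castSucc), z (σ i)) /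
                  (∏ i ∈ Finset.univ.filter (fun i : Fin (m + 1) => (i : ℕ) < q),
                    (z (σ i.castSucc) - z (σ i.succ)))) *
                (eval (w ∘ τ) g / ∏ i'' : Fin (r + 1), (w (τ i''.castSucc) - w (τ i''.succ))) := by
              apply Finset.sum_congr rfl
              intro τ _
              rw [hA τ, hB τ, mul_div_mul_comm]
          _ = 0 := by
              rw [← Finset.mul_sum, vanish w hw g hdeg, mul_zero]
      have hfin := step1
      rw [hvan] at hfin
      exact sub_eq_zero.1 hfin
    have R3 : c ⟨m, by omega⟩ - c ⟨m + 1, by omega⟩ = (m + 2) * m.factorial := by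
      have step1 : c ⟨m, by omega⟩ - c ⟨m + 1, by omega⟩
          = ∑ σ : Equiv.Perm (Fin (m + 2)), h σ /
              ∏ i' : Fin m, (z (σ (i'.castSucc.castSucc)) - z (σ (i'.succ.castSucc))) := by
        rw [hc]
        rw [← Finset.sum_sub_distrib]
        apply Finset.sum_congr rfl
        intro σ _
        rw [div_sub_div_same, ← mul_sub]
        have hDsplit : D σ = (z (σ ⟨m, by omega⟩) - z (σ ⟨m + 1, by omega⟩)) *
            ∏ i ∈ Finset.univ.erase (Fin.last m), (z (σ i.castSucc) - z (σ i.succ)) := by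
          rw [hD]
          exact (Finset.mul_prod_erase _ _ (Finset.mem_univ (Fin.last m))).symm
        have hfe : z (σ (⟨m, by omega⟩ : Fin (m + 2))) - z (σ (⟨m + 1, by omega⟩ : Fin (m + 2))) ≠ 0 :=
          sub_ne_zero_of_ne
            (fun hcon => absurd (σ.injective (hz hcon)) (Fin.castSucc_lt_succ (i := Fin.last m)).ne)
        have herase : ∏ i ∈ Finset.univ.erase (Fin.last m), (z (σ i.castSucc) - z (σ i.succ))
            = ∏ i' : Fin m, (z (σ (i'.castSucc.castSucc)) - z (σ (i'.succ.castSucc))) := by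
          rw [erase_last_eq_image m,
            Finset.prod_image (fun a _ b _ hab => Fin.castSucc_injective _ hab)]
          apply Finset.prod_congr rfl
          intro i' _
          rw [Fin.succ_castSucc]
        rw [hDsplit, herase, mul_comm (h σ)]
        rw [mul_div_mul_left _ _ hfe]
      rw [step1]
      have step3 : ∑ σ : Equiv.Perm (Fin (m + 2)), h σ /
              ∏ i' : Fin m, (z (σ (i'.castSucc.castSucc)) - z (σ (i'.succ.castSucc)))
          = ∑ a : Option (Fin (m + 1)), ∑ τ : Equiv.Perm (Fin (m + 1)),
              (∏ j : Fin m, ∑ i ∈ Finset.Iic j.castSucc, (z ∘ betaFun m a) (τ i)) /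
                (∏ i' : Fin m, ((z ∘ betaFun m a) (τ i'.castSucc) - (z ∘ betaFun m a) (τ i'.succ))) := by
        calc ∑ σ : Equiv.Perm (Fin (m + 2)), h σ /
              ∏ i' : Fin m, (z (σ (i'.castSucc.castSucc)) - z (σ (i'.succ.castSucc)))
            = ∑ x : Option (Fin (m + 1)) × Equiv.Perm (Fin (m + 1)),
                h (EEquiv m x) / ∏ i' : Fin m,
                  (z ((EEquiv m x) (i'.castSucc.castSucc)) - z ((EEquiv m x) (i'.succ.castSucc))) :=
              (Fintype.sum_equiv (EEquiv m) _ _ (fun x => rfl)).symm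
          _ = ∑ a : Option (Fin (m + 1)), ∑ τ : Equiv.Perm (Fin (m + 1)),
                h (EEquiv m (a, τ)) / ∏ i' : Fin m,
                  (z ((EEquiv m (a, τ)) (i'.castSucc.castSucc)) - z ((EEquiv m (a, τ)) (i'.succ.castSucc))) :=
              by rw [Fintype.sum_prod_type]
          _ = _ := ?_
        apply Finset.sum_congr rfl
        intro a _
        apply Finset.sum_congr rfl
        intro τ _
        rw [hh]
        congr 1
        · apply Finset.prod_congr rfl
          intro j _
          rw [sum_Iic_castSucc]
          apply Finset.sum_congr rfl
          intro i _
          rw [EEquiv_apply_castSucc m a τ i]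
          rfl
        · apply Finset.prod_congr rfl
          intro i' _
          rw [EEquiv_apply_castSucc m a τ i'.castSucc, EEquiv_apply_castSucc m a τ i'.succ]
          rfl
      rw [step3]
      have step4 : ∀ a : Option (Fin (m + 1)),
          ∑ τ : Equiv.Perm (Fin (m + 1)),
              (∏ j : Fin m, ∑ i ∈ Finset.Iic j.castSucc, (z ∘ betaFun m a) (τ i)) /
                (∏ i' : Fin m, ((z ∘ betaFun m a) (τ i'.castSucc) - (z ∘ betaFun m a) (τ i'.succ)))
            = m.factorial := by
        intro a
        exact ih (z ∘ betaFun m a) (hz.comp (betaFun_injective m a))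
      rw [Finset.sum_congr rfl (fun a _ => step4 a), Finset.sum_const]
      rw [Finset.card_univ, Fintype.card_option, Fintype.card_fin, nsmul_eq_mul]
      push_cast
      ring
    -- assembly
    have hchain : ∀ k : ℕ, (hk : k ≤ m) → c ⟨k, by omega⟩ = c ⟨0, by omega⟩ := by
      intro k
      induction k with
      | zero => intro _; rfl
      | succ k ihk =>
        intro hk
        rw [← R2 k (by omega)]
        exact ihk (by omega)
    have hT : DSe (m + 1) z = ∑ i ∈ Iic ((Fin.last m).castSucc), c i := by
      rw [DSe]
      have : ∀ σ : Equiv.Perm (Fin (m + 2)),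
          (∏ j : Fin (m + 1), ∑ i ∈ Finset.Iic j.castSucc, z (σ i)) /
            (∏ i : Fin (m + 1), (z (σ i.castSucc) - z (σ i.succ)))
          = ∑ i ∈ Iic ((Fin.last m).castSucc), h σ * z (σ i) / D σ := by
        intro σ
        rw [Fin.prod_univ_castSucc
          (f := fun j : Fin (m + 1) => ∑ i ∈ Finset.Iic j.castSucc, z (σ i))]
        rw [Finset.mul_sum, Finset.sum_div]
      rw [Finset.sum_congr rfl (fun σ _ => this σ), Finset.sum_comm]
    have hcard : (Iic ((Fin.last m).castSucc) : Finset (Fin (m + 2))).card = m + 1 := by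
      rw [Fin.card_Iic]
      simp
    have hTc : DSe (m + 1) z = (m + 1) * c ⟨0, by omega⟩ := by
      rw [hT]
      have : ∀ i ∈ Iic ((Fin.last m).castSucc), c i = c ⟨0, by omega⟩ := by
        intro i hi
        have hival : (i : ℕ) ≤ m := by
          have := Finset.mem_Iic.1 hi
          simpa [Fin.le_def] using this
        have : i = ⟨(i : ℕ), by omega⟩ := by simp [Fin.ext_iff]
        rw [this]
        exact hchain (i : ℕ) hival
      rw [Finset.sum_congr rfl this, Finset.sum_const, hcard, nsmul_eq_mul]
      push_cast
      ring
    have hsplit : ∑ k : Fin (m + 2), c k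
        = (∑ k : Fin (m + 1), c k.castSucc) + c (Fin.last (m + 1)) :=
      Fin.sum_univ_castSucc c
    have hcast : ∀ k : Fin (m + 1), c k.castSucc = c ⟨0, by omega⟩ := by
      intro k
      have : k.castSucc = (⟨(k : ℕ), by omega⟩ : Fin (m + 2)) := by simp [Fin.ext_iff]
      rw [this]
      exact hchain (k : ℕ) (by omega)
    have hlast : c (Fin.last (m + 1)) = - (m + 1) * c ⟨0, by omega⟩ := by
      have h1 : (∑ k : Fin (m + 1), c k.castSucc) = (m + 1) * c ⟨0, by omega⟩ := by
        rw [Finset.sum_congr rfl (fun k _ => hcast k), Finset.sum_const]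
        simp [nsmul_eq_mul]
      have hR := R1
      rw [hsplit, h1] at hR
      linear_combination hR
    have hm1 : c ⟨m, by omega⟩ = c ⟨0, by omega⟩ := hchain m le_rfl
    have hlast' : (⟨m + 1, by omega⟩ : Fin (m + 2)) = Fin.last (m + 1) := by
      simp [Fin.ext_iff]
    rw [hm1, hlast', hlast] at R3
    have hc0 : c ⟨0, by omega⟩ = m.factorial := by
      have hne : ((m : L) + 2) ≠ 0 := by
        have h0 : ((m + 2 : ℕ) : L) ≠ 0 := Nat.cast_ne_zero.2 (by omega)
        intro hcon
        apply h0
        push_cast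
        linear_combination hcon
      have h2 : ((m : L) + 2) * c ⟨0, by omega⟩ = ((m : L) + 2) * m.factorial := by
        linear_combination R3
      exact mul_left_cancel₀ hne h2
    rw [hTc, hc0]
    rw [Nat.factorial_succ]
    push_cast
    ring

/-- for the path `G` on `x_0, …, x_n`, `Φ = DS_G`, and
`y_i = x_0 + ⋯ + x_i`, one has `Φ(y_0 · y_1 · ⋯ · y_{n−1}) = n!`. -/
theorem path_product_y_eq_factorial {K : Type*} [Field K] [CharZero K] (n : ℕ) :
    DS (pathEdges n) (∏ k : Fin n, pathY n K k.castSucc) =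
      (n.factorial : FractionRing (MvPolynomial (Fin (n + 1)) K)) := by
  set R := MvPolynomial (Fin (n + 1)) K with hR
  set L := FractionRing R with hL
  set φ : R →+* L := algebraMap R L with hφ
  have hφinj : Function.Injective φ := IsFractionRing.injective R L
  haveI : CharZero R := by
    refine (RingHom.charZero_iff (ϕ := (MvPolynomial.C : K →+* R)) ?_).1 inferInstance
    exact MvPolynomial.C_injective _ _
  haveI : CharZero L := (RingHom.charZero_iff hφinj).1 inferInstance
  set z : Fin (n + 1) → L := fun i => φ (X i) with hzdef
  have hz : Function.Injective z := fun i j hij =>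
    MvPolynomial.X_injective (hφinj hij)
  have hEdge : (∏ e ∈ pathEdges n, (X e.1 - X e.2) : R)
      = ∏ i : Fin n, (X i.castSucc - X i.succ) := by
    rw [pathEdges]
    rw [Finset.prod_image]
    intro a _ b _ hab
    have := congrArg Prod.fst hab
    simpa [Fin.castSucc_inj] using this
  have hsummand : ∀ π : Equiv.Perm (Fin (n + 1)),
      φ (rename (⇑π) (∏ k : Fin n, pathY n K k.castSucc)) /
        φ (rename (⇑π) (∏ e ∈ pathEdges n, (X e.1 - X e.2)))
      = (∏ j : Fin n, ∑ i ∈ Finset.Iic j.castSucc, z (π i)) /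
        (∏ i : Fin n, (z (π i.castSucc) - z (π i.succ))) := by
    intro π
    congr 1
    · rw [map_prod, map_prod]
      apply Finset.prod_congr rfl
      intro j _
      rw [pathY, map_sum, map_sum]
      apply Finset.sum_congr rfl
      intro i _
      rw [rename_X]
    · rw [hEdge, map_prod, map_prod]
      apply Finset.prod_congr rfl
      intro i _
      rw [map_sub, map_sub, rename_X, rename_X]
  rw [DS, Finset.sum_congr rfl (fun π _ => hsummand π)]
  exact DSe_eq n z hz
end

section
/- (Maximum-principle uniqueness) Let n ≥ 1 and let Q be a real-valued function on the set of (n+1)-tuples (c_0, ..., c_n) of nonnegative integers with Σ c_i = n, indices taken modulo n+1. Suppose that: (i) Q(c) = 0 whenever (c_0, ..., c_n) is a cyclic shift of (1, 1, ..., 1, 0); and (ii) for every tuple c and every index k with c_k ≥ 2, 2·Q(c_0, ..., c_n) = Q(c with c_{k−1} increased by 1 and c_k decreased by 1) + Q(c with c_k decreased by 1 and c_{k+1} increased by 1). Then Q is identically zero. -/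
private lemma sum_split_two {n : ℕ} (f : Fin (n+1) → ℕ) (a b : Fin (n+1)) (hab : a ≠ b) :
    (∑ j, f j) = f a + f b + ∑ j ∈ (Finset.univ.erase a).erase b, f j := by
  rw [← Finset.add_sum_erase _ f (Finset.mem_univ a),
      ← Finset.add_sum_erase _ f (Finset.mem_erase.mpr ⟨Ne.symm hab, Finset.mem_univ b⟩)]
  ring

private lemma sum_compare {n : ℕ} (f g : Fin (n+1) → ℕ) (a b : Fin (n+1)) (hab : a ≠ b)
    (h : ∀ j, j ≠ a → j ≠ b → f j = g j) :
    (∑ j, f j) + g a + g b = (∑ j, g j) + f a + f b := by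
  rw [sum_split_two f a b hab, sum_split_two g a b hab,
      Finset.sum_congr rfl (fun j hj => by
        simp only [Finset.mem_erase] at hj
        exact h j hj.2.1 hj.1)]
  ring

/-- move a coin from `k` to `k+1` -/
private def moveR {n : ℕ} (c : Fin (n+1) → ℕ) (k : Fin (n+1)) : Fin (n+1) → ℕ :=
  fun j => if j = k then c k - 1 else if j = k + 1 then c j + 1 else c j

/-- move a coin from `k` to `k-1` -/
private def moveL {n : ℕ} (c : Fin (n+1) → ℕ) (k : Fin (n+1)) : Fin (n+1) → ℕ :=
  fun j => if j = k then c k - 1 else if j = k - 1 then c j + 1 else c j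

/-- total excess -/
private def exc {n : ℕ} (c : Fin (n+1) → ℕ) : ℕ := ∑ j, (c j - 1)

section facts

private lemma one_ne_zero'' {n : ℕ} (hn : 1 ≤ n) : (1 : Fin (n+1)) ≠ 0 := by
  intro h
  have := congrArg Fin.val h
  simp [Fin.val_one, Nat.mod_eq_of_lt (by omega : 1 < n + 1)] at this

private lemma succ_ne {n : ℕ} (hn : 1 ≤ n) {k : Fin (n+1)} : k + 1 ≠ k := by
  intro h
  have : (1 : Fin (n+1)) = 0 := by
    have := congrArg (· - k) h
    simpa [add_comm, add_sub_cancel_right, sub_self] using this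
  exact one_ne_zero'' hn this

private lemma pred_ne {n : ℕ} (hn : 1 ≤ n) {k : Fin (n+1)} : k - 1 ≠ k := by
  intro h
  have : (1 : Fin (n+1)) = 0 := by
    have := congrArg (fun x => k - x) h
    simpa [sub_sub_cancel, sub_self] using this
  exact one_ne_zero'' hn this

private lemma moveR_sum {n : ℕ} (hn : 1 ≤ n) {c : Fin (n+1) → ℕ} {k : Fin (n+1)} (hk : 1 ≤ c k)
    (hc : (∑ j, c j) = n) : (∑ j, moveR c k j) = n := by
  have key := sum_compare (moveR c k) c k (k+1) (Ne.symm (succ_ne hn))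
    (fun j hj1 hj2 => by simp [moveR, hj1, hj2])
  have h1 : moveR c k k = c k - 1 := by simp [moveR]
  have h2 : moveR c k (k+1) = c (k+1) + 1 := by simp [moveR, succ_ne hn]
  rw [h1, h2] at key
  omega

private lemma moveL_sum {n : ℕ} (hn : 1 ≤ n) {c : Fin (n+1) → ℕ} {k : Fin (n+1)} (hk : 1 ≤ c k)
    (hc : (∑ j, c j) = n) : (∑ j, moveL c k j) = n := by
  have key := sum_compare (moveL c k) c k (k-1) (Ne.symm (pred_ne hn))
    (fun j hj1 hj2 => by simp [moveL, hj1, hj2])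
  have h1 : moveL c k k = c k - 1 := by simp [moveL]
  have h2 : moveL c k (k-1) = c (k-1) + 1 := by simp [moveL, pred_ne hn]
  rw [h1, h2] at key
  omega

private lemma moveR_exc {n : ℕ} (hn : 1 ≤ n) {c : Fin (n+1) → ℕ} {k : Fin (n+1)} (hk : 2 ≤ c k) :
    (c (k+1) = 0 → exc (moveR c k) < exc c) ∧ (1 ≤ c (k+1) → exc (moveR c k) = exc c) := by
  have key := sum_compare (fun j => moveR c k j - 1) (fun j => c j - 1) k (k+1)
    (Ne.symm (succ_ne hn)) (fun j hj1 hj2 => by simp [moveR, hj1, hj2])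
  have h1 : moveR c k k = c k - 1 := by simp [moveR]
  have h2 : moveR c k (k+1) = c (k+1) + 1 := by simp [moveR, succ_ne hn]
  simp only [h1, h2] at key
  unfold exc
  constructor <;> intro h <;> omega

end facts

private lemma boundary_sum {n : ℕ} (z : Fin (n+1)) :
    (∑ j, (if j = z then 0 else 1 : ℕ)) = n := by
  rw [← Finset.add_sum_erase _ _ (Finset.mem_univ z)]
  simp only [if_pos rfl, zero_add]
  rw [Finset.sum_congr rfl (fun j hj => if_neg (Finset.mem_erase.mp hj).1)]
  simp [Finset.card_erase_of_mem]

private lemma boundary_eq {n : ℕ} (z : Fin (n+1)) :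
    (fun j => if j = z then 0 else 1 : Fin (n+1) → ℕ)
      = fun j => if j + (Fin.last n - z) = Fin.last n then 0 else 1 := by
  funext j
  congr 1
  simp only [eq_iff_iff]
  constructor
  · rintro rfl; exact add_sub_cancel _ _
  · intro h
    have := congrArg (· - (Fin.last n - z)) h
    simpa [add_sub_cancel_right, sub_sub_cancel] using this

/-- a config with sum n and all entries ≤ 1 is a boundary config -/
private lemma boundary_char {n : ℕ} {c : Fin (n+1) → ℕ} (hc : (∑ j, c j) = n)
    (hb : ∀ j, c j ≤ 1) : ∃ z, c = fun j => if j = z then 0 else 1 := by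
  have hz : ∃ z, c z = 0 := by
    by_contra h
    push_neg at h
    have : ∀ j, c j = 1 := fun j => le_antisymm (hb j) (by have := h j; omega)
    rw [Finset.sum_congr rfl (fun j _ => this j)] at hc
    simp at hc
  obtain ⟨z, hz⟩ := hz
  refine ⟨z, funext fun j => ?_⟩
  by_cases hjz : j = z
  · simp [hjz, hz]
  · simp only [if_neg hjz]
    by_contra h
    have hj0 : c j = 0 := by have := hb j; omega
    have := sum_split_two c z j (Ne.symm hjz)
    rw [hz, hj0, hc] at this
    have hle : ∑ x ∈ (Finset.univ.erase z).erase j, c x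
        ≤ ∑ x ∈ (Finset.univ.erase z).erase j, 1 :=
      Finset.sum_le_sum (fun x _ => hb x)
    simp only [Finset.sum_const, smul_eq_mul, mul_one] at hle
    have hcard : ((Finset.univ.erase z).erase j).card = n - 1 := by
      rw [Finset.card_erase_of_mem (Finset.mem_erase.mpr ⟨hjz, Finset.mem_univ j⟩)]
      simp [Finset.card_erase_of_mem]
    omega

open Fin.NatCast in
private theorem aux15 (n : ℕ) (hn : 1 ≤ n)
    (Q : (Fin (n + 1) → ℕ) → ℝ)
    (h1 : ∀ i : Fin (n + 1),
      Q (fun j => if j + i = Fin.last n then 0 else 1) = 0)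
    (h2 : ∀ c : Fin (n + 1) → ℕ, (∑ j, c j) = n → ∀ k : Fin (n + 1), 2 ≤ c k →
      2 * Q c =
        Q (fun j => if j = k then c k - 1 else if j = k - 1 then c j + 1 else c j) +
        Q (fun j => if j = k then c k - 1 else if j = k + 1 then c j + 1 else c j)) :
    ∀ c : Fin (n + 1) → ℕ, (∑ j, c j) = n → Q c ≤ 0 := by
  classical
  set S : Finset (Fin (n+1) → ℕ) :=
    (Fintype.piFinset fun _ : Fin (n+1) => Finset.range (n+1)).filter
      (fun c => (∑ j, c j) = n) with hSdef
  have hS : ∀ c : Fin (n+1) → ℕ, c ∈ S ↔ (∑ j, c j) = n := by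
    intro c
    simp only [hSdef, Finset.mem_filter, Fintype.mem_piFinset, Finset.mem_range]
    constructor
    · exact fun h => h.2
    · intro h
      refine ⟨fun j => ?_, h⟩
      have : c j ≤ ∑ i, c i :=
        Finset.single_le_sum (fun i _ => Nat.zero_le _) (Finset.mem_univ j)
      omega
  have hSne : S.Nonempty := ⟨_, (hS _).mpr (boundary_sum (0 : Fin (n+1)))⟩
  set M : ℝ := ((S.image Q).max' (hSne.image Q)) with hMdef
  have hle : ∀ c, (∑ j, c j) = n → Q c ≤ M := fun c hc =>
    Finset.le_max' _ _ (Finset.mem_image_of_mem Q ((hS c).mpr hc))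
  have stepR : ∀ c, (∑ j, c j) = n → Q c = M → ∀ k, 2 ≤ c k →
      (∑ j, moveR c k j) = n ∧ Q (moveR c k) = M := by
    intro c hc hQ k hk
    have hsR : (∑ j, moveR c k j) = n := moveR_sum hn (by omega) hc
    have hsL : (∑ j, moveL c k j) = n := moveL_sum hn (by omega) hc
    have heq := h2 c hc k hk
    have e1 : (fun j => if j = k then c k - 1 else if j = k - 1 then c j + 1 else c j)
        = moveL c k := rfl
    have e2 : (fun j => if j = k then c k - 1 else if j = k + 1 then c j + 1 else c j)
        = moveR c k := rfl
    rw [e1, e2, hQ] at heq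
    have l1 := hle _ hsR
    have l2 := hle _ hsL
    exact ⟨hsR, by linarith⟩
  have castval : ∀ d : ℕ, d ≤ n → ((d : Fin (n+1)) : ℕ) = d := by
    intro d hd
    rw [Fin.val_natCast]
    exact Nat.mod_eq_of_lt (by omega)
  have B : ∀ d : ℕ, 1 ≤ d → d ≤ n → ∀ c, (∑ j, c j) = n → Q c = M →
      ∀ k, 2 ≤ c k → c (k + (d : Fin (n+1))) = 0 →
      ∃ c₂, (∑ j, c₂ j) = n ∧ Q c₂ = M ∧ exc c₂ < exc c := by
    intro d
    induction d with
    | zero => intro h; exact absurd h (by omega)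
    | succ d ih =>
      intro _ hdn c hc hQ k hk hz
      by_cases h0 : c (k + 1) = 0
      · exact ⟨moveR c k, (stepR c hc hQ k hk).1, (stepR c hc hQ k hk).2,
          (moveR_exc hn hk).1 h0⟩
      · rcases Nat.eq_zero_or_pos d with rfl | hd
        · exact absurd (by simpa using hz) h0
        have hc1 := stepR c hc hQ k hk
        have hx : exc (moveR c k) = exc c := (moveR_exc hn hk).2 (by omega)
        have hval : moveR c k (k + 1) = c (k + 1) + 1 := by simp [moveR, succ_ne hn]
        have hidx : (k + 1) + (d : Fin (n+1)) = k + ((d+1 : ℕ) : Fin (n+1)) := by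
          push_cast
          rw [add_assoc, add_comm (1 : Fin (n+1))]
        have hzero : moveR c k ((k + 1) + (d : Fin (n+1))) = 0 := by
          rw [hidx]
          have hne1 : k + ((d+1 : ℕ) : Fin (n+1)) ≠ k := by
            intro h
            have h' : ((d+1 : ℕ) : Fin (n+1)) = 0 := by
              have := congrArg (· - k) h
              simpa [add_comm, add_sub_cancel_right, sub_self] using this
            have := congrArg Fin.val h'
            rw [castval _ hdn] at this
            simp at this
          have hne2 : k + ((d+1 : ℕ) : Fin (n+1)) ≠ k + 1 := by
            intro h
            have h' : ((d+1 : ℕ) : Fin (n+1)) = 1 := by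
              have := congrArg (· - k) h
              simpa [add_comm, add_sub_cancel_right] using this
            have := congrArg Fin.val h'
            rw [castval _ hdn] at this
            have hone : ((1 : Fin (n+1)) : ℕ) = 1 := by
              simp [Fin.val_one', Nat.mod_eq_of_lt (by omega : 1 < n + 1)]
            rw [hone] at this
            omega
          simp only [moveR, if_neg hne1, if_neg hne2]
          exact hz
        obtain ⟨c₂, hs₂, hQ₂, he₂⟩ := ih hd (by omega) (moveR c k) hc1.1 hc1.2 (k+1)
          (by rw [hval]; omega) hzero
        exact ⟨c₂, hs₂, hQ₂, by omega⟩
  have hzero_ex : ∀ c : Fin (n+1) → ℕ, (∑ j, c j) = n → ∀ k, 2 ≤ c k → ∃ z, c z = 0 := by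
    intro c hc k hk
    by_contra h
    push_neg at h
    have h1' : ∀ j ∈ Finset.univ, 1 ≤ c j := fun j _ => by have := h j; omega
    have hge := Finset.card_nsmul_le_sum Finset.univ c 1 h1'
    simp at hge
    have he : (∑ j, c j) = Finset.univ.sum c := rfl
    omega
  have A : ∀ N : ℕ, ∀ c : Fin (n+1) → ℕ, (∑ j, c j) = n → Q c = M → exc c ≤ N → M = 0 := by
    intro N
    induction N with
    | zero =>
      intro c hc hQ hE
      have hb : ∀ j, c j ≤ 1 := by
        intro j
        by_contra h
        have h2j : 1 ≤ c j - 1 := by omega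
        have : 1 ≤ exc c := le_trans h2j
          (Finset.single_le_sum (f := fun j => c j - 1) (fun i _ => Nat.zero_le _)
            (Finset.mem_univ j))
        omega
      obtain ⟨z, hzc⟩ := boundary_char hc hb
      rw [← hQ, hzc, boundary_eq z, h1]
    | succ N ihN =>
      intro c hc hQ hE
      by_cases hE' : exc c ≤ N
      · exact ihN c hc hQ hE'
      have hk : ∃ k, 2 ≤ c k := by
        by_contra h
        push_neg at h
        have : exc c = 0 := Finset.sum_eq_zero (fun j _ => by have := h j; omega)
        omega
      obtain ⟨k, hk⟩ := hk
      obtain ⟨z, hz⟩ := hzero_ex c hc k hk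
      have hzk : z ≠ k := fun h => by rw [h] at hz; omega
      set d : ℕ := ((z - k : Fin (n+1)) : ℕ) with hd
      have hd1 : 1 ≤ d := by
        have hne : (z - k : Fin (n+1)) ≠ 0 := sub_ne_zero.mpr hzk
        have : d ≠ 0 := fun h => hne (by
          apply Fin.ext
          simpa [hd] using h)
        omega
      have hdn : d ≤ n := by have := (z - k : Fin (n+1)).isLt; omega
      have hcz : k + (d : Fin (n+1)) = z := by
        rw [hd, Fin.cast_val_eq_self]
        calc k + (z - k) = (z - k) + k := add_comm _ _
          _ = z := sub_add_cancel z k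
      obtain ⟨c₂, hs₂, hQ₂, he₂⟩ := B d hd1 hdn c hc hQ k hk (by rw [hcz]; exact hz)
      exact ihN c₂ hs₂ hQ₂ (by omega)
  obtain ⟨cm, hcm, hQcm⟩ := Finset.mem_image.mp ((S.image Q).max'_mem (hSne.image Q))
  have hM0 : M = 0 := A (exc cm) cm ((hS cm).mp hcm) hQcm le_rfl
  intro c hc
  calc Q c ≤ M := hle c hc
    _ = 0 := hM0

/-- maximum-principle uniqueness: let `n ≥ 1` and let `Q` be a real-valued
function on the `(n+1)`-tuples `(c_0, …, c_n)` of nonnegative integers with `Σ c_i = n`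
(indices modulo `n + 1`).  If `Q` vanishes on every cyclic shift of `(1, 1, …, 1, 0)`,
and for every tuple `c` and index `k` with `c_k ≥ 2` one has
`2·Q(c) = Q(c_{k−1} += 1, c_k −= 1) + Q(c_k −= 1, c_{k+1} += 1)`,
then `Q` is identically zero. -/
theorem maximum_principle_uniqueness (n : ℕ) (hn : 1 ≤ n)
    (Q : (Fin (n + 1) → ℕ) → ℝ)
    (h1 : ∀ i : Fin (n + 1),
      Q (fun j => if j + i = Fin.last n then 0 else 1) = 0)
    (h2 : ∀ c : Fin (n + 1) → ℕ, (∑ j, c j) = n → ∀ k : Fin (n + 1), 2 ≤ c k →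
      2 * Q c =
        Q (fun j => if j = k then c k - 1 else if j = k - 1 then c j + 1 else c j) +
        Q (fun j => if j = k then c k - 1 else if j = k + 1 then c j + 1 else c j)) :
    ∀ c : Fin (n + 1) → ℕ, (∑ j, c j) = n → Q c = 0 := by
  intro c hc
  have hub := aux15 n hn Q h1 h2 c hc
  have hlb := aux15 n hn (fun c => -(Q c))
    (fun i => by simp only [h1 i, neg_zero])
    (fun c hc k hk => by have := h2 c hc k hk; linarith) c hc
  linarith
end
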